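/- arXiv:1007.3852 — 12 statements merged into one kernel-verified Lean document; each statement's English description precedes it below -/
import Mathlib

section
/- For any real number x with 0 < x < 1 and any positive integer n, the sum over k from 0 to n-1 of ((x)_k (1-x)_k / ((1)_k)^2) · 1/(n-k) equals ((x)_n (1-x)_n / ((1)_n)^2) · (∑_{k=0}^{n-1} 1/(x+k) + ∑_{k=0}^{n-1} 1/(1-x+k)). -/
open Finset Polynomial

noncomputable def aa (x : ℝ) (k : ℕ) : ℝ :=
  (ascPochhammer ℝ k).eval x * (ascPochhammer ℝ k).eval (1 - x)
    / ((ascPochhammer ℝ k).eval 1) ^ 2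

lemma aa_succ (x : ℝ) (hx0 : 0 < x) (hx1 : x < 1) (k : ℕ) :
    aa x (k + 1) = aa x k * ((x + k) * ((1 - x) + k)) / ((k : ℝ) + 1) ^ 2 := by
  have h1 : (0:ℝ) < (ascPochhammer ℝ k).eval 1 := ascPochhammer_pos k 1 one_pos
  simp only [aa, ascPochhammer_succ_right, eval_mul, eval_add, eval_X, eval_natCast]
  field_simp
  ring

lemma tele_sum (x : ℝ) (hx0 : 0 < x) (hx1 : x < 1) (n : ℕ) :
    ∑ k ∈ range n, aa x k *
      (1 / (((n:ℝ) - k) * ((n:ℝ) + 1 - k)) +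
        (x * (1 - x) - ((n:ℝ) + 1)) / (((n:ℝ) + 1) ^ 2 * ((n:ℝ) - k)))
    = aa x n * (n:ℝ) ^ 2 / ((n:ℝ) + 1) ^ 2 := by
  set f : ℕ → ℝ := fun k => aa x k * (k:ℝ)^2 / (((n:ℝ)+1)^2 * ((n:ℝ)+1 - k)) with hf
  have key : ∀ k ∈ range n, aa x k *
      (1 / (((n:ℝ) - k) * ((n:ℝ) + 1 - k)) +
        (x * (1 - x) - ((n:ℝ) + 1)) / (((n:ℝ) + 1) ^ 2 * ((n:ℝ) - k)))
      = f (k+1) - f k := by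
    intro k hk
    rw [mem_range] at hk
    have hk' : (k:ℝ) < n := by exact_mod_cast hk
    have h1 : ((n:ℝ) - k) ≠ 0 := by linarith
    have h2 : ((n:ℝ) + 1 - k) ≠ 0 := by linarith
    have h3 : ((k:ℝ) + 1) ≠ 0 := by positivity
    have h4 : ((n:ℝ) + 1) ≠ 0 := by positivity
    simp only [hf, aa_succ x hx0 hx1 k]
    push_cast
    have h5 : ((n:ℝ) + 1 - ((k:ℝ)+1)) ≠ 0 := by rw [show (n:ℝ)+1-((k:ℝ)+1) = (n:ℝ)-k by ring]; exact h1
    field_simp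
    ring
  rw [Finset.sum_congr rfl key, Finset.sum_range_sub]
  simp only [hf, Nat.cast_zero]
  rw [show ((n:ℝ)+1 - n) = 1 by ring]
  ring

lemma main_aux (x : ℝ) (hx0 : 0 < x) (hx1 : x < 1) :
    ∀ n : ℕ, 1 ≤ n →
      ∑ k ∈ range n, aa x k * (1 / ((n : ℝ) - k)) =
        aa x n * ∑ k ∈ range n, (1 / (x + k) + 1 / (1 - x + k)) := by
  have hx0' : x ≠ 0 := ne_of_gt hx0
  have hx1' : (1 : ℝ) - x ≠ 0 := by intro h; nlinarith
  refine Nat.le_induction ?_ ?_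
  · simp only [Finset.sum_range_one, Nat.cast_one, Nat.cast_zero, Nat.cast_ofNat]
    simp only [aa, ascPochhammer_zero, ascPochhammer_one, Polynomial.eval_one, Polynomial.eval_X]
    field_simp
    simp only [add_zero, sub_zero]
    field_simp
    ring
  · intro n hn IH
    have hn1 : ((n:ℝ) + 1) ≠ 0 := by positivity
    have hxn : (x + (n:ℝ)) ≠ 0 := by positivity
    have hxn' : (1 - x + (n:ℝ)) ≠ 0 := by
      have : (0:ℝ) ≤ (n:ℝ) := Nat.cast_nonneg n
      intro h; nlinarith
    -- split the telescoped sum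
    have split : ∀ k : ℕ, aa x k *
        (1 / (((n:ℝ) - k) * ((n:ℝ) + 1 - k)) +
          (x * (1 - x) - ((n:ℝ) + 1)) / (((n:ℝ) + 1) ^ 2 * ((n:ℝ) - k)))
        = aa x k * (1 / (((n:ℝ) - k) * ((n:ℝ) + 1 - k))) +
          ((x * (1 - x) - ((n:ℝ) + 1)) / ((n:ℝ) + 1) ^ 2) * (aa x k * (1 / ((n:ℝ) - k))) := by
      intro k
      rw [show (x * (1 - x) - ((n:ℝ) + 1)) / (((n:ℝ) + 1) ^ 2 * ((n:ℝ) - k)) =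
        ((x * (1 - x) - ((n:ℝ) + 1)) / ((n:ℝ) + 1) ^ 2) * (1 / ((n:ℝ) - k)) by
          rw [div_mul_eq_div_div, mul_one_div]]
      ring
    have E : ∑ k ∈ range n, aa x k * (1 / (((n:ℝ) - k) * ((n:ℝ) + 1 - k)))
        = aa x n * (n:ℝ) ^ 2 / ((n:ℝ) + 1) ^ 2 -
          ((x * (1 - x) - ((n:ℝ) + 1)) / ((n:ℝ) + 1) ^ 2) *
            ∑ k ∈ range n, aa x k * (1 / ((n:ℝ) - k)) := by
      have := tele_sum x hx0 hx1 n
      rw [Finset.sum_congr rfl (fun k _ => split k), Finset.sum_add_distrib,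
        ← Finset.mul_sum] at this
      linarith [this]
    rw [Finset.sum_range_succ, Finset.sum_range_succ, aa_succ x hx0 hx1 n]
    push_cast
    rw [show ((n:ℝ) + 1 - (n:ℝ)) = 1 by ring]
    have step : ∀ k ∈ range n, aa x k * (1 / ((n:ℝ) + 1 - k)) =
        aa x k * (1 / ((n:ℝ) - k)) - aa x k * (1 / (((n:ℝ) - k) * ((n:ℝ) + 1 - k))) := by
      intro k hk
      rw [mem_range] at hk
      have hk' : (k:ℝ) < n := by exact_mod_cast hk
      have h1 : ((n:ℝ) - k) ≠ 0 := by linarith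
      have h2 : ((n:ℝ) + 1 - k) ≠ 0 := by linarith
      field_simp
      ring
    rw [Finset.sum_congr rfl step, Finset.sum_sub_distrib, E, IH]
    field_simp
    ring


theorem stmt_0 (x : ℝ) (hx0 : 0 < x) (hx1 : x < 1) (n : ℕ) (hn : 0 < n) :
    ∑ k ∈ Finset.range n,
        (ascPochhammer ℝ k).eval x * (ascPochhammer ℝ k).eval (1 - x)
          / ((ascPochhammer ℝ k).eval 1) ^ 2 * (1 / ((n : ℝ) - k)) =
      (ascPochhammer ℝ n).eval x * (ascPochhammer ℝ n).eval (1 - x)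
          / ((ascPochhammer ℝ n).eval 1) ^ 2 *
        ((∑ k ∈ Finset.range n, 1 / (x + k)) + ∑ k ∈ Finset.range n, 1 / (1 - x + k)) := by
  have h := main_aux x hx0 hx1 n hn
  simp only [aa, Finset.sum_add_distrib] at h
  exact h
end

section
/- For any positive integer n and any real (or rationally-valued, away from poles) z, the identity ∑_{k=1}^{n} ((-1)^k/(z+k)) · C(n,k) · C(n+k,k) = (1/z) · ((1-z)_n/(1+z)_n − 1) holds, where z is not a negative integer in {−1,...,−n} and z ≠ 0. -/
open Finset

private lemma aux_partial (c N K z : ℝ) (hK : z + K ≠ 0) (hN : z + N ≠ 0) (hNK : N - K ≠ 0) :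
    (c * ((N + K) / (N - K))) / (z + K)
      = (N - z) / (z + N) * (c / (z + K)) - 2 * N / (z + N) * (c / (-N + K)) := by
  have h2 : -N + K ≠ 0 := by intro h; apply hNK; linarith
  field_simp
  ring

/-- product of (j+m) for j=1..n equals (n+m)!/m! -/
private lemma aux_prodAdd (m : ℕ) : ∀ n : ℕ,
    ∏ j ∈ Icc 1 n, ((j : ℝ) + m) = (n + m).factorial / m.factorial
  | 0 => by
    have hm : (m.factorial : ℝ) ≠ 0 := by positivity
    simp [hm]
  | n + 1 => by
    rw [Finset.prod_Icc_succ_top (by omega), aux_prodAdd m n]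
    have : (n + 1 + m).factorial = (n + m).factorial * (n + 1 + m) := by
      have : n + 1 + m = (n + m) + 1 := by omega
      rw [this, Nat.factorial_succ]; ring
    rw [this]
    push_cast
    have hm : (m.factorial : ℝ) ≠ 0 := by positivity
    field_simp
    try ring

private lemma aux_prodRefl (n : ℕ) :
    ∏ j ∈ Icc 1 n, ((n : ℝ) + 1 - j) = n.factorial := by
  rw [← Finset.Ico_add_one_right_eq_Icc, Finset.prod_Ico_eq_prod_range]
  simp only [Nat.add_sub_cancel]
  have h1 : ∀ i ∈ range n, (n : ℝ) + 1 - ((1 + i : ℕ) : ℝ) = (n : ℝ) - i := by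
    intro i _; push_cast; ring
  rw [Finset.prod_congr rfl h1, ← Finset.prod_range_reflect]
  have h2 : ∀ i ∈ range n, (n : ℝ) - ((n - 1 - i : ℕ) : ℝ) = ((i : ℕ) : ℝ) + 1 := by
    intro i hi
    simp only [Finset.mem_range] at hi
    have hc : ((n - 1 - i : ℕ) : ℝ) = (n : ℝ) - 1 - i := by
      have h : n - 1 - i = n - (1 + i) := by omega
      rw [h, Nat.cast_sub (by omega)]
      push_cast; ring
    rw [hc]; ring
  rw [Finset.prod_congr rfl h2]
  exact_mod_cast Finset.prod_range_add_one_eq_factorial n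

private lemma aux_poch (n : ℕ) (x : ℝ) :
    (ascPochhammer ℝ n).eval x = ∏ i ∈ range n, (x + i) := by
  induction n with
  | zero => simp
  | succ n ih => rw [ascPochhammer_succ_eval, ih, Finset.prod_range_succ]

private lemma aux_key : ∀ (n : ℕ) (z : ℝ), (∀ j : ℕ, j ≤ n → z + j ≠ 0) →
    ∑ k ∈ range (n + 1), ((-1 : ℝ) ^ k * (n.choose k) * ((n + k).choose k)) / (z + k)
      = (∏ j ∈ Icc 1 n, ((j : ℝ) - z)) / (z * ∏ j ∈ Icc 1 n, (z + j)) := by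
  intro n
  induction n with
  | zero =>
    intro z hz
    have hz0 : z ≠ 0 := by have := hz 0 le_rfl; simpa using this
    simp [hz0]
  | succ n ih =>
    intro z hz
    have hz0 : z ≠ 0 := by have := hz 0 (by omega); simpa using this
    have hzk : ∀ k : ℕ, k ≤ n + 1 → z + k ≠ 0 := hz
    have hN : z + ((n : ℝ) + 1) ≠ 0 := by
      have := hz (n + 1) le_rfl; push_cast at this; convert this using 2
    set z' : ℝ := -((n : ℝ) + 1) with hz'def
    have hz' : ∀ j : ℕ, j ≤ n → z' + j ≠ 0 := by
      intro j hj
      have : (j : ℝ) < (n : ℝ) + 1 := by exact_mod_cast Nat.lt_succ_of_le hj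
      simp only [hz'def]
      intro h; nlinarith
    have hIH' := ih z' hz'
    have hIHz := ih z (fun j hj => hz j (by omega))
    -- per-term identity for k ≤ n
    have hterm : ∀ k ∈ range (n + 1),
        ((-1 : ℝ) ^ k * ((n + 1).choose k) * ((n + 1 + k).choose k)) / (z + k)
          = ((n : ℝ) + 1 - z) / (z + ((n : ℝ) + 1)) *
              (((-1 : ℝ) ^ k * (n.choose k) * ((n + k).choose k)) / (z + k))
            - (2 * ((n : ℝ) + 1)) / (z + ((n : ℝ) + 1)) *
              (((-1 : ℝ) ^ k * (n.choose k) * ((n + k).choose k)) / (z' + k)) := by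
      intro k hk
      simp only [Finset.mem_range] at hk
      have hkn : k ≤ n := by omega
      have h1 : (n + 1).choose k * (n + 1 - k) = n.choose k * (n + 1) :=
        (Nat.choose_mul_succ_eq n k).symm
      have h2 : (n + 1 + k).choose k * (n + 1) = (n + k).choose k * (n + k + 1) := by
        have := Nat.choose_mul_succ_eq (n + k) k
        have hsub : n + k + 1 - k = n + 1 := by omega
        rw [hsub] at this
        have hnk : n + 1 + k = n + k + 1 := by omega
        rw [hnk]
        omega
      have hc1 : ((n + 1).choose k : ℝ) * ((n : ℝ) + 1 - k) = (n.choose k : ℝ) * ((n : ℝ) + 1) := by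
        have := congrArg (Nat.cast : ℕ → ℝ) h1
        push_cast [Nat.cast_sub (by omega : k ≤ n + 1)] at this
        linarith
      have hc2 : ((n + 1 + k).choose k : ℝ) * ((n : ℝ) + 1) = ((n + k).choose k : ℝ) * ((n : ℝ) + (k : ℝ) + 1) := by
        have := congrArg (Nat.cast : ℕ → ℝ) h2
        push_cast at this
        linarith
      have hnk0 : (n : ℝ) + 1 - k ≠ 0 := by
        have : (k : ℝ) ≤ (n : ℝ) := by exact_mod_cast hkn
        intro h; nlinarith
      have hn10 : (n : ℝ) + 1 ≠ 0 := by positivity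
      have hzk0 : z + (k : ℝ) ≠ 0 := hzk k (by omega)
      have hcc : ((n + 1).choose k : ℝ) * ((n + 1 + k).choose k : ℝ) * ((n : ℝ) + 1 - k)
          = (n.choose k : ℝ) * ((n + k).choose k : ℝ) * ((n : ℝ) + (k : ℝ) + 1) := by
        have key : ((n + 1).choose k : ℝ) * ((n + 1 + k).choose k : ℝ) * ((n : ℝ) + 1 - k) * ((n : ℝ) + 1)
            = (n.choose k : ℝ) * ((n + k).choose k : ℝ) * ((n : ℝ) + (k : ℝ) + 1) * ((n : ℝ) + 1) := by
          calc ((n + 1).choose k : ℝ) * ((n + 1 + k).choose k : ℝ) * ((n : ℝ) + 1 - k) * ((n : ℝ) + 1)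
              = (((n + 1).choose k : ℝ) * ((n : ℝ) + 1 - k)) * (((n + 1 + k).choose k : ℝ) * ((n : ℝ) + 1)) := by ring
            _ = ((n.choose k : ℝ) * ((n : ℝ) + 1)) * (((n + k).choose k : ℝ) * ((n : ℝ) + (k : ℝ) + 1)) := by rw [hc1, hc2]
            _ = (n.choose k : ℝ) * ((n + k).choose k : ℝ) * ((n : ℝ) + (k : ℝ) + 1) * ((n : ℝ) + 1) := by ring
        exact mul_right_cancel₀ hn10 key
      have hc' : ((-1 : ℝ) ^ k * ((n + 1).choose k) * ((n + 1 + k).choose k))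
          = ((-1 : ℝ) ^ k * (n.choose k) * ((n + k).choose k)) *
              ((((n : ℝ) + 1) + (k : ℝ)) / (((n : ℝ) + 1) - (k : ℝ))) := by
        rw [← mul_div_assoc, eq_div_iff hnk0]
        linear_combination ((-1 : ℝ) ^ k) * hcc
      have hpf := aux_partial ((-1 : ℝ) ^ k * (n.choose k) * ((n + k).choose k))
        ((n : ℝ) + 1) (k : ℝ) z hzk0 hN hnk0
      simp only [hz'def]
      rw [hc']
      linear_combination hpf
    -- products at z'
    have e1 : ∏ j ∈ Icc 1 n, ((j : ℝ) - z') = (2 * n + 1).factorial / (n + 1).factorial := by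
      have h := aux_prodAdd (n + 1) n
      have hcast : ∀ j ∈ Icc 1 n, (j : ℝ) - z' = (j : ℝ) + ((n + 1 : ℕ) : ℝ) := by
        intro j _; simp only [hz'def]; push_cast; ring
      rw [Finset.prod_congr rfl hcast, h]
      have h2 : n + (n + 1) = 2 * n + 1 := by omega
      rw [h2]
    have e2 : ∏ j ∈ Icc 1 n, (z' + (j : ℝ)) = (-1 : ℝ) ^ n * n.factorial := by
      have hcast : ∀ j ∈ Icc 1 n, z' + (j : ℝ) = (-1) * ((n : ℝ) + 1 - j) := by
        intro j _; simp only [hz'def]; ring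
      rw [Finset.prod_congr rfl hcast, Finset.prod_mul_distrib, Finset.prod_const,
        Nat.card_Icc, aux_prodRefl]
      norm_num
    -- the vanishing of the top coefficient
    have hfac1 : ((2 * n + 2).factorial : ℝ) = (2 * n + 1).factorial * (2 * (n : ℝ) + 2) := by
      have : (2 * n + 2).factorial = (2 * n + 1).factorial * (2 * n + 2) := by
        rw [show 2 * n + 2 = (2 * n + 1) + 1 by omega, Nat.factorial_succ]; ring
      rw [this]; push_cast; ring
    have hfac2 : ((n + 1).factorial : ℝ) = n.factorial * ((n : ℝ) + 1) := by
      rw [Nat.factorial_succ]; push_cast; ring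
    have hC : (((n + 1 + (n + 1)).choose (n + 1) : ℕ) : ℝ)
        = (2 * n + 2).factorial / ((n + 1).factorial * (n + 1).factorial) := by
      have h1 : n + 1 + (n + 1) = 2 * n + 2 := by omega
      rw [h1, Nat.cast_choose ℝ (by omega : n + 1 ≤ 2 * n + 2)]
      have h2 : 2 * n + 2 - (n + 1) = n + 1 := by omega
      rw [h2]
    have hn10 : (n : ℝ) + 1 ≠ 0 := by positivity
    have hfn : (n.factorial : ℝ) ≠ 0 := by positivity
    have hfn1 : ((n + 1).factorial : ℝ) ≠ 0 := by positivity
    have hfn2 : ((2 * n + 1).factorial : ℝ) ≠ 0 := by positivity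
    have hm1 : ((-1 : ℝ)) ^ n ≠ 0 := by
      intro h
      have := pow_ne_zero n (by norm_num : (-1 : ℝ) ≠ 0)
      exact this h
    have hzero : ((-1 : ℝ) ^ (n + 1) * (((n + 1).choose (n + 1) : ℕ) : ℝ) *
            (((n + 1 + (n + 1)).choose (n + 1) : ℕ) : ℝ))
        = (2 * ((n : ℝ) + 1)) *
            ((∏ j ∈ Icc 1 n, ((j : ℝ) - z')) / (z' * ∏ j ∈ Icc 1 n, (z' + j))) := by
      rw [e1, e2, Nat.choose_self, hC, hfac1, hfac2]
      simp only [hz'def]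
      have hpinv : ((-1 : ℝ) ^ n)⁻¹ = (-1 : ℝ) ^ n := by
        rw [← inv_pow]; norm_num
      have hrew : ∀ X q : ℝ, X / ((-1 : ℝ) ^ n * q) = (-1 : ℝ) ^ n * (X / q) := by
        intro X q
        rw [mul_comm ((-1 : ℝ) ^ n) q, ← div_div, div_eq_mul_inv (X / q), hpinv, mul_comm]
      rw [show -((n : ℝ) + 1) * ((-1 : ℝ) ^ n * (n.factorial : ℝ))
            = (-1 : ℝ) ^ n * (-(((n : ℝ) + 1) * (n.factorial : ℝ))) from by ring]
      rw [hrew, pow_succ]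
      have hd : -(((n : ℝ) + 1) * (n.factorial : ℝ)) ≠ 0 :=
        neg_ne_zero.mpr (mul_ne_zero hn10 hfn)
      field_simp
      ring
    -- split the sum and conclude
    rw [Finset.sum_range_succ, Finset.sum_congr rfl hterm]
    rw [Finset.sum_sub_distrib, ← Finset.mul_sum, ← Finset.mul_sum]
    rw [hIHz, hIH']
    rw [Finset.prod_Icc_succ_top (by omega : 1 ≤ n + 1), Finset.prod_Icc_succ_top (by omega : 1 ≤ n + 1)]
    have hQ : ∏ j ∈ Icc 1 n, (z + (j : ℝ)) ≠ 0 := by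
      apply Finset.prod_ne_zero_iff.mpr
      intro j hj
      exact hzk j (by simp only [Finset.mem_Icc] at hj; omega)
    have hzero' : ((-1 : ℝ) ^ (n + 1) * (((n + 1).choose (n + 1) : ℕ) : ℝ) *
            (((n + 1 + (n + 1)).choose (n + 1) : ℕ) : ℝ)) / (z + ((n + 1 : ℕ) : ℝ))
        = (2 * ((n : ℝ) + 1)) / (z + ((n : ℝ) + 1)) *
            ((∏ j ∈ Icc 1 n, ((j : ℝ) - z')) / (z' * ∏ j ∈ Icc 1 n, (z' + j))) := by
      rw [hzero]
      push_cast
      ring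
    rw [hzero']
    push_cast
    rw [sub_add_cancel]
    field_simp

theorem stmt_1 (n : ℕ) (hn : 0 < n) (z : ℝ) (hz : z ≠ 0)
    (hzj : ∀ j : ℕ, 1 ≤ j → j ≤ n → z ≠ -(j : ℝ)) :
    ∑ k ∈ Finset.Icc 1 n,
        (-1 : ℝ) ^ k / (z + k) * (n.choose k) * ((n + k).choose k) =
      1 / z * ((ascPochhammer ℝ n).eval (1 - z) / (ascPochhammer ℝ n).eval (1 + z) - 1) := by
  have hz' : ∀ j : ℕ, j ≤ n → z + (j : ℝ) ≠ 0 := by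
    intro j hj
    rcases Nat.eq_zero_or_pos j with h | h
    · subst h; simpa using hz
    · have h2 := hzj j h hj
      intro hc; apply h2; linarith
  have hkey := aux_key n z hz'
  have hins : Finset.range (n + 1) = insert 0 (Finset.Icc 1 n) := by
    ext x; simp only [Finset.mem_range, Finset.mem_insert, Finset.mem_Icc]; omega
  rw [hins, Finset.sum_insert (by simp)] at hkey
  norm_num at hkey
  have p1 : (∏ j ∈ Icc 1 n, ((j : ℝ) - z)) = ∏ i ∈ range n, (1 - z + i) := by
    rw [← Finset.Ico_add_one_right_eq_Icc, Finset.prod_Ico_eq_prod_range]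
    simp only [Nat.add_sub_cancel]
    apply Finset.prod_congr rfl; intro i _; push_cast; ring
  have p2 : (∏ j ∈ Icc 1 n, (z + (j : ℝ))) = ∏ i ∈ range n, (1 + z + i) := by
    rw [← Finset.Ico_add_one_right_eq_Icc, Finset.prod_Ico_eq_prod_range]
    simp only [Nat.add_sub_cancel]
    apply Finset.prod_congr rfl; intro i _; push_cast; ring
  rw [p1, p2] at hkey
  rw [aux_poch, aux_poch]
  have hsum : ∑ k ∈ Icc 1 n, (-1 : ℝ) ^ k / (z + k) * (n.choose k) * ((n + k).choose k)
      = ∑ k ∈ Icc 1 n, ((-1 : ℝ) ^ k * (n.choose k) * ((n + k).choose k)) / (z + k) := by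
    apply Finset.sum_congr rfl; intro k _; ring
  rw [hsum]
  have hQ : (∏ i ∈ range n, (1 + z + (i : ℝ))) ≠ 0 := by
    apply Finset.prod_ne_zero_iff.mpr
    intro i hi
    simp only [Finset.mem_range] at hi
    have := hz' (i + 1) (by omega)
    push_cast at this
    intro hc; apply this; linarith
  have hS : ∑ k ∈ Icc 1 n, ((-1 : ℝ) ^ k * (n.choose k) * ((n + k).choose k)) / (z + k)
      = (∏ i ∈ range n, (1 - z + (i : ℝ))) / (z * ∏ i ∈ range n, (1 + z + (i : ℝ))) - z⁻¹ := by
    linarith [hkey]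
  rw [hS]
  field_simp
end

section
/- For any positive integer n, ∑_{k=0}^{n} (-1)^k · C(n,k) · C(n+k,k) = (-1)^n. -/
lemma aux (x r : ℕ) : ∀ n : ℕ,
    ∑ k ∈ Finset.range (n + 1),
      (-1 : ℤ) ^ k * (n.choose k) * ((x + k).choose (n + r)) = (-1) ^ n * x.choose r := by
  intro n
  induction n generalizing r with
  | zero => simp
  | succ n ih =>
    set A : ℤ := ∑ k ∈ Finset.range (n + 1),
      (-1 : ℤ) ^ k * (n.choose k) * ((x + k).choose (n + 1 + r)) with hA
    set B : ℤ := ∑ k ∈ Finset.range (n + 1),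
      (-1 : ℤ) ^ k * (n.choose k) * ((x + k + 1).choose (n + 1 + r)) with hB
    set C : ℤ := ∑ k ∈ Finset.range n,
      (-1 : ℤ) ^ k * (n.choose (k + 1)) * ((x + k + 1).choose (n + 1 + r)) with hC
    have h1 : ∑ k ∈ Finset.range (n + 2),
        (-1 : ℤ) ^ k * ((n + 1).choose k) * ((x + k).choose (n + 1 + r)) = A - B := by
      have hsplit : ∀ k : ℕ, (-1 : ℤ) ^ (k + 1) * (((n + 1).choose (k + 1) : ℕ) : ℤ)
            * (((x + (k + 1)).choose (n + 1 + r) : ℕ) : ℤ)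
          = -((-1 : ℤ) ^ k * (n.choose k) * ((x + k + 1).choose (n + 1 + r)))
            + -((-1 : ℤ) ^ k * (n.choose (k + 1)) * ((x + k + 1).choose (n + 1 + r))) := by
        intro k
        have : x + (k + 1) = x + k + 1 := by omega
        rw [this, Nat.choose_succ_succ]
        push_cast
        ring
      rw [Finset.sum_range_succ']
      simp only [hsplit]
      rw [Finset.sum_add_distrib, Finset.sum_neg_distrib, Finset.sum_neg_distrib, ← hB]
      have hC2 : ∑ k ∈ Finset.range (n + 1),
          (-1 : ℤ) ^ k * (n.choose (k + 1)) * ((x + k + 1).choose (n + 1 + r)) = C := by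
        rw [hC, Finset.sum_range_succ, Nat.choose_succ_self]
        simp
      rw [hC2]
      have hA2 : A = (((x + 0).choose (n + 1 + r) : ℕ) : ℤ) - C := by
        rw [hA, Finset.sum_range_succ', hC]
        have : ∀ k : ℕ, (-1 : ℤ) ^ (k + 1) * ((n.choose (k + 1) : ℕ) : ℤ)
              * (((x + (k + 1)).choose (n + 1 + r) : ℕ) : ℤ)
            = -((-1 : ℤ) ^ k * (n.choose (k + 1)) * ((x + k + 1).choose (n + 1 + r))) := by
          intro k
          have : x + (k + 1) = x + k + 1 := by omega
          rw [this]; push_cast; ring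
        simp only [this]
        rw [Finset.sum_neg_distrib]
        simp only [Nat.choose_zero_right, Nat.cast_one, pow_zero, one_mul, add_zero]
        ring
      rw [hA2]
      simp
      ring
    have h2 : A - B = -∑ k ∈ Finset.range (n + 1),
        (-1 : ℤ) ^ k * (n.choose k) * ((x + k).choose (n + r)) := by
      rw [hA, hB, ← Finset.sum_sub_distrib, ← Finset.sum_neg_distrib]
      apply Finset.sum_congr rfl
      intro k _
      have e : n + 1 + r = (n + r) + 1 := by omega
      rw [e, Nat.choose_succ_succ (x + k) (n + r)]
      push_cast
      ring
    rw [h1, h2, ih]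
    ring

theorem stmt_2 (n : ℕ) (hn : 0 < n) :
    ∑ k ∈ Finset.range (n + 1),
        (-1 : ℤ) ^ k * (n.choose k) * ((n + k).choose k) = (-1) ^ n := by
  have := aux n 0 n
  simp only [Nat.add_zero, Nat.choose_zero_right, Nat.cast_one, mul_one] at this
  rw [← this]
  apply Finset.sum_congr rfl
  intro k hk
  have hk' : k ≤ n + k := Nat.le_add_left _ _
  have : (n + k).choose n = (n + k).choose k := by
    rw [← Nat.choose_symm hk']
    congr 1
    omega
  rw [this]
end

section
/- For n ≥ 1 and r = 1, the identity ∑_{k=1}^{n} ((-1)^k/k) · C(n,k) · C(n+k,k) = -2·H_n(1) holds, where H_n(1) = ∑_{k=1}^n 1/k. -/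
open Finset
open scoped Nat

/-- Key partial-fraction lemma: ∑_{m=0}^{N} (-1)^m C(N,m)/(m+j+1) = N! j!/(N+j+1)!. -/
lemma aux_beta (N : ℕ) : ∀ j : ℕ,
    ∑ m ∈ range (N + 1), (-1 : ℚ) ^ m * (N.choose m) / ((m : ℚ) + j + 1)
      = (N ! : ℚ) * (j ! : ℚ) / ((N + j + 1)! : ℚ) := by
  induction N with
  | zero =>
    intro j
    have h1 : ((j : ℚ) + 1) ≠ 0 := by positivity
    have h2 : ((j + 1)! : ℚ) ≠ 0 := by exact_mod_cast (Nat.factorial_pos (j+1)).ne'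
    simp only [range_one, sum_singleton, Nat.choose_self, pow_zero, Nat.cast_one,
      Nat.factorial_one, Nat.zero_add]
    rw [Nat.factorial_succ]
    push_cast
    field_simp
    simp
  | succ N ih =>
    intro j
    rw [Finset.sum_range_succ']
    have hsplit : ∀ m, ((N + 1).choose (m + 1) : ℚ) = (N.choose m : ℚ) + (N.choose (m + 1) : ℚ) := by
      intro m; exact_mod_cast congrArg (Nat.cast (R := ℚ)) (Nat.choose_succ_succ N m)
    have e1 : ∑ m ∈ range (N + 1), (-1 : ℚ) ^ (m + 1) * ((N + 1).choose (m + 1)) / (((m + 1 : ℕ) : ℚ) + j + 1)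
        = -(∑ m ∈ range (N + 1), (-1 : ℚ) ^ m * (N.choose m) / ((m : ℚ) + ((j + 1 : ℕ) : ℚ) + 1))
          + (∑ m ∈ range (N + 1), (-1 : ℚ) ^ (m + 1) * (N.choose (m + 1)) / (((m + 1 : ℕ) : ℚ) + j + 1)) := by
      rw [← Finset.sum_neg_distrib, ← Finset.sum_add_distrib]
      refine Finset.sum_congr rfl fun m _ => ?_
      rw [hsplit]
      push_cast
      have : ((m : ℚ) + 1 + j + 1) ≠ 0 := by positivity
      field_simp
      ring
    have e2 : ∑ m ∈ range (N + 2), (-1 : ℚ) ^ m * (N.choose m) / ((m : ℚ) + j + 1)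
        = (∑ m ∈ range (N + 1), (-1 : ℚ) ^ (m + 1) * (N.choose (m + 1)) / (((m + 1 : ℕ) : ℚ) + j + 1))
          + 1 / ((j : ℚ) + 1) := by
      rw [Finset.sum_range_succ']
      congr 1
      simp
    have e3 : ∑ m ∈ range (N + 2), (-1 : ℚ) ^ m * (N.choose m) / ((m : ℚ) + j + 1)
        = ∑ m ∈ range (N + 1), (-1 : ℚ) ^ m * (N.choose m) / ((m : ℚ) + j + 1) := by
      rw [Finset.sum_range_succ, Nat.choose_succ_self]
      simp
    have e2' : ∑ m ∈ range (N + 1), (-1 : ℚ) ^ (m + 1) * (N.choose (m + 1)) / (((m + 1 : ℕ) : ℚ) + j + 1)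
        = (∑ m ∈ range (N + 1), (-1 : ℚ) ^ m * (N.choose m) / ((m : ℚ) + j + 1)) - 1 / ((j : ℚ) + 1) := by
      rw [← e3, e2]; ring
    rw [e1, e2', ih j, ih (j + 1)]
    have hNj : ((N + j + 1)! : ℚ) ≠ 0 := by exact_mod_cast (Nat.factorial_pos _).ne'
    have hNj2 : ((N + 1 + j + 1)! : ℚ) ≠ 0 := by exact_mod_cast (Nat.factorial_pos _).ne'
    have hj1 : ((j : ℚ) + 1) ≠ 0 := by positivity
    have hfs1 : ((N + (j + 1) + 1)! : ℚ) = ((N + j + 2 : ℕ) : ℚ) * ((N + j + 1)! : ℚ) := by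
      have h : N + (j + 1) + 1 = (N + j + 1) + 1 := by ring
      rw [h, Nat.factorial_succ]; push_cast; ring
    have hfs2 : ((N + 1 + j + 1)! : ℚ) = ((N + j + 2 : ℕ) : ℚ) * ((N + j + 1)! : ℚ) := by
      have h : N + 1 + j + 1 = (N + j + 1) + 1 := by ring
      rw [h, Nat.factorial_succ]; push_cast; ring
    have hfs3 : ((j + 1)! : ℚ) = ((j : ℚ) + 1) * (j ! : ℚ) := by
      rw [Nat.factorial_succ]; push_cast; ring
    have hfs4 : ((N + 1)! : ℚ) = ((N : ℚ) + 1) * (N ! : ℚ) := by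
      rw [Nat.factorial_succ]; push_cast; ring
    rw [hfs1, hfs2, hfs3, hfs4]
    have hNj2' : ((N + j + 2 : ℕ) : ℚ) ≠ 0 := by positivity
    push_cast
    field_simp
    simp only [Nat.choose_zero_right, Nat.cast_one]
    ring

/-- Alternating harmonic-type identity: ∑_{k=1}^n (-1)^k C(n,k)/k = -H_n. -/
lemma aux_alt (n : ℕ) : ∑ k ∈ Icc 1 n, (-1 : ℚ) ^ k * (n.choose k) / k
    = -∑ k ∈ Icc 1 n, (1 : ℚ) / k := by
  induction n with
  | zero => simp
  | succ n ih =>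
    rw [Finset.sum_Icc_succ_top (by omega : 1 ≤ n + 1),
        Finset.sum_Icc_succ_top (by omega : 1 ≤ n + 1)]
    have hpascal : ∑ k ∈ Icc 1 n, (-1 : ℚ) ^ k * ((n + 1).choose k) / k
        = (∑ k ∈ Icc 1 n, (-1 : ℚ) ^ k * (n.choose k) / k)
          + ∑ k ∈ Icc 1 n, (-1 : ℚ) ^ k * (n.choose (k - 1)) / k := by
      rw [← Finset.sum_add_distrib]
      refine Finset.sum_congr rfl fun k hk => ?_
      rw [Finset.mem_Icc] at hk
      obtain ⟨m, rfl⟩ : ∃ m, k = m + 1 := ⟨k - 1, by omega⟩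
      have : ((n + 1).choose (m + 1) : ℚ) = (n.choose m : ℚ) + (n.choose (m + 1) : ℚ) := by
        exact_mod_cast congrArg (Nat.cast (R := ℚ)) (Nat.choose_succ_succ n m)
      rw [this]
      simp only [Nat.add_sub_cancel]
      ring
    have key : ∑ k ∈ Icc 1 (n + 1), (-1 : ℚ) ^ k * (n.choose (k - 1)) / k
        = -1 / ((n : ℚ) + 1) := by
      have halt : (∑ i ∈ range (n + 2), (-1 : ℚ) ^ i * ((n + 1).choose i)) = 0 := by
        have h := Int.alternating_sum_range_choose_of_ne (n := n + 1) (by omega)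
        have : ((∑ i ∈ range (n + 2), (-1 : ℤ) ^ i * ((n + 1).choose i) : ℤ) : ℚ) = 0 := by
          rw [h]; norm_num
        push_cast at this
        convert this using 2
      have hstep : ∀ m : ℕ, (-1 : ℚ) ^ (m + 1) * (n.choose m) / ((m : ℚ) + 1)
          = (-1 : ℚ) ^ (m + 1) * ((n + 1).choose (m + 1)) / ((n : ℚ) + 1) := by
        intro m
        have h := Nat.add_one_mul_choose_eq n m
        have hq : ((n : ℚ) + 1) * (n.choose m) = ((n + 1).choose (m + 1)) * ((m : ℚ) + 1) := by
          exact_mod_cast congrArg (Nat.cast (R := ℚ)) h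
        have hm : ((m : ℚ) + 1) ≠ 0 := by positivity
        have hn : ((n : ℚ) + 1) ≠ 0 := by positivity
        field_simp
        linear_combination hq
      have : Icc 1 (n + 1) = Ico 1 (n + 2) := rfl
      rw [this, Finset.sum_Ico_eq_sum_range]
      have hb : n + 2 - 1 = n + 1 := by omega
      rw [hb]
      have : ∑ m ∈ range (n + 1), (-1 : ℚ) ^ (1 + m) * (n.choose (1 + m - 1)) / ((1 + m : ℕ) : ℚ)
          = ∑ m ∈ range (n + 1), (-1 : ℚ) ^ (m + 1) * ((n + 1).choose (m + 1)) / ((n : ℚ) + 1) := by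
        refine Finset.sum_congr rfl fun m _ => ?_
        have h1 : 1 + m - 1 = m := by omega
        have h2 : 1 + m = m + 1 := by omega
        rw [h1, h2]
        push_cast
        exact hstep m
      rw [this, ← Finset.sum_div]
      have hsum : ∑ m ∈ range (n + 1), (-1 : ℚ) ^ (m + 1) * ((n + 1).choose (m + 1))
          = -1 := by
        have := Finset.sum_range_succ' (fun i => (-1 : ℚ) ^ i * ((n + 1).choose i)) (n + 1)
        rw [halt] at this
        simp only [pow_zero, Nat.choose_zero_right, Nat.cast_one, one_mul] at this
        linarith
      rw [hsum]
    have hsplit2 : ∑ k ∈ Icc 1 (n + 1), (-1 : ℚ) ^ k * (n.choose (k - 1)) / k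
        = (∑ k ∈ Icc 1 n, (-1 : ℚ) ^ k * (n.choose (k - 1)) / k)
          + (-1 : ℚ) ^ (n + 1) * (n.choose n) / ((n : ℚ) + 1) := by
      rw [Finset.sum_Icc_succ_top (by omega : 1 ≤ n + 1)]
      push_cast
      simp
    rw [hpascal, ih]
    have := key
    rw [hsplit2] at this
    push_cast
    simp only [Nat.choose_self, Nat.cast_one] at this ⊢
    linear_combination this

/-- Inner sum evaluation. -/
lemma aux_inner (n j : ℕ) (hj : j + 1 ≤ n) :
    ∑ k ∈ Icc (j + 1) n, (-1 : ℚ) ^ k / k * (n.choose k) * ((n.choose (j + 1)) * (k.choose (j + 1)))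
      = (-1 : ℚ) ^ (j + 1) * (n.choose (j + 1)) / ((j : ℚ) + 1) := by
  set s := j + 1 with hs
  have h1 : ∑ k ∈ Icc s n, (-1 : ℚ) ^ k / k * (n.choose k) * ((n.choose s) * (k.choose s))
      = ∑ k ∈ Icc s n, (-1 : ℚ) ^ k / k * ((n.choose s) : ℚ)^2 * ((n - s).choose (k - s)) := by
    refine Finset.sum_congr rfl fun k hk => ?_
    rw [Finset.mem_Icc] at hk
    have hmul := Nat.choose_mul (n := n) (k := k) (s := s) hk.1
    have hq : (n.choose k : ℚ) * (k.choose s : ℚ) = (n.choose s : ℚ) * ((n - s).choose (k - s) : ℚ) := by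
      exact_mod_cast congrArg (Nat.cast (R := ℚ)) hmul
    have hk0 : ((k : ℚ)) ≠ 0 := by
      have : 0 < k := by omega
      positivity
    linear_combination ((-1 : ℚ) ^ k / k * (n.choose s : ℚ)) * hq
  rw [h1]
  have h2 : Icc s n = Ico s (n + 1) := rfl
  rw [h2, Finset.sum_Ico_eq_sum_range]
  have hrange : n + 1 - s = (n - s) + 1 := by omega
  rw [hrange]
  have h3 : ∑ m ∈ range ((n - s) + 1), (-1 : ℚ) ^ (s + m) / ((s + m : ℕ) : ℚ) * ((n.choose s) : ℚ)^2 * ((n - s).choose (s + m - s))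
      = ((n.choose s) : ℚ)^2 * (-1 : ℚ) ^ s * ∑ m ∈ range ((n - s) + 1), (-1 : ℚ) ^ m * ((n - s).choose m) / ((m : ℚ) + j + 1) := by
    rw [Finset.mul_sum]
    refine Finset.sum_congr rfl fun m _ => ?_
    have : s + m - s = m := by omega
    rw [this, pow_add]
    push_cast [hs]
    ring
  rw [h3, aux_beta (n - s) j]
  have hNj : (n - s) + j + 1 = n := by omega
  rw [hNj]
  -- now: C(n,s)^2 * (-1)^s * ((n-s)! * j! / n!) = (-1)^s * C(n,s) / (j+1)
  have hfac := Nat.choose_mul_factorial_mul_factorial (le_trans (by omega) hj : s ≤ n)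
  have hfacq : (n.choose s : ℚ) * (s ! : ℚ) * ((n - s)! : ℚ) = (n ! : ℚ) := by
    exact_mod_cast congrArg (Nat.cast (R := ℚ)) hfac
  have hsf : (s ! : ℚ) = ((j : ℚ) + 1) * (j ! : ℚ) := by
    rw [hs, Nat.factorial_succ]; push_cast; ring
  rw [hsf] at hfacq
  have hn : (n ! : ℚ) ≠ 0 := by exact_mod_cast (Nat.factorial_pos n).ne'
  have hj1 : ((j : ℚ) + 1) ≠ 0 := by positivity
  field_simp
  linear_combination (n.choose s : ℚ) * hfacq

theorem stmt_3 (n : ℕ) (hn : 1 ≤ n) :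
    ∑ k ∈ Finset.Icc 1 n,
        (-1 : ℚ) ^ k / k * (n.choose k) * ((n + k).choose k) =
      -2 * ∑ k ∈ Finset.Icc 1 n, (1 : ℚ) / k := by
  -- Vandermonde expansion of C(n+k,k)
  have hvan : ∀ k : ℕ, ((n + k).choose k : ℚ) = ∑ j ∈ range (k + 1), (n.choose j : ℚ) * (k.choose j : ℚ) := by
    intro k
    have h := Nat.add_choose_eq n k k
    rw [Finset.Nat.sum_antidiagonal_eq_sum_range_succ_mk] at h
    have : ∑ j ∈ range (k + 1), n.choose j * k.choose (k - j)
        = ∑ j ∈ range (k + 1), n.choose j * k.choose j := by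
      refine Finset.sum_congr rfl fun j hj => ?_
      rw [Finset.mem_range] at hj
      rw [Nat.choose_symm (by omega : j ≤ k)]
    rw [this] at h
    rw [h]
    push_cast
    rfl
  have step1 : ∑ k ∈ Icc 1 n, (-1 : ℚ) ^ k / k * (n.choose k) * ((n + k).choose k)
      = ∑ k ∈ Icc 1 n, ∑ j ∈ range (k + 1), (-1 : ℚ) ^ k / k * (n.choose k) * ((n.choose j) * (k.choose j)) := by
    refine Finset.sum_congr rfl fun k _ => ?_
    rw [hvan k, Finset.mul_sum]
  rw [step1]
  -- peel off j = 0
  have step2 : ∀ k ∈ Icc 1 n,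
      ∑ j ∈ range (k + 1), (-1 : ℚ) ^ k / k * (n.choose k) * ((n.choose j) * (k.choose j))
        = (-1 : ℚ) ^ k * (n.choose k) / k
          + ∑ j ∈ range k, (-1 : ℚ) ^ k / k * (n.choose k) * ((n.choose (j + 1)) * (k.choose (j + 1))) := by
    intro k _
    rw [Finset.sum_range_succ']
    simp only [Nat.choose_zero_right, Nat.cast_one, mul_one]
    rw [add_comm]
    congr 1
    ring
  rw [Finset.sum_congr rfl step2, Finset.sum_add_distrib, aux_alt n]
  -- swap the double sum
  have hswap : ∑ k ∈ Icc 1 n, ∑ j ∈ range k,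
        (-1 : ℚ) ^ k / k * (n.choose k) * ((n.choose (j + 1)) * (k.choose (j + 1)))
      = ∑ j ∈ range n, ∑ k ∈ Icc (j + 1) n,
        (-1 : ℚ) ^ k / k * (n.choose k) * ((n.choose (j + 1)) * (k.choose (j + 1))) := by
    rw [Finset.sum_sigma', Finset.sum_sigma']
    refine Finset.sum_nbij' (fun p => ⟨p.2, p.1⟩) (fun p => ⟨p.2, p.1⟩) ?_ ?_ ?_ ?_ ?_
    · rintro ⟨k, j⟩ h
      simp only [Finset.mem_sigma, Finset.mem_Icc, Finset.mem_range] at h ⊢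
      omega
    · rintro ⟨j, k⟩ h
      simp only [Finset.mem_sigma, Finset.mem_Icc, Finset.mem_range] at h ⊢
      omega
    · rintro ⟨k, j⟩ _; rfl
    · rintro ⟨j, k⟩ _; rfl
    · rintro ⟨k, j⟩ _; rfl
  rw [hswap]
  have hinner : ∑ j ∈ range n, ∑ k ∈ Icc (j + 1) n,
        (-1 : ℚ) ^ k / k * (n.choose k) * ((n.choose (j + 1)) * (k.choose (j + 1)))
      = ∑ j ∈ range n, (-1 : ℚ) ^ (j + 1) * (n.choose (j + 1)) / ((j : ℚ) + 1) := by
    refine Finset.sum_congr rfl fun j hj => ?_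
    rw [Finset.mem_range] at hj
    exact aux_inner n j (by omega)
  rw [hinner]
  have hfinal : ∑ j ∈ range n, (-1 : ℚ) ^ (j + 1) * (n.choose (j + 1)) / ((j : ℚ) + 1)
      = ∑ k ∈ Icc 1 n, (-1 : ℚ) ^ k * (n.choose k) / k := by
    have : Icc 1 n = Ico 1 (n + 1) := rfl
    rw [this, Finset.sum_Ico_eq_sum_range]
    simp only [Nat.add_sub_cancel]
    refine Finset.sum_congr rfl fun j _ => ?_
    have h2 : 1 + j = j + 1 := by omega
    rw [h2]
    push_cast
    ring_nf
  rw [hfinal, aux_alt n]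
  ring
end

section
/- For n ≥ 1 and r = 2, the identity ∑_{k=1}^{n} ((-1)^k/k^2) · C(n,k) · C(n+k,k) = -(2·H_n(2) + 4·H_n(1,1)) = -2·(H_n(1))^2 holds. -/
open Finset

open Finset

-- contiguous relation
lemma contig (n k : ℕ) :
    ((n:ℚ)+1-k) * ((n+1).choose k * ((n+1+k).choose k)) =
    ((n:ℚ)+1+k) * (n.choose k * ((n+k).choose k)) := by
  rcases le_or_gt k (n+1) with hk | hk
  · have h1 : (n.choose k : ℚ) * ((n:ℚ)+1) = ((n+1).choose k : ℚ) * ((n:ℚ)+1-k) := by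
      have := Nat.choose_mul_succ_eq n k
      have hc : ((n + 1 - k : ℕ) : ℚ) = (n:ℚ)+1-k := by
        push_cast [Nat.cast_sub hk]; ring
      calc (n.choose k : ℚ) * ((n:ℚ)+1) = ((n.choose k * (n+1) : ℕ) : ℚ) := by push_cast; ring
        _ = (((n+1).choose k * (n+1-k) : ℕ) : ℚ) := by rw [this]
        _ = ((n+1).choose k : ℚ) * ((n:ℚ)+1-k) := by push_cast [Nat.cast_sub hk]; ring
    have h2 : ((n+k).choose k : ℚ) * ((n:ℚ)+k+1) = ((n+1+k).choose k : ℚ) * ((n:ℚ)+1) := by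
      have := Nat.choose_mul_succ_eq (n+k) k
      have he : n + k + 1 - k = n + 1 := by omega
      rw [he] at this
      have h3 : n + 1 + k = n + k + 1 := by omega
      rw [h3]
      calc ((n+k).choose k : ℚ) * ((n:ℚ)+k+1) = (((n+k).choose k * (n+k+1) : ℕ) : ℚ) := by push_cast; ring
        _ = (((n+k+1).choose k * (n+1) : ℕ) : ℚ) := by rw [this]
        _ = ((n+k+1).choose k : ℚ) * ((n:ℚ)+1) := by push_cast; ring
    linear_combination (-(((n+1+k).choose k : ℚ))) * h1 + (-(n.choose k : ℚ)) * h2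
  · have h1 : n.choose k = 0 := Nat.choose_eq_zero_of_lt (by omega)
    have h2 : (n+1).choose k = 0 := Nat.choose_eq_zero_of_lt (by omega)
    simp [h1, h2]

lemma prod_asc (m n : ℕ) :
    ∏ j ∈ Icc 1 n, ((m:ℚ) + j) = ((m+n).factorial : ℚ) / (m.factorial : ℚ) := by
  induction n with
  | zero =>
    have : (m.factorial : ℚ) ≠ 0 := by exact_mod_cast m.factorial_ne_zero
    simp [this]
  | succ n ih =>
    rw [Finset.prod_Icc_succ_top (by omega), ih]
    have h : ((m + (n+1)).factorial : ℚ) = ((m+n).factorial : ℚ) * ((m:ℚ) + (n+1)) := by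
      have : m + (n+1) = (m+n) + 1 := by omega
      rw [this, Nat.factorial_succ]
      push_cast; ring
    rw [h]
    push_cast; ring

lemma prod_desc (m : ℕ) : ∏ j ∈ range m, ((m:ℚ) - j) = (m.factorial : ℚ) := by
  rw [← Finset.prod_range_reflect (fun j => ((m:ℚ) - j)) m]
  have h : ∀ j ∈ range m, ((m:ℚ) - ((m - 1 - j : ℕ) : ℚ)) = (j:ℚ) + 1 := by
    intro j hj
    rw [mem_range] at hj
    have : ((m - 1 - j : ℕ) : ℚ) = (m:ℚ) - 1 - j := by
      have h1 : m - 1 - j = m - (1 + j) := by omega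
      rw [h1, Nat.cast_sub (by omega)]
      push_cast; ring
    rw [this]; ring
  rw [Finset.prod_congr rfl h]
  exact_mod_cast Finset.prod_range_add_one_eq_factorial m

-- P_n(-(n+1))
lemma prodP (n : ℕ) :
    ∏ j ∈ Icc 1 n, (-((n:ℚ)+1) - j) = (-1)^n * ((2*n+1).factorial : ℚ) / ((n+1).factorial : ℚ) := by
  have h : ∀ j ∈ Icc 1 n, (-((n:ℚ)+1) - j) = (-1) * (((n+1:ℕ):ℚ) + j) := by
    intro j hj; push_cast; ring
  rw [Finset.prod_congr rfl h, Finset.prod_mul_distrib, Finset.prod_const, prod_asc (n+1) n]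
  have : n + 1 + n = 2*n+1 := by omega
  rw [this]
  simp [Nat.card_Icc]
  ring

-- Q_n(-(n+1))
lemma prodQ (n : ℕ) :
    ∏ j ∈ range (n+1), (-((n:ℚ)+1) + j) = (-1)^(n+1) * ((n+1).factorial : ℚ) := by
  have h : ∀ j ∈ range (n+1), (-((n:ℚ)+1) + j) = (-1) * ((((n+1:ℕ)):ℚ) - j) := by
    intro j hj; push_cast; ring
  rw [Finset.prod_congr rfl h, Finset.prod_mul_distrib, Finset.prod_const, prod_desc (n+1)]
  simp

lemma keyalg (s x c0 c1 nq kq : ℚ) (hd1 : x + kq ≠ 0) (hd2 : -(nq+1) + kq ≠ 0)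
    (hd3 : nq+1+x ≠ 0) (hc : (nq+1-kq) * c1 = (nq+1+kq) * c0) :
    s * c1 / (x + kq) = ((nq+1-x)/(nq+1+x)) * (s * c0 / (x+kq))
      - ((2*nq+2)/(nq+1+x)) * (s * c0 / (-(nq+1)+kq)) := by
  rw [div_mul_div_comm, div_mul_div_comm,
    div_sub_div _ _ (mul_ne_zero hd3 hd1) (mul_ne_zero hd3 hd2),
    div_eq_div_iff hd1 (mul_ne_zero (mul_ne_zero hd3 hd1) (mul_ne_zero hd3 hd2))]
  linear_combination (-(s * (nq+1+x) * (nq+1+x)) * (x+kq)) * hc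

lemma alg (n : ℕ) (x P Q C2 F1 F2 : ℚ) (hQ : Q ≠ 0) (hF1 : F1 ≠ 0)
    (hx1 : x + ((n:ℚ)+1) ≠ 0) (hC : C2 * F1 * F1 = (2*(n:ℚ)+2) * F2) :
    (((n:ℚ)+1-x)/((n:ℚ)+1+x)) * ((-1)^n * P / Q)
      - ((2*(n:ℚ)+2)/((n:ℚ)+1+x)) * ((-1:ℚ)^n * ((-1)^n * F2 / F1) / ((-1)^(n+1) * F1))
      + (-1)^(n+1) * C2 / (x + ((n:ℚ)+1))
      = (-1)^(n+1) * (P * (x - ((n:ℚ)+1))) / (Q * (x + ((n:ℚ)+1))) := by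
  have hd3 : (n:ℚ)+1+x ≠ 0 := fun h => hx1 (by linarith)
  have hs : ((-1:ℚ))^n ≠ 0 := by positivity
  have hs2 : ((-1:ℚ))^n * ((-1:ℚ))^n = 1 := by
    rw [← pow_add]; exact Even.neg_one_pow ⟨n, by ring⟩
  rw [pow_succ]
  set nq : ℚ := (n:ℚ) with hnq
  set s : ℚ := ((-1:ℚ))^n with hsdef
  clear_value s
  have hB : s * (s * F2 / F1) / ((s*(-1)) * F1) = -(s*F2/(F1*F1)) := by
    field_simp
  rw [hB, show nq+1+x = x+(nq+1) by ring]
  field_simp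
  linear_combination (-Q) * hC

lemma lemG (n : ℕ) : ∀ (x : ℚ), (∀ k : ℕ, k ≤ n → x + (k:ℚ) ≠ 0) →
    ∑ k ∈ range (n+1), (-1:ℚ)^k * (n.choose k) * ((n+k).choose k) / (x + k)
      = (-1)^n * (∏ j ∈ Icc 1 n, (x - j)) / ∏ j ∈ range (n+1), (x + j) := by
  induction n with
  | zero =>
    intro x hx
    simp
  | succ n ih =>
    intro x hx
    have hx' : ∀ k : ℕ, k ≤ n → x + (k:ℚ) ≠ 0 := fun k hk => hx k (by omega)
    have hxn1 : x + ((n:ℚ)+1) ≠ 0 := by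
      have := hx (n+1) le_rfl; push_cast at this; exact this
    have hy : ∀ k : ℕ, k ≤ n → (-((n:ℚ)+1)) + (k:ℚ) ≠ 0 := by
      intro k hk h
      have h1 : (k:ℚ) = (n:ℚ)+1 := by linarith
      have h2 : (k:ℕ) = n+1 := by exact_mod_cast h1
      omega
    have hd3 : (n:ℚ)+1+x ≠ 0 := fun h => hxn1 (by linarith)
    have key : ∀ k ∈ range (n+1),
        (-1:ℚ)^k * ((n+1).choose k) * ((n+1+k).choose k) / (x + (k:ℚ))
        = (((n:ℚ)+1-x)/((n:ℚ)+1+x)) * ((-1:ℚ)^k * (n.choose k) * ((n+k).choose k) / (x + (k:ℚ)))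
        - ((2*(n:ℚ)+2)/((n:ℚ)+1+x)) * ((-1:ℚ)^k * (n.choose k) * ((n+k).choose k) / ((-((n:ℚ)+1)) + (k:ℚ))) := by
      intro k hk
      rw [mem_range] at hk
      have hk' : k ≤ n := by omega
      have h := keyalg ((-1:ℚ)^k) x ((n.choose k : ℚ) * ((n+k).choose k : ℚ))
        (((n+1).choose k : ℚ) * ((n+1+k).choose k : ℚ)) (n:ℚ) (k:ℚ)
        (hx' k hk') (hy k hk') hd3 (contig n k)
      linear_combination h
    rw [Finset.sum_range_succ, Finset.sum_congr rfl key, Finset.sum_sub_distrib,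
      ← Finset.mul_sum, ← Finset.mul_sum, ih x hx', ih (-((n:ℚ)+1)) hy, prodP n, prodQ n,
      Finset.prod_Icc_succ_top (show 1 ≤ n+1 by omega) (fun j => x - (j:ℚ)),
      Finset.prod_range_succ (fun j => x + (j:ℚ)) (n+1)]
    have hQ : (∏ j ∈ range (n+1), (x + (j:ℚ))) ≠ 0 := by
      apply Finset.prod_ne_zero_iff.mpr
      intro j hj
      exact hx' j (by rw [mem_range] at hj; omega)
    have hF1 : ((n+1).factorial : ℚ) ≠ 0 := by exact_mod_cast (n+1).factorial_ne_zero
    have hch2 : (((n+1+(n+1)).choose (n+1) : ℕ) : ℚ) * ((n+1).factorial : ℚ) * ((n+1).factorial : ℚ)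
        = (2*(n:ℚ)+2) * ((2*n+1).factorial : ℚ) := by
      have h1 : (n+1+(n+1)).choose (n+1) * (n+1).factorial * (n+1).factorial = (2*n+2).factorial := by
        have h0 := Nat.choose_mul_factorial_mul_factorial (show n+1 ≤ 2*n+2 by omega)
        have he : 2*n+2 - (n+1) = n+1 := by omega
        rw [he] at h0
        have he2 : n+1+(n+1) = 2*n+2 := by omega
        rw [he2]; exact h0
      have h2 : (2*n+2).factorial = (2*n+2) * (2*n+1).factorial := by
        have h3 : 2*n+2 = (2*n+1)+1 := by omega
        rw [h3, Nat.factorial_succ]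
      calc (((n+1+(n+1)).choose (n+1) : ℕ) : ℚ) * ((n+1).factorial : ℚ) * ((n+1).factorial : ℚ)
          = (((n+1+(n+1)).choose (n+1) * (n+1).factorial * (n+1).factorial : ℕ) : ℚ) := by push_cast; ring
        _ = (((2*n+2) * (2*n+1).factorial : ℕ) : ℚ) := by rw [h1, h2]
        _ = (2*(n:ℚ)+2) * ((2*n+1).factorial : ℚ) := by push_cast; ring
    simp only [Nat.choose_self, Nat.cast_one, mul_one]
    push_cast
    exact alg n x _ _ _ _ _ hQ hF1 hxn1 hch2


lemma Tval (n : ℕ) :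
    ∑ k ∈ range (n+1), (-1:ℚ)^k * (n.choose k) * ((n+k).choose k) / ((n:ℚ)+1-k)
      = (-1)^n * ((2*n+1).factorial : ℚ) / (((n+1).factorial : ℚ) * ((n+1).factorial : ℚ)) := by
  have hy : ∀ k : ℕ, k ≤ n → (-((n:ℚ)+1)) + (k:ℚ) ≠ 0 := by
    intro k hk h
    have h1 : (k:ℚ) = (n:ℚ)+1 := by linarith
    have h2 : (k:ℕ) = n+1 := by exact_mod_cast h1
    omega
  have h := lemG n (-((n:ℚ)+1)) hy
  rw [prodP n, prodQ n] at h
  have hstep : ∑ k ∈ range (n+1), (-1:ℚ)^k * (n.choose k) * ((n+k).choose k) / ((n:ℚ)+1-k)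
      = -∑ k ∈ range (n+1), (-1:ℚ)^k * (n.choose k) * ((n+k).choose k) / ((-((n:ℚ)+1)) + k) := by
    rw [← Finset.sum_neg_distrib]
    apply Finset.sum_congr rfl
    intro k _
    rw [show (-((n:ℚ)+1)) + (k:ℚ) = -((n:ℚ)+1-(k:ℚ)) by ring, div_neg]
    ring
  rw [hstep, h]
  have hF1 : ((n+1).factorial : ℚ) ≠ 0 := by exact_mod_cast (n+1).factorial_ne_zero
  rw [pow_succ]
  have hs2 : ((-1:ℚ))^n * ((-1:ℚ))^n = 1 := by
    rw [← pow_add]; exact Even.neg_one_pow ⟨n, by ring⟩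
  set s : ℚ := ((-1:ℚ))^n with hsdef
  have hs : s ≠ 0 := by rw [hsdef]; positivity
  clear_value s
  field_simp


lemma range_insert (n : ℕ) : Finset.range (n+1) = insert 0 (Finset.Icc 1 n) := by
  ext k
  simp [Finset.mem_range, Finset.mem_insert, Finset.mem_Icc]
  omega

lemma Dval (n : ℕ) :
    ∑ k ∈ Icc 1 n, (-1:ℚ)^k * (n.choose k) * ((n+k).choose k) / ((n:ℚ)+1-k)
      = (-1)^n * ((2*n+1).factorial : ℚ) / (((n+1).factorial : ℚ) * ((n+1).factorial : ℚ))
        - 1/((n:ℚ)+1) := by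
  have h := Tval n
  rw [range_insert n, Finset.sum_insert (by simp)] at h
  simp only [pow_zero, Nat.choose_zero_right, Nat.cast_one, mul_one, one_mul,
    Nat.cast_zero, Nat.add_zero, sub_zero] at h
  linarith [h]

lemma keyalg2 (s c0 c1 nq kq : ℚ) (hk : kq ≠ 0) (hnk : nq+1-kq ≠ 0)
    (hc : (nq+1-kq)*c1 = (nq+1+kq)*c0) :
    s*c1/kq = s*c0/kq + 2*(s*c0/(nq+1-kq)) := by
  field_simp
  linear_combination s * hc

lemma CId (n : ℕ) :
    ∑ k ∈ Icc 1 n, (-1:ℚ)^k * (n.choose k) * ((n+k).choose k) / (k:ℚ)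
      = -2 * ∑ k ∈ Icc 1 n, 1/(k:ℚ) := by
  induction n with
  | zero => simp
  | succ n ih =>
    have key : ∀ k ∈ Icc 1 n,
        (-1:ℚ)^k * ((n+1).choose k) * ((n+1+k).choose k) / (k:ℚ)
        = (-1:ℚ)^k * (n.choose k) * ((n+k).choose k) / (k:ℚ)
          + 2*((-1:ℚ)^k * (n.choose k) * ((n+k).choose k) / ((n:ℚ)+1-k)) := by
      intro k hk
      rw [mem_Icc] at hk
      have hk0 : (k:ℚ) ≠ 0 := by
        have : (1:ℚ) ≤ (k:ℚ) := by exact_mod_cast hk.1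
        linarith
      have hnk : (n:ℚ)+1-(k:ℚ) ≠ 0 := by
        have : (k:ℚ) ≤ (n:ℚ) := by exact_mod_cast hk.2
        intro h; linarith
      have h := keyalg2 ((-1:ℚ)^k) ((n.choose k : ℚ) * ((n+k).choose k : ℚ))
        (((n+1).choose k : ℚ) * ((n+1+k).choose k : ℚ)) (n:ℚ) (k:ℚ) hk0 hnk (contig n k)
      linear_combination h
    rw [Finset.sum_Icc_succ_top (show 1 ≤ n+1 by omega),
      Finset.sum_congr rfl key, Finset.sum_add_distrib, ← Finset.mul_sum, ih, Dval n,
      Finset.sum_Icc_succ_top (show 1 ≤ n+1 by omega) (fun k => 1/(k:ℚ))]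
    have hF1 : ((n+1).factorial : ℚ) ≠ 0 := by exact_mod_cast (n+1).factorial_ne_zero
    have hch2 : (((2*n+2).choose (n+1) : ℕ) : ℚ) * ((n+1).factorial : ℚ) * ((n+1).factorial : ℚ)
        = (2*(n:ℚ)+2) * ((2*n+1).factorial : ℚ) := by
      have h1 : (2*n+2).choose (n+1) * (n+1).factorial * (n+1).factorial = (2*n+2).factorial := by
        have h0 := Nat.choose_mul_factorial_mul_factorial (show n+1 ≤ 2*n+2 by omega)
        have he : 2*n+2 - (n+1) = n+1 := by omega
        rw [he] at h0
        exact h0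
      have h2 : (2*n+2).factorial = (2*n+2) * (2*n+1).factorial := by
        have h3 : 2*n+2 = (2*n+1)+1 := by omega
        rw [h3, Nat.factorial_succ]
      calc (((2*n+2).choose (n+1) : ℕ) : ℚ) * ((n+1).factorial : ℚ) * ((n+1).factorial : ℚ)
          = (((2*n+2).choose (n+1) * (n+1).factorial * (n+1).factorial : ℕ) : ℚ) := by push_cast; ring
        _ = (((2*n+2) * (2*n+1).factorial : ℕ) : ℚ) := by rw [h1, h2]
        _ = (2*(n:ℚ)+2) * ((2*n+1).factorial : ℚ) := by push_cast; ring
    simp only [Nat.choose_self, Nat.cast_one, mul_one]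
    rw [show n+1+(n+1) = 2*n+2 by omega]
    have hn1 : ((n:ℚ)+1) ≠ 0 := by positivity
    push_cast
    field_simp
    linear_combination ((-1:ℚ)^(n+1)) * hch2


lemma keyalg3 (s c0 c1 nq kq : ℚ) (hk : kq ≠ 0) (hnk : nq+1-kq ≠ 0) (hn1 : nq+1 ≠ 0)
    (hc : (nq+1-kq)*c1 = (nq+1+kq)*c0) :
    s*c1/kq^2 = s*c0/kq^2 + (2/(nq+1))*(s*c0/kq) + (2/(nq+1))*(s*c0/(nq+1-kq)) := by
  field_simp
  linear_combination (s*(nq+1)) * hc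

lemma AId (n : ℕ) :
    ∑ k ∈ Icc 1 n, (-1:ℚ)^k * (n.choose k) * ((n+k).choose k) / (k:ℚ)^2
      = -2 * (∑ k ∈ Icc 1 n, 1/(k:ℚ))^2 := by
  induction n with
  | zero => simp
  | succ n ih =>
    have key : ∀ k ∈ Icc 1 n,
        (-1:ℚ)^k * ((n+1).choose k) * ((n+1+k).choose k) / (k:ℚ)^2
        = (-1:ℚ)^k * (n.choose k) * ((n+k).choose k) / (k:ℚ)^2
          + (2/((n:ℚ)+1))*((-1:ℚ)^k * (n.choose k) * ((n+k).choose k) / (k:ℚ))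
          + (2/((n:ℚ)+1))*((-1:ℚ)^k * (n.choose k) * ((n+k).choose k) / ((n:ℚ)+1-k)) := by
      intro k hk
      rw [mem_Icc] at hk
      have hk0 : (k:ℚ) ≠ 0 := by
        have : (1:ℚ) ≤ (k:ℚ) := by exact_mod_cast hk.1
        linarith
      have hnk : (n:ℚ)+1-(k:ℚ) ≠ 0 := by
        have : (k:ℚ) ≤ (n:ℚ) := by exact_mod_cast hk.2
        intro h; linarith
      have hn1 : ((n:ℚ)+1) ≠ 0 := by positivity
      have h := keyalg3 ((-1:ℚ)^k) ((n.choose k : ℚ) * ((n+k).choose k : ℚ))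
        (((n+1).choose k : ℚ) * ((n+1+k).choose k : ℚ)) (n:ℚ) (k:ℚ) hk0 hnk hn1 (contig n k)
      linear_combination h
    rw [Finset.sum_Icc_succ_top (show 1 ≤ n+1 by omega),
      Finset.sum_congr rfl key, Finset.sum_add_distrib, Finset.sum_add_distrib,
      ← Finset.mul_sum, ← Finset.mul_sum, ih, CId n, Dval n,
      Finset.sum_Icc_succ_top (show 1 ≤ n+1 by omega) (fun k => 1/(k:ℚ))]
    have hF1 : ((n+1).factorial : ℚ) ≠ 0 := by exact_mod_cast (n+1).factorial_ne_zero
    have hch2 : (((2*n+2).choose (n+1) : ℕ) : ℚ) * ((n+1).factorial : ℚ) * ((n+1).factorial : ℚ)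
        = (2*(n:ℚ)+2) * ((2*n+1).factorial : ℚ) := by
      have h1 : (2*n+2).choose (n+1) * (n+1).factorial * (n+1).factorial = (2*n+2).factorial := by
        have h0 := Nat.choose_mul_factorial_mul_factorial (show n+1 ≤ 2*n+2 by omega)
        have he : 2*n+2 - (n+1) = n+1 := by omega
        rw [he] at h0
        exact h0
      have h2 : (2*n+2).factorial = (2*n+2) * (2*n+1).factorial := by
        have h3 : 2*n+2 = (2*n+1)+1 := by omega
        rw [h3, Nat.factorial_succ]
      calc (((2*n+2).choose (n+1) : ℕ) : ℚ) * ((n+1).factorial : ℚ) * ((n+1).factorial : ℚ)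
          = (((2*n+2).choose (n+1) * (n+1).factorial * (n+1).factorial : ℕ) : ℚ) := by push_cast; ring
        _ = (((2*n+2) * (2*n+1).factorial : ℕ) : ℚ) := by rw [h1, h2]
        _ = (2*(n:ℚ)+2) * ((2*n+1).factorial : ℚ) := by push_cast; ring
    simp only [Nat.choose_self, Nat.cast_one, mul_one]
    rw [show n+1+(n+1) = 2*n+2 by omega]
    have hn1 : ((n:ℚ)+1) ≠ 0 := by positivity
    push_cast
    field_simp
    linear_combination ((-1:ℚ)^(n+1)) * hch2


lemma sqsum (n : ℕ) :
    (∑ k ∈ Icc 1 n, 1/(k:ℚ))^2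
      = ∑ k ∈ Icc 1 n, 1/(k:ℚ)^2 + 2 * ∑ k ∈ Icc 1 n, ∑ j ∈ Ico 1 k, 1/((j:ℚ)*k) := by
  induction n with
  | zero => simp
  | succ n ih =>
    rw [Finset.sum_Icc_succ_top (show 1 ≤ n+1 by omega) (fun k => 1/(k:ℚ)),
      Finset.sum_Icc_succ_top (show 1 ≤ n+1 by omega) (fun k => 1/(k:ℚ)^2),
      Finset.sum_Icc_succ_top (show 1 ≤ n+1 by omega) (fun k => ∑ j ∈ Ico 1 k, 1/((j:ℚ)*k))]
    have hinner : ∑ j ∈ Ico 1 (n+1), 1/((j:ℚ)*((n+1:ℕ):ℚ))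
        = (1/((n+1:ℕ):ℚ)) * ∑ j ∈ Icc 1 n, 1/(j:ℚ) := by
      rw [Finset.Ico_add_one_right_eq_Icc, Finset.mul_sum]
      apply Finset.sum_congr rfl
      intro j _
      rw [div_mul_div_comm, one_mul, mul_comm]
    rw [hinner]
    push_cast
    have hn1 : ((n:ℚ)+1) ≠ 0 := by positivity
    field_simp
    linear_combination (((n:ℚ)+1)^2) * ih

theorem stmt_4 (n : ℕ) (hn : 1 ≤ n) :
    (∑ k ∈ Finset.Icc 1 n,
        (-1 : ℚ) ^ k / (k : ℚ) ^ 2 * (n.choose k) * ((n + k).choose k) =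
      -(2 * ∑ k ∈ Finset.Icc 1 n, (1 : ℚ) / (k : ℚ) ^ 2 +
        4 * ∑ k ∈ Finset.Icc 1 n, ∑ j ∈ Finset.Ico 1 k, (1 : ℚ) / ((j : ℚ) * k))) ∧
    (∑ k ∈ Finset.Icc 1 n,
        (-1 : ℚ) ^ k / (k : ℚ) ^ 2 * (n.choose k) * ((n + k).choose k) =
      -2 * (∑ k ∈ Finset.Icc 1 n, (1 : ℚ) / k) ^ 2) := by
  have hA : ∑ k ∈ Finset.Icc 1 n, (-1 : ℚ) ^ k / (k : ℚ) ^ 2 * (n.choose k) * ((n + k).choose k)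
      = ∑ k ∈ Icc 1 n, (-1:ℚ)^k * (n.choose k) * ((n+k).choose k) / (k:ℚ)^2 := by
    apply Finset.sum_congr rfl
    intro k _
    ring
  have h2 : ∑ k ∈ Finset.Icc 1 n, (-1 : ℚ) ^ k / (k : ℚ) ^ 2 * (n.choose k) * ((n + k).choose k)
      = -2 * (∑ k ∈ Finset.Icc 1 n, (1 : ℚ) / k) ^ 2 := by
    rw [hA, AId n]
  refine ⟨?_, h2⟩
  rw [h2]
  rw [sqsum n]
  ring
end

section
/- For n ≥ 1 and r = 3, the identity ∑_{k=1}^{n} ((-1)^k/k^3) · C(n,k) · C(n+k,k) = -(2·H_n(3) + 4·H_n(2,1) + 4·H_n(1,2) + 8·H_n(1,1,1)) holds, and this equals -(4/3)·H_n(1)^3 − (2/3)·H_n(3) modulo the stuffle relations (as an exact identity of rational numbers). -/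
open Finset Polynomial

noncomputable def SH1 (n : ℕ) : ℚ := ∑ k ∈ Icc 1 n, (1:ℚ)/k
noncomputable def SH2 (n : ℕ) : ℚ := ∑ k ∈ Icc 1 n, (1:ℚ)/(k:ℚ)^2
noncomputable def SH3 (n : ℕ) : ℚ := ∑ k ∈ Icc 1 n, (1:ℚ)/(k:ℚ)^3

lemma Icc_succ (n : ℕ) : Icc 1 (n+1) = insert (n+1) (Icc 1 n) :=
  (Finset.insert_Icc_right_eq_Icc_add_one (by omega)).symm
lemma notmem (n : ℕ) : (n+1) ∉ Icc 1 n := by simp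
lemma SH1_succ (m : ℕ) : SH1 (m+1) = SH1 m + 1/((m:ℚ)+1) := by
  rw [SH1, SH1, Icc_succ, Finset.sum_insert (notmem m)]; push_cast; ring
lemma SH2_succ (m : ℕ) : SH2 (m+1) = SH2 m + 1/((m:ℚ)+1)^2 := by
  rw [SH2, SH2, Icc_succ, Finset.sum_insert (notmem m)]; push_cast; ring
lemma SH3_succ (m : ℕ) : SH3 (m+1) = SH3 m + 1/((m:ℚ)+1)^3 := by
  rw [SH3, SH3, Icc_succ, Finset.sum_insert (notmem m)]; push_cast; ring

lemma row_factor (m : ℕ) (f : ℕ → ℚ) (c : ℚ) (h : ∀ j ∈ Icc 1 m, f j ≠ 0) :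
    ∑ j ∈ Icc 1 m, 1/(f j * c) = (∑ j ∈ Icc 1 m, 1/f j) * (1/c) := by
  rw [Finset.sum_mul]
  apply Finset.sum_congr rfl
  intro j hj
  rw [one_div_mul_one_div]

lemma sq_sum (n : ℕ) :
    ∑ k ∈ Icc 1 n, ∑ j ∈ Ico 1 k, (1:ℚ)/((j:ℚ)*k) = ((SH1 n)^2 - SH2 n)/2 := by
  induction n with
  | zero => simp [SH1, SH2]
  | succ m ih =>
    have hm : ((m:ℚ)+1) ≠ 0 := by positivity
    rw [Icc_succ, Finset.sum_insert (notmem m), ih]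
    have h1 : Ico 1 (m+1) = Icc 1 m := rfl
    have h2 : ∑ j ∈ Icc 1 m, (1:ℚ)/((j:ℚ)*((m:ℕ)+1:ℕ)) = (SH1 m) * (1/((m:ℚ)+1)) := by
      push_cast
      rw [SH1, ← row_factor m (fun j => (j:ℚ)) ((m:ℚ)+1)]
      intro j hj
      have := (Finset.mem_Icc.mp hj).1
      simp only [ne_eq, Nat.cast_eq_zero]; omega
    rw [h1, h2, SH1_succ, SH2_succ]
    field_simp; ring

lemma cube_sum (n : ℕ) :
    (SH1 n)^3 = SH3 n
      + 3 * (∑ k ∈ Icc 1 n, ∑ j ∈ Ico 1 k, (1:ℚ)/((j:ℚ)^2*k))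
      + 3 * (∑ k ∈ Icc 1 n, ∑ j ∈ Ico 1 k, (1:ℚ)/((j:ℚ)*(k:ℚ)^2))
      + 6 * (∑ k ∈ Icc 1 n, ∑ j ∈ Ico 1 k, ∑ i ∈ Ico 1 j, (1:ℚ)/((i:ℚ)*j*k)) := by
  induction n with
  | zero => simp [SH1, SH3]
  | succ m ih =>
    have hm : ((m:ℚ)+1) ≠ 0 := by positivity
    have h1 : Ico 1 (m+1) = Icc 1 m := rfl
    have hne : ∀ j ∈ Icc 1 m, ((j:ℚ)) ≠ 0 := by
      intro j hj
      have := (Finset.mem_Icc.mp hj).1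
      simp only [ne_eq, Nat.cast_eq_zero]; omega
    have hne2 : ∀ j ∈ Icc 1 m, ((j:ℚ))^2 ≠ 0 := fun j hj => pow_ne_zero 2 (hne j hj)
    -- new row for A: ∑_{j≤m} 1/(j^2 (m+1)) = SH2 m / (m+1)
    have hA : ∑ j ∈ Ico 1 (m+1), (1:ℚ)/((j:ℚ)^2*((m:ℕ)+1:ℕ)) = SH2 m * (1/((m:ℚ)+1)) := by
      push_cast
      rw [h1, SH2, ← row_factor m (fun j => (j:ℚ)^2) ((m:ℚ)+1) hne2]
    have hB : ∑ j ∈ Ico 1 (m+1), (1:ℚ)/((j:ℚ)*(((m:ℕ)+1:ℕ):ℚ)^2) = SH1 m * (1/((m:ℚ)+1)^2) := by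
      push_cast
      rw [h1, SH1, ← row_factor m (fun j => (j:ℚ)) (((m:ℚ)+1)^2) hne]
    have hC : ∑ j ∈ Ico 1 (m+1), ∑ i ∈ Ico 1 j, (1:ℚ)/((i:ℚ)*j*((m:ℕ)+1:ℕ))
        = ((SH1 m)^2 - SH2 m)/2 * (1/((m:ℚ)+1)) := by
      push_cast
      rw [h1, ← sq_sum m, Finset.sum_mul]
      apply Finset.sum_congr rfl
      intro j hj
      rw [Finset.sum_mul]
      apply Finset.sum_congr rfl
      intro i hi
      rw [one_div_mul_one_div, mul_assoc]
    rw [Icc_succ, Finset.sum_insert (notmem m), Finset.sum_insert (notmem m),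
        Finset.sum_insert (notmem m),
        hA, hB, hC, SH1_succ, SH3_succ]
    linear_combination (norm := (field_simp; ring)) ih

noncomputable def Pin (a b : ℚ) : Polynomial ℚ :=
  C 1 - C (2*a) * X + C (2*a^2) * X^2 + C (-(4/3)*a^3 - (2/3)*b) * X^3

noncomputable def Qp (n : ℕ) : Polynomial ℚ := C ((-1:ℚ)^n) * Pin (SH1 n) (SH3 n)

lemma key (c a b : ℚ) (hc : c ≠ 0) :
    (X - C c) * Pin a b + (X + C c) * Pin (a + 1/c) (b + 1/c^3)
      = C ((-(4/3)*a^3 - (2/3)*b) + (-(4/3)*(a+1/c)^3 - (2/3)*(b+1/c^3))) * X^4 := by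
  apply Polynomial.funext
  intro x
  simp only [Pin, eval_add, eval_sub, eval_mul, eval_pow, eval_C, eval_X, eval_one]
  field_simp
  ring

lemma lemA : ∀ m : ℕ, ∃ A : Polynomial ℚ,
    ∏ j ∈ Icc 1 m, (X - C (j:ℚ)) = Qp m * ∏ j ∈ Icc 1 m, (X + C (j:ℚ)) + X^4 * A := by
  intro m
  induction m with
  | zero => exact ⟨0, by simp [Qp, Pin, SH1, SH3]⟩
  | succ m ih =>
    obtain ⟨A, hA⟩ := ih
    have hc : ((m:ℚ)+1) ≠ 0 := by positivity
    have hkey := key ((m:ℚ)+1) (SH1 m) (SH3 m) hc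
    set ρ : ℚ := (-(4/3)*(SH1 m)^3 - (2/3)*(SH3 m)) +
      (-(4/3)*(SH1 m + 1/((m:ℚ)+1))^3 - (2/3)*(SH3 m + 1/((m:ℚ)+1)^3)) with hρ
    refine ⟨C ((-1:ℚ)^m * ρ) * ∏ j ∈ Icc 1 m, (X + C (j:ℚ)) + (X - C ((m:ℚ)+1)) * A, ?_⟩
    rw [Icc_succ, Finset.prod_insert (notmem m), Finset.prod_insert (notmem m), hA]
    have hq : Qp (m+1) = C ((-1:ℚ)^(m+1)) * Pin (SH1 m + 1/((m:ℚ)+1)) (SH3 m + 1/((m:ℚ)+1)^3) := by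
      rw [Qp, SH1_succ, SH3_succ]
    have hstep : (X - C ((m:ℚ)+1)) * Qp m
        = (X + C ((m:ℚ)+1)) * Qp (m+1) + C ((-1:ℚ)^m * ρ) * X^4 := by
      rw [Qp, hq]
      have : (X - C ((m:ℚ)+1)) * Pin (SH1 m) (SH3 m)
          = - ((X + C ((m:ℚ)+1)) * Pin (SH1 m + 1/((m:ℚ)+1)) (SH3 m + 1/((m:ℚ)+1)^3)) + C ρ * X^4 := by
        rw [← hkey]; ring
      calc (X - C ((m:ℚ)+1)) * (C ((-1:ℚ)^m) * Pin (SH1 m) (SH3 m))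
          = C ((-1:ℚ)^m) * ((X - C ((m:ℚ)+1)) * Pin (SH1 m) (SH3 m)) := by ring
        _ = C ((-1:ℚ)^m) * (- ((X + C ((m:ℚ)+1)) * Pin (SH1 m + 1/((m:ℚ)+1)) (SH3 m + 1/((m:ℚ)+1)^3)) + C ρ * X^4) := by rw [this]
        _ = (X + C ((m:ℚ)+1)) * (C ((-1:ℚ)^(m+1)) * Pin (SH1 m + 1/((m:ℚ)+1)) (SH3 m + 1/((m:ℚ)+1)^3)) + C ((-1:ℚ)^m * ρ) * X^4 := by
            have h1 : C ((-1:ℚ)^(m+1)) = - C ((-1:ℚ)^m) := by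
              rw [pow_succ]; simp
            have h2 : C ((-1:ℚ)^m * ρ) = C ((-1:ℚ)^m) * C ρ := by rw [map_mul]
            rw [h1, h2]; ring
    have hcast : ((m+1:ℕ):ℚ) = (m:ℚ)+1 := by push_cast; ring
    rw [hcast]
    calc (X - C ((m:ℚ)+1)) * (Qp m * ∏ j ∈ Icc 1 m, (X + C (j:ℚ)) + X^4 * A)
        = ((X - C ((m:ℚ)+1)) * Qp m) * ∏ j ∈ Icc 1 m, (X + C (j:ℚ)) + X^4 * ((X - C ((m:ℚ)+1)) * A) := by ring
      _ = _ := by rw [hstep]; ring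

-- ∏_{j=1}^n (k+j) = (n+k)!/k!
lemma prod_shift (k : ℕ) : ∀ n : ℕ, (∏ j ∈ Icc 1 n, ((k:ℚ)+j)) * (k.factorial:ℚ) = ((n+k).factorial : ℚ)
  | 0 => by simp
  | (n+1) => by
    rw [Icc_succ, Finset.prod_insert (notmem n)]
    have h := prod_shift k n
    have : ((n+1+k).factorial : ℚ) = ((k:ℚ) + (n+1)) * ((n+k).factorial : ℚ) := by
      have : (n+1+k) = (n+k) + 1 := by omega
      rw [this, Nat.factorial_succ]
      push_cast; ring
    rw [this, ← h]; push_cast; ring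

lemma prod_id_fact (m : ℕ) : (∏ j ∈ Icc 1 m, (j:ℚ)) = (m.factorial : ℚ) := by
  have := prod_shift 0 m
  simpa using this

lemma prod_low (k : ℕ) (hk : 1 ≤ k) :
    ∏ j ∈ Icc 1 (k-1), ((j:ℚ) - k) = (-1:ℚ)^(k-1) * ((k-1).factorial : ℚ) := by
  have h1 : ∏ j ∈ Icc 1 (k-1), ((j:ℚ) - k) = ∏ i ∈ Icc 1 (k-1), (-(i:ℚ)) := by
    apply Finset.prod_nbij' (fun j => k - j) (fun i => k - i)
    · intro a ha; simp only [Finset.mem_Icc] at *; omega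
    · intro a ha; simp only [Finset.mem_Icc] at *; omega
    · intro a ha; simp only [Finset.mem_Icc] at *; omega
    · intro a ha; simp only [Finset.mem_Icc] at *; omega
    · intro a ha
      simp only [Finset.mem_Icc] at ha
      have : ((k - a : ℕ) : ℚ) = (k:ℚ) - a := by
        have : a ≤ k := by omega
        push_cast [Nat.cast_sub this]; ring
      rw [this]; ring
  rw [h1]
  have h2 : ∏ i ∈ Icc 1 (k-1), (-(i:ℚ)) = ∏ i ∈ Icc 1 (k-1), ((-1:ℚ) * i) := by
    apply Finset.prod_congr rfl; intros; ring
  rw [h2, Finset.prod_mul_distrib, Finset.prod_const, prod_id_fact, Nat.card_Icc]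
  norm_num
lemma prod_high (k n : ℕ) (hk : 1 ≤ k) :
    ∏ j ∈ Icc (k+1) n, ((j:ℚ) - k) = ((n-k).factorial : ℚ) := by
  have h1 : ∏ j ∈ Icc (k+1) n, ((j:ℚ) - k) = ∏ i ∈ Icc 1 (n-k), (i:ℚ) := by
    apply Finset.prod_nbij' (fun j => j - k) (fun i => i + k)
    · intro a ha; simp only [Finset.mem_Icc] at *; omega
    · intro a ha; simp only [Finset.mem_Icc] at *; omega
    · intro a ha; simp only [Finset.mem_Icc] at *; omega
    · intro a ha; simp only [Finset.mem_Icc] at *; omega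
    · intro a ha
      simp only [Finset.mem_Icc] at ha
      have hak : k ≤ a := by omega
      push_cast [Nat.cast_sub hak]
      ring
  rw [h1, prod_id_fact]

lemma erase_split (k n : ℕ) (hk1 : 1 ≤ k) (hkn : k ≤ n) :
    (Icc 1 n).erase k = Icc 1 (k-1) ∪ Icc (k+1) n := by
  ext a
  simp only [Finset.mem_erase, Finset.mem_union, Finset.mem_Icc]
  omega

lemma erase_disj (k n : ℕ) : Disjoint (Icc 1 (k-1)) (Icc (k+1) n) := by
  rw [Finset.disjoint_left]
  intro a ha hb
  simp only [Finset.mem_Icc] at *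
  omega

-- value identity
lemma val_id (n k : ℕ) (hk1 : 1 ≤ k) (hkn : k ≤ n) :
    (-1:ℚ)^(n-k) * ((n.choose k:ℚ) * ((n+k).choose k:ℚ)) * (-(k:ℚ)) *
      ((-1:ℚ)^(k-1) * (((k-1).factorial:ℕ):ℚ) * (((n-k).factorial:ℕ):ℚ)) * ((k.factorial:ℕ):ℚ)
      = (-1:ℚ)^n * (((n+k).factorial:ℕ):ℚ) := by
  have hsign : (-1:ℚ)^(n-k) * ((-1:ℚ)^(k-1) * (-1)) = (-1:ℚ)^n := by
    have h1 : (-1:ℚ)^(k-1) * (-1) = (-1:ℚ)^k := by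
      have : k - 1 + 1 = k := by omega
      rw [← this, pow_succ]; norm_num
    rw [show (-1:ℚ)^(n-k) * ((-1:ℚ)^(k-1) * (-1)) = (-1:ℚ)^(n-k) * ((-1:ℚ)^(k-1) * (-1)) from rfl]
    calc (-1:ℚ)^(n-k) * ((-1:ℚ)^(k-1) * (-1)) = (-1:ℚ)^(n-k) * (-1:ℚ)^k := by rw [h1]
      _ = (-1:ℚ)^(n-k+k) := by rw [pow_add]
      _ = (-1:ℚ)^n := by congr 1; omega
  have hkf : (k:ℚ) * (((k-1).factorial:ℕ):ℚ) = ((k.factorial:ℕ):ℚ) := by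
    rw [← Nat.cast_mul, Nat.mul_factorial_pred (by omega)]
  have hc1 : ((n.choose k:ℕ):ℚ) * ((k.factorial:ℕ):ℚ) * (((n-k).factorial:ℕ):ℚ) = ((n.factorial:ℕ):ℚ) := by
    rw [← Nat.cast_mul, ← Nat.cast_mul, Nat.choose_mul_factorial_mul_factorial hkn]
  have hc2 : (((n+k).choose k:ℕ):ℚ) * ((k.factorial:ℕ):ℚ) * ((n.factorial:ℕ):ℚ) = (((n+k).factorial:ℕ):ℚ) := by
    have h := Nat.choose_mul_factorial_mul_factorial (show k ≤ n + k by omega)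
    have h2 : n + k - k = n := by omega
    rw [h2] at h
    rw [← Nat.cast_mul, ← Nat.cast_mul, h]
  calc (-1:ℚ)^(n-k) * ((n.choose k:ℚ) * ((n+k).choose k:ℚ)) * (-(k:ℚ)) *
      ((-1:ℚ)^(k-1) * (((k-1).factorial:ℕ):ℚ) * (((n-k).factorial:ℕ):ℚ)) * ((k.factorial:ℕ):ℚ)
      = ((-1:ℚ)^(n-k) * ((-1:ℚ)^(k-1) * (-1))) *
        (((n+k).choose k:ℚ) * ((k:ℚ) * (((k-1).factorial:ℕ):ℚ)) *
          (((n.choose k:ℕ):ℚ) * ((k.factorial:ℕ):ℚ) * (((n-k).factorial:ℕ):ℚ))) := by ring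
    _ = (-1:ℚ)^n * (((n+k).choose k:ℚ) * ((k.factorial:ℕ):ℚ) * ((n.factorial:ℕ):ℚ)) := by
        rw [hsign, hkf, hc1]
    _ = (-1:ℚ)^n * (((n+k).factorial:ℕ):ℚ) := by rw [hc2]

lemma PF (n : ℕ) :
    ∏ j ∈ Icc 1 n, (X - C (j:ℚ)) =
      C ((-1:ℚ)^n) * ∏ j ∈ Icc 1 n, (X + C (j:ℚ))
      + ∑ k ∈ Icc 1 n, C ((-1:ℚ)^(n-k) * ((n.choose k:ℚ) * ((n+k).choose k:ℚ))) * X *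
          ∏ j ∈ (Icc 1 n).erase k, (X + C (j:ℚ)) := by
  rw [← sub_eq_zero]
  set RHS := C ((-1:ℚ)^n) * ∏ j ∈ Icc 1 n, (X + C (j:ℚ))
      + ∑ k ∈ Icc 1 n, C ((-1:ℚ)^(n-k) * ((n.choose k:ℚ) * ((n+k).choose k:ℚ))) * X *
          ∏ j ∈ (Icc 1 n).erase k, (X + C (j:ℚ)) with hRHS
  set L := (∏ j ∈ Icc 1 n, (X - C (j:ℚ))) - RHS with hL
  have hfact : ∀ m : ℕ, ((m.factorial:ℕ):ℚ) ≠ 0 := by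
    intro m; exact_mod_cast Nat.factorial_ne_zero m
  -- evaluation of L at -(i) for i ∈ Icc 0 n
  have heval : ∀ i ∈ Icc 0 n, L.eval (-(i:ℚ)) = 0 := by
    intro i hi
    simp only [Finset.mem_Icc] at hi
    rw [hL, eval_sub, sub_eq_zero, hRHS]
    rcases Nat.eq_zero_or_pos i with h0 | hpos
    · subst h0
      simp only [Nat.cast_zero, neg_zero, eval_add, eval_mul, eval_C, eval_prod, eval_sub,
        eval_X, eval_finset_sum, zero_sub, zero_add, eval_mul, eval_C, mul_zero, zero_mul,
        Finset.sum_const_zero, add_zero]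
      have : ∏ j ∈ Icc 1 n, (-(j:ℚ)) = (-1:ℚ)^n * ∏ j ∈ Icc 1 n, (j:ℚ) := by
        rw [show (∏ j ∈ Icc 1 n, (-(j:ℚ))) = ∏ j ∈ Icc 1 n, ((-1:ℚ) * j) from
          Finset.prod_congr rfl (fun _ _ => by ring), Finset.prod_mul_distrib,
          Finset.prod_const, Nat.card_Icc]
        norm_num
      rw [this]
    · -- i = k ∈ [1,n]
      have hk1 : 1 ≤ i := hpos
      have hkn : i ≤ n := hi.2
      simp only [eval_add, eval_mul, eval_C, eval_prod, eval_sub, eval_X, eval_finset_sum]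
      -- LHS value
      have hLval : ∏ j ∈ Icc 1 n, (-(i:ℚ) - (j:ℚ)) = (-1:ℚ)^n * (((n+i).factorial:ℕ):ℚ) / ((i.factorial:ℕ):ℚ) := by
        have h1 : ∏ j ∈ Icc 1 n, (-(i:ℚ) - (j:ℚ)) = ∏ j ∈ Icc 1 n, ((-1:ℚ) * ((i:ℚ) + j)) :=
          Finset.prod_congr rfl (fun _ _ => by ring)
        rw [h1, Finset.prod_mul_distrib, Finset.prod_const, Nat.card_Icc,
          show n + 1 - 1 = n from by omega]
        have h2 := prod_shift i n
        field_simp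
        linear_combination h2
      -- first RHS term is zero
      have hD0 : ∏ j ∈ Icc 1 n, (-(i:ℚ) + (j:ℚ)) = 0 := by
        apply Finset.prod_eq_zero (Finset.mem_Icc.mpr ⟨hk1, hkn⟩)
        ring
      rw [hLval, hD0, mul_zero, zero_add]
      -- sum: only k = i survives
      rw [Finset.sum_eq_single_of_mem i (Finset.mem_Icc.mpr ⟨hk1, hkn⟩)]
      · -- the surviving term
        have hsplit : (Icc 1 n).erase i = Icc 1 (i-1) ∪ Icc (i+1) n := erase_split i n hk1 hkn
        have hprod : ∏ j ∈ (Icc 1 n).erase i, (-(i:ℚ) + (j:ℚ)) =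
            ((-1:ℚ)^(i-1) * (((i-1).factorial:ℕ):ℚ)) * (((n-i).factorial:ℕ):ℚ) := by
          rw [hsplit, Finset.prod_union (erase_disj i n)]
          have e1 : ∏ j ∈ Icc 1 (i-1), (-(i:ℚ) + (j:ℚ)) = ∏ j ∈ Icc 1 (i-1), ((j:ℚ) - i) :=
            Finset.prod_congr rfl (fun _ _ => by ring)
          have e2 : ∏ j ∈ Icc (i+1) n, (-(i:ℚ) + (j:ℚ)) = ∏ j ∈ Icc (i+1) n, ((j:ℚ) - i) :=
            Finset.prod_congr rfl (fun _ _ => by ring)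
          rw [e1, e2, prod_low i hk1, prod_high i n hk1]
        rw [hprod]
        have hvi := val_id n i hk1 hkn
        field_simp
        linear_combination -hvi
      · intro b hb hbne
        have hbmem : i ∈ (Icc 1 n).erase b := by
          rw [Finset.mem_erase]
          exact ⟨Ne.symm hbne, Finset.mem_Icc.mpr ⟨hk1, hkn⟩⟩
        have : ∏ j ∈ (Icc 1 n).erase b, (-(i:ℚ) + (j:ℚ)) = 0 := by
          apply Finset.prod_eq_zero hbmem
          ring
        rw [this, mul_zero]
  -- degree bound
  have hdeg : L.natDegree < n + 1 := by
    have d1 : (∏ j ∈ Icc 1 n, (X - C (j:ℚ))).natDegree ≤ n := by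
      refine le_trans (Polynomial.natDegree_prod_le _ _) ?_
      refine le_trans (Finset.sum_le_sum (fun j _ => (natDegree_X_sub_C (j:ℚ)).le)) ?_
      simp [Nat.card_Icc]
    have d2 : RHS.natDegree ≤ n := by
      rw [hRHS]
      refine le_trans (Polynomial.natDegree_add_le _ _) (max_le ?_ ?_)
      · refine le_trans (Polynomial.natDegree_C_mul_le _ _) ?_
        refine le_trans (Polynomial.natDegree_prod_le _ _) ?_
        refine le_trans (Finset.sum_le_sum (fun j _ => (natDegree_X_add_C (j:ℚ)).le)) ?_
        simp [Nat.card_Icc]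
      · refine Polynomial.natDegree_sum_le_of_forall_le _ _ ?_
        intro k hk
        simp only [Finset.mem_Icc] at hk
        refine le_trans (Polynomial.natDegree_mul_le) ?_
        have e1 : (C ((-1:ℚ)^(n-k) * ((n.choose k:ℚ) * ((n+k).choose k:ℚ))) * X).natDegree ≤ 1 := by
          refine le_trans (Polynomial.natDegree_C_mul_le _ _) ?_
          simp
        have e2 : (∏ j ∈ (Icc 1 n).erase k, (X + C (j:ℚ))).natDegree ≤ n - 1 := by
          refine le_trans (Polynomial.natDegree_prod_le _ _) ?_
          refine le_trans (Finset.sum_le_sum (fun j _ => (natDegree_X_add_C (j:ℚ)).le)) ?_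
          rw [Finset.sum_const, Finset.card_erase_of_mem (Finset.mem_Icc.mpr hk), Nat.card_Icc]
          simp
        omega
    calc L.natDegree ≤ max (∏ j ∈ Icc 1 n, (X - C (j:ℚ))).natDegree RHS.natDegree :=
          Polynomial.natDegree_sub_le _ _
      _ ≤ n := max_le d1 d2
      _ < n + 1 := by omega
  -- conclude
  apply Polynomial.eq_zero_of_natDegree_lt_card_of_eval_eq_zero' L ((Icc 0 n).image (fun i : ℕ => -(i:ℚ)))
  · intro x hx
    simp only [Finset.mem_image] at hx
    obtain ⟨i, hi, rfl⟩ := hx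
    exact heval i hi
  · rw [Finset.card_image_of_injective _ (fun a b hab => by
      have : (a:ℚ) = b := by linarith [neg_injective hab]
      exact_mod_cast this)]
    rw [Nat.card_Icc]
    omega

-- Lemma B: X * E_k expressed against D modulo X^4
lemma lemB (n k : ℕ) (hk : k ∈ Icc 1 n) :
    X * ∏ j ∈ (Icc 1 n).erase k, (X + C (j:ℚ)) =
      (C (1/(k:ℚ)) * X - C (1/(k:ℚ)^2) * X^2 + C (1/(k:ℚ)^3) * X^3) *
        ∏ j ∈ Icc 1 n, (X + C (j:ℚ))
      - X^4 * (C (1/(k:ℚ)^3) * ∏ j ∈ (Icc 1 n).erase k, (X + C (j:ℚ))) := by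
  have hk1 : 1 ≤ k := (Finset.mem_Icc.mp hk).1
  have hkq : (k:ℚ) ≠ 0 := by
    simp only [ne_eq, Nat.cast_eq_zero]; omega
  rw [← Finset.mul_prod_erase _ _ hk]
  have hpoly : (X : Polynomial ℚ) =
      (C (1/(k:ℚ)) * X - C (1/(k:ℚ)^2) * X^2 + C (1/(k:ℚ)^3) * X^3) * (X + C (k:ℚ))
      - X^4 * C (1/(k:ℚ)^3) := by
    apply Polynomial.funext
    intro x
    simp only [eval_add, eval_sub, eval_mul, eval_pow, eval_C, eval_X]
    field_simp
    ring
  calc X * ∏ j ∈ (Icc 1 n).erase k, (X + C (j:ℚ))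
      = ((C (1/(k:ℚ)) * X - C (1/(k:ℚ)^2) * X^2 + C (1/(k:ℚ)^3) * X^3) * (X + C (k:ℚ))
          - X^4 * C (1/(k:ℚ)^3)) * ∏ j ∈ (Icc 1 n).erase k, (X + C (j:ℚ)) := by rw [← hpoly]
    _ = _ := by ring

-- the main coefficient identity
lemma main_id (n : ℕ) :
    ∑ k ∈ Icc 1 n, (-1:ℚ)^k / (k:ℚ)^3 * (n.choose k : ℚ) * ((n+k).choose k : ℚ)
      = -(4/3) * (SH1 n)^3 - (2/3) * SH3 n := by
  obtain ⟨A, hA⟩ := lemA n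
  have hPF := PF n
  set D : Polynomial ℚ := ∏ j ∈ Icc 1 n, (X + C (j:ℚ)) with hD
  set B : Polynomial ℚ := C ((-1:ℚ)^n) + ∑ k ∈ Icc 1 n,
      C ((-1:ℚ)^(n-k) * ((n.choose k:ℚ) * ((n+k).choose k:ℚ))) *
      (C (1/(k:ℚ)) * X - C (1/(k:ℚ)^2) * X^2 + C (1/(k:ℚ)^3) * X^3) with hB
  set W : Polynomial ℚ := ∑ k ∈ Icc 1 n,
      C ((-1:ℚ)^(n-k) * ((n.choose k:ℚ) * ((n+k).choose k:ℚ))) *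
      (C (1/(k:ℚ)^3) * ∏ j ∈ (Icc 1 n).erase k, (X + C (j:ℚ))) with hW
  have hsum2 : ∑ k ∈ Icc 1 n, C ((-1:ℚ)^(n-k) * ((n.choose k:ℚ) * ((n+k).choose k:ℚ))) * X *
        ∏ j ∈ (Icc 1 n).erase k, (X + C (j:ℚ))
      = (∑ k ∈ Icc 1 n, C ((-1:ℚ)^(n-k) * ((n.choose k:ℚ) * ((n+k).choose k:ℚ))) *
          (C (1/(k:ℚ)) * X - C (1/(k:ℚ)^2) * X^2 + C (1/(k:ℚ)^3) * X^3)) * D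
        - X^4 * W := by
    rw [hW, Finset.mul_sum, Finset.sum_mul, ← Finset.sum_sub_distrib]
    apply Finset.sum_congr rfl
    intro k hk
    have hb := lemB n k hk
    calc C ((-1:ℚ)^(n-k) * ((n.choose k:ℚ) * ((n+k).choose k:ℚ))) * X *
          ∏ j ∈ (Icc 1 n).erase k, (X + C (j:ℚ))
        = C ((-1:ℚ)^(n-k) * ((n.choose k:ℚ) * ((n+k).choose k:ℚ))) *
            (X * ∏ j ∈ (Icc 1 n).erase k, (X + C (j:ℚ))) := by ring
      _ = C ((-1:ℚ)^(n-k) * ((n.choose k:ℚ) * ((n+k).choose k:ℚ))) *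
            ((C (1/(k:ℚ)) * X - C (1/(k:ℚ)^2) * X^2 + C (1/(k:ℚ)^3) * X^3) * D
              - X^4 * (C (1/(k:ℚ)^3) * ∏ j ∈ (Icc 1 n).erase k, (X + C (j:ℚ)))) := by rw [hb]
      _ = _ := by ring
  have hPF2 : ∏ j ∈ Icc 1 n, (X - C (j:ℚ)) = B * D - X^4 * W := by
    rw [hPF, hsum2, hB]
    ring
  have hsub : (Qp n - B) * D = X^4 * (-W - A) := by
    calc (Qp n - B) * D
        = (Qp n * D + X^4*A) - (B * D - X^4*W) + X^4 * (-W - A) := by ring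
      _ = X^4 * (-W - A) := by rw [← hA, ← hPF2]; ring
  have hDnd : ¬ (X : Polynomial ℚ) ∣ D := by
    rw [hD, Polynomial.X_dvd_iff]
    rw [Polynomial.coeff_zero_eq_eval_zero, eval_prod]
    simp only [eval_add, eval_X, eval_C, zero_add]
    rw [prod_id_fact]
    exact_mod_cast Nat.factorial_ne_zero n
  have hdvd : (X : Polynomial ℚ)^4 ∣ (Qp n - B) :=
    (Polynomial.prime_X).pow_dvd_of_dvd_mul_right 4 hDnd ⟨-W - A, hsub⟩
  have hzero : Qp n - B = 0 := by
    by_contra hne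
    have h4 : ((X : Polynomial ℚ)^4).natDegree ≤ (Qp n - B).natDegree :=
      Polynomial.natDegree_le_of_dvd hdvd hne
    rw [Polynomial.natDegree_X_pow] at h4
    have hq : (Qp n).natDegree ≤ 3 := by
      rw [Qp]
      refine le_trans (Polynomial.natDegree_C_mul_le _ _) ?_
      rw [Pin]
      refine le_trans (Polynomial.natDegree_add_le _ _) (max_le ?_ ?_)
      · refine le_trans (Polynomial.natDegree_add_le _ _) (max_le ?_ ?_)
        · refine le_trans (Polynomial.natDegree_sub_le _ _) (max_le ?_ ?_)
          · simp
          · exact le_trans (Polynomial.natDegree_C_mul_le _ _) (by simp)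
        · exact le_trans (Polynomial.natDegree_C_mul_le _ _) (by simp)
      · exact le_trans (Polynomial.natDegree_C_mul_le _ _) (by simp)
    have hb : B.natDegree ≤ 3 := by
      rw [hB]
      refine le_trans (Polynomial.natDegree_add_le _ _) (max_le (by simp) ?_)
      refine Polynomial.natDegree_sum_le_of_forall_le _ _ ?_
      intro k hk
      refine le_trans (Polynomial.natDegree_C_mul_le _ _) ?_
      refine le_trans (Polynomial.natDegree_add_le _ _) (max_le ?_ ?_)
      · refine le_trans (Polynomial.natDegree_sub_le _ _) (max_le ?_ ?_)
        · exact le_trans (Polynomial.natDegree_C_mul_le _ _) (by simp)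
        · exact le_trans (Polynomial.natDegree_C_mul_le _ _) (by simp)
      · exact le_trans (Polynomial.natDegree_C_mul_le _ _) (by simp)
    have : (Qp n - B).natDegree ≤ 3 :=
      le_trans (Polynomial.natDegree_sub_le _ _) (max_le hq hb)
    omega
  -- extract coefficient 3
  have hcoeff := congrArg (fun p => Polynomial.coeff p 3) hzero
  simp only [Polynomial.coeff_sub, Polynomial.coeff_zero] at hcoeff
  have hQc : (Qp n).coeff 3 = (-1:ℚ)^n * (-(4/3)*(SH1 n)^3 - (2/3)*(SH3 n)) := by
    rw [Qp, Pin, Polynomial.coeff_C_mul]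
    simp only [Polynomial.coeff_add, Polynomial.coeff_sub, Polynomial.coeff_C_mul,
      Polynomial.coeff_X_pow, Polynomial.coeff_C, Polynomial.coeff_X]
    norm_num
  have hBc : B.coeff 3 = ∑ k ∈ Icc 1 n,
      (-1:ℚ)^(n-k) * ((n.choose k:ℚ) * ((n+k).choose k:ℚ)) * (1/(k:ℚ)^3) := by
    rw [hB, Polynomial.coeff_add, Polynomial.finset_sum_coeff]
    have hC0 : (C ((-1:ℚ)^n)).coeff 3 = 0 := by
      simp only [Polynomial.coeff_C]; norm_num
    rw [hC0, zero_add]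
    apply Finset.sum_congr rfl
    intro k hk
    rw [Polynomial.coeff_C_mul]
    simp only [Polynomial.coeff_add, Polynomial.coeff_sub, Polynomial.coeff_C_mul,
      Polynomial.coeff_X_pow, Polynomial.coeff_C, Polynomial.coeff_X]
    norm_num
  rw [hQc, hBc] at hcoeff
  -- now convert the signs
  have hfinal : ∑ k ∈ Icc 1 n, (-1:ℚ)^k / (k:ℚ)^3 * (n.choose k : ℚ) * ((n+k).choose k : ℚ)
      = (-1:ℚ)^n * ∑ k ∈ Icc 1 n,
        (-1:ℚ)^(n-k) * ((n.choose k:ℚ) * ((n+k).choose k:ℚ)) * (1/(k:ℚ)^3) := by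
    rw [Finset.mul_sum]
    apply Finset.sum_congr rfl
    intro k hk
    have hkn : k ≤ n := (Finset.mem_Icc.mp hk).2
    have hsg : (-1:ℚ)^n * (-1:ℚ)^(n-k) = (-1:ℚ)^k := by
      rw [← pow_add]
      rw [show n + (n-k) = 2*(n-k) + k from by omega]
      rw [pow_add, pow_mul]
      norm_num
    calc (-1:ℚ)^k / (k:ℚ)^3 * (n.choose k : ℚ) * ((n+k).choose k : ℚ)
        = ((-1:ℚ)^k) * (((n.choose k:ℚ) * ((n+k).choose k:ℚ)) * (1/(k:ℚ)^3)) := by ring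
      _ = ((-1:ℚ)^n * (-1:ℚ)^(n-k)) * (((n.choose k:ℚ) * ((n+k).choose k:ℚ)) * (1/(k:ℚ)^3)) := by
          rw [hsg]
      _ = _ := by ring
  have hsum : ∑ k ∈ Icc 1 n,
      (-1:ℚ)^(n-k) * ((n.choose k:ℚ) * ((n+k).choose k:ℚ)) * (1/(k:ℚ)^3)
      = (-1:ℚ)^n * (-(4/3)*(SH1 n)^3 - (2/3)*(SH3 n)) := by linarith [hcoeff]
  rw [hfinal, hsum, ← mul_assoc, ← mul_pow]
  norm_num

theorem stmt_5 (n : ℕ) (hn : 1 ≤ n) :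
    (∑ k ∈ Finset.Icc 1 n,
        (-1 : ℚ) ^ k / (k : ℚ) ^ 3 * (n.choose k) * ((n + k).choose k) =
      -(2 * ∑ k ∈ Finset.Icc 1 n, (1 : ℚ) / (k : ℚ) ^ 3 +
        4 * ∑ k ∈ Finset.Icc 1 n, ∑ j ∈ Finset.Ico 1 k, (1 : ℚ) / ((j : ℚ) ^ 2 * k) +
        4 * ∑ k ∈ Finset.Icc 1 n, ∑ j ∈ Finset.Ico 1 k, (1 : ℚ) / ((j : ℚ) * (k : ℚ) ^ 2) +
        8 * ∑ k ∈ Finset.Icc 1 n, ∑ j ∈ Finset.Ico 1 k, ∑ i ∈ Finset.Ico 1 j,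
              (1 : ℚ) / ((i : ℚ) * j * k))) ∧
    (∑ k ∈ Finset.Icc 1 n,
        (-1 : ℚ) ^ k / (k : ℚ) ^ 3 * (n.choose k) * ((n + k).choose k) =
      -(4 / 3) * (∑ k ∈ Finset.Icc 1 n, (1 : ℚ) / k) ^ 3
        - (2 / 3) * ∑ k ∈ Finset.Icc 1 n, (1 : ℚ) / (k : ℚ) ^ 3) := by
  have h2 := main_id n
  rw [SH1, SH3] at h2
  have hc := cube_sum n
  rw [SH1, SH3] at hc
  constructor
  · linear_combination h2 - (4/3) * hc
  · exact h2
end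

section
/- Let p be an odd prime and set n = (p-1)/2. For every integer k with 0 ≤ k ≤ n, the congruence C(n+k, 2k) ≡ C(2k,k) · (-1)^k / 16^k (mod p^2) holds, i.e., 16^k · C(n+k,2k) ≡ (-1)^k · C(2k,k) (mod p^2) after clearing denominators (16 is invertible mod p^2). -/
open Finset Nat

/-- `(2k)! = 2^k * k! * ∏_{j<k} (2j+1)` -/
lemma fact_two_mul (k : ℕ) :
    (2 * k)! = 2 ^ k * k ! * ∏ j ∈ range k, (2 * j + 1) := by
  induction k with
  | zero => simp
  | succ k ih =>
      have h : 2 * (k + 1) = (2 * k + 1) + 1 := by ring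
      rw [h, Nat.factorial_succ, Nat.factorial_succ, ih, prod_range_succ,
        Nat.factorial_succ]
      ring

/-- `C(2k,k) * (2k)! = 4^k * (∏_{j<k}(2j+1))^2` -/
lemma central_binom_mul_fact (k : ℕ) :
    (2 * k).choose k * (2 * k)! = 4 ^ k * (∏ j ∈ range k, (2 * j + 1)) ^ 2 := by
  have hc : (2 * k).choose k * (k ! * k !) = (2 * k)! := by
    have := Nat.choose_mul_factorial_mul_factorial (n := 2 * k) (k := k) (by omega)
    have h2 : 2 * k - k = k := by omega
    rw [h2] at this
    rw [← this]; ring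
  have hf := fact_two_mul k
  have hkne : 0 < k ! * k ! := Nat.mul_pos k.factorial_pos k.factorial_pos
  apply Nat.eq_of_mul_eq_mul_right hkne
  calc (2 * k).choose k * (2 * k)! * (k ! * k !)
      = ((2 * k).choose k * (k ! * k !)) * (2 * k)! := by ring
    _ = (2 * k)! * (2 * k)! := by rw [hc]
    _ = (2 ^ k * k ! * ∏ j ∈ range k, (2 * j + 1)) *
        (2 ^ k * k ! * ∏ j ∈ range k, (2 * j + 1)) := by rw [hf]
    _ = 4 ^ k * (∏ j ∈ range k, (2 * j + 1)) ^ 2 * (k ! * k !) := by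
        have h4 : (4 : ℕ) ^ k = 2 ^ k * 2 ^ k := by rw [← Nat.mul_pow]
        rw [h4]; ring

theorem stmt_6 (p : ℕ) (hp : p.Prime) (hodd : Odd p) (k : ℕ)
    (hk : k ≤ (p - 1) / 2) :
    (16 ^ k * ((p - 1) / 2 + k).choose (2 * k) : ℤ) ≡
      (-1) ^ k * (2 * k).choose k [ZMOD (p : ℤ) ^ 2] := by
  have hp2 : 2 ≤ p := hp.two_le
  have hpne2 : p ≠ 2 := by rintro rfl; exact (Nat.not_odd_iff_even.2 (by decide)) hodd
  have hp3 : 3 ≤ p := by omega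
  set n := (p - 1) / 2 with hn
  have h2n : 2 * n = p - 1 := by
    obtain ⟨m, hm⟩ := hodd
    omega
  have hk2 : 2 * k ≤ p - 1 := by omega
  -- move to ZMod (p^2)
  have hcast : ((p : ℤ) ^ 2) = ((p ^ 2 : ℕ) : ℤ) := by push_cast; ring
  rw [hcast, ← ZMod.intCast_eq_intCast_iff]
  push_cast
  set R := ZMod (p ^ 2) with hR
  -- (2k)! is a unit
  have hunit : IsUnit (((2 * k)! : ℕ) : R) := by
    rw [ZMod.isUnit_iff_coprime]
    have hnd : ¬ p ∣ (2 * k)! := by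
      rw [hp.dvd_factorial]
      omega
    exact Nat.Coprime.pow_right _ (((hp.coprime_iff_not_dvd).2 hnd).symm)
  have hp0 : (p : R) ^ 2 = 0 := by
    have : ((p ^ 2 : ℕ) : R) = 0 := ZMod.natCast_self _
    push_cast at this
    exact this
  -- descending factorial
  have hA : (n + k).choose (2 * k) * (2 * k)! = ∏ i ∈ range (2 * k), (n + k - i) := by
    rw [← Nat.descFactorial_eq_prod_range, Nat.descFactorial_eq_factorial_mul_choose]
    ring
  -- termwise rewrite in R
  have hterm : ∀ i ∈ range (2 * k),
      (2 * ((n + k - i : ℕ) : R)) = (p : R) + 2 * k - (2 * i + 1) := by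
    intro i hi
    rw [mem_range] at hi
    have hnat : 2 * (n + k - i) + (2 * i + 1) = p + 2 * k := by omega
    have := congrArg (fun m : ℕ => (m : R)) hnat
    push_cast [R] at this
    linear_combination this
  have hsplit : ∏ i ∈ range (2 * k), ((p : R) + 2 * k - (2 * i + 1))
      = (∏ j ∈ range k, ((p : R) + (2 * j + 1))) *
        ∏ j ∈ range k, ((p : R) - (2 * j + 1)) := by
    have h2k : 2 * k = k + k := by ring
    rw [h2k, Finset.prod_range_add]
    congr 1
    · rw [← Finset.prod_range_reflect (fun j => (p : R) + (2 * j + 1)) k]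
      apply Finset.prod_congr rfl
      intro i hi
      rw [mem_range] at hi
      have hnat : 2 * (k - 1 - i) + 1 + (2 * i + 1) = 2 * k := by omega
      have := congrArg (fun m : ℕ => (m : R)) hnat
      push_cast [R] at this
      linear_combination -this
    · apply Finset.prod_congr rfl
      intro i _
      push_cast
      ring
  have hpair : (∏ j ∈ range k, ((p : R) + (2 * j + 1))) *
        (∏ j ∈ range k, ((p : R) - (2 * j + 1)))
      = (-1) ^ k * (∏ j ∈ range k, ((2 * j + 1 : ℕ) : R)) ^ 2 := by
    rw [← Finset.prod_mul_distrib]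
    have h1 : ∀ j ∈ range k,
        ((p : R) + (2 * j + 1)) * ((p : R) - (2 * j + 1))
          = (-1) * ((2 * j + 1 : ℕ) : R) ^ 2 := by
      intro j _
      push_cast [R]
      linear_combination hp0
    rw [Finset.prod_congr rfl h1, Finset.prod_mul_distrib, Finset.prod_const,
      ← Finset.prod_pow, Finset.card_range]
  -- main computation in R
  have key : (16 : R) ^ k * ((n + k).choose (2 * k) : ℕ) * (((2 * k)! : ℕ) : R)
      = (-1) ^ k * (((2 * k).choose k : ℕ) : R) * (((2 * k)! : ℕ) : R) := by
    have hAc : (((n + k).choose (2 * k) : ℕ) : R) * (((2 * k)! : ℕ) : R)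
        = ∏ i ∈ range (2 * k), ((n + k - i : ℕ) : R) := by
      rw [← Nat.cast_prod, ← hA, Nat.cast_mul]
    have hBc : (((2 * k).choose k : ℕ) : R) * (((2 * k)! : ℕ) : R)
        = 4 ^ k * (∏ j ∈ range k, ((2 * j + 1 : ℕ) : R)) ^ 2 := by
      rw [← Nat.cast_mul (α := R), central_binom_mul_fact]
      push_cast
      ring
    have hstep : (2 : R) ^ (2 * k) * ∏ i ∈ range (2 * k), ((n + k - i : ℕ) : R)
        = ∏ i ∈ range (2 * k), ((p : R) + 2 * k - (2 * i + 1)) := by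
      rw [← Finset.prod_congr rfl hterm, Finset.prod_mul_distrib, Finset.prod_const,
        Finset.card_range]
    calc (16 : R) ^ k * ((n + k).choose (2 * k) : ℕ) * (((2 * k)! : ℕ) : R)
        = 4 ^ k * ((2 : R) ^ (2 * k) *
            ((((n + k).choose (2 * k) : ℕ) : R) * (((2 * k)! : ℕ) : R))) := by
          have h16 : (16 : R) ^ k = 4 ^ k * 2 ^ (2 * k) := by
            rw [pow_mul, ← mul_pow]
            norm_num
          rw [h16]
          ring
      _ = 4 ^ k * ((-1) ^ k * (∏ j ∈ range k, ((2 * j + 1 : ℕ) : R)) ^ 2) := by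
          rw [hAc, hstep, hsplit, hpair]
      _ = (-1) ^ k * (((2 * k).choose k : ℕ) : R) * (((2 * k)! : ℕ) : R) := by
          rw [mul_assoc, hBc]
          ring
  exact hunit.mul_right_cancel key
end

section
/- Let p be an odd prime and n = (p-1)/2. For every integer k with 0 ≤ k ≤ n, (-1)^k · C(n,k) · C(n+k,k) ≡ C(2k,k)^2 / 16^k (mod p^2), where 16^k is invertible modulo p^2. -/
open Finset

private lemma desc_cast (n k : ℕ) (hk : k ≤ n) :
    ((n.choose k : ℤ) * (k.factorial : ℤ)) = ∏ j ∈ range k, ((n : ℤ) - j) := by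
  have h := Nat.descFactorial_eq_factorial_mul_choose n k
  rw [Nat.descFactorial_eq_prod_range] at h
  have : ((∏ i ∈ range k, (n - i) : ℕ) : ℤ) = ∏ j ∈ range k, ((n : ℤ) - j) := by
    push_cast
    refine Finset.prod_congr rfl fun j hj => ?_
    rw [Nat.cast_sub (le_of_lt (lt_of_lt_of_le (mem_range.mp hj) hk))]
  rw [← this, h]; push_cast; ring

private lemma asc_cast (n k : ℕ) :
    (((n + k).choose k : ℤ) * (k.factorial : ℤ)) = ∏ j ∈ range k, ((n : ℤ) + j + 1) := by
  rw [desc_cast (n + k) k (Nat.le_add_left k n)]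
  rw [← Finset.prod_range_reflect]
  push_cast
  refine Finset.prod_congr rfl fun j hj => ?_
  have hj' := mem_range.mp hj
  rw [Nat.cast_sub (by omega), Nat.cast_sub (by omega : 1 ≤ k)]
  push_cast; ring

private lemma central_fact (k : ℕ) :
    (((2 * k).choose k : ℤ) * (k.factorial : ℤ)) = 2 ^ k * ∏ j ∈ range k, (2 * (j : ℤ) + 1) := by
  have key : ∀ m : ℕ, ((2 * m).factorial : ℤ) =
      2 ^ m * (m.factorial : ℤ) * ∏ j ∈ range m, (2 * (j : ℤ) + 1) := by
    intro m
    induction m with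
    | zero => simp
    | succ m ih =>
      have h2 : 2 * (m + 1) = 2 * m + 1 + 1 := by ring
      rw [h2, Nat.factorial_succ, Nat.factorial_succ, Nat.factorial_succ,
        Finset.prod_range_succ]
      push_cast
      rw [ih]
      ring
  have h2 : ((2 * k).choose k : ℤ) * (k.factorial : ℤ) * (k.factorial : ℤ) =
      ((2 * k).factorial : ℤ) := by
    have := Nat.choose_mul_factorial_mul_factorial (by omega : k ≤ 2 * k)
    have h' : 2 * k - k = k := by omega
    rw [h'] at this
    exact_mod_cast congrArg (Nat.cast : ℕ → ℤ) this
  have hfac : (k.factorial : ℤ) ≠ 0 := by exact_mod_cast Nat.factorial_ne_zero k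
  refine mul_right_cancel₀ hfac ?_
  rw [h2, key k]
  ring

private lemma prod_modeq (p k : ℕ) :
    (∏ j ∈ range k, ((2 * (j : ℤ) + 1) ^ 2 - (p : ℤ) ^ 2))
      ≡ (∏ j ∈ range k, (2 * (j : ℤ) + 1) ^ 2) [ZMOD (p : ℤ) ^ 2] := by
  induction k with
  | zero => rfl
  | succ m ih =>
    rw [Finset.prod_range_succ, Finset.prod_range_succ]
    refine Int.ModEq.mul ih ?_
    have h0 : ((p : ℤ) ^ 2) ≡ 0 [ZMOD (p : ℤ) ^ 2] := Int.modEq_zero_iff_dvd.mpr dvd_rfl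
    have := (Int.ModEq.refl ((2 * (m : ℤ) + 1) ^ 2)).sub h0
    rwa [sub_zero] at this

theorem stmt_7 (p : ℕ) (hp : p.Prime) (hodd : Odd p) (k : ℕ)
    (hk : k ≤ (p - 1) / 2) :
    ((-1) ^ k * (((p - 1) / 2).choose k) * (((p - 1) / 2 + k).choose k) * 16 ^ k : ℤ) ≡
      ((2 * k).choose k : ℤ) ^ 2 [ZMOD (p : ℤ) ^ 2] := by
  set n := (p - 1) / 2 with hn
  obtain ⟨m, hm⟩ := hodd
  have hp2 : 2 ≤ p := hp.two_le
  have hpn : (p : ℤ) = 2 * (n : ℤ) + 1 := by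
    have : p = 2 * n + 1 := by omega
    exact_mod_cast congrArg (Nat.cast : ℕ → ℤ) this
  -- exact identity A
  have hA : ((-1) ^ k * ((n.choose k : ℤ)) * (((n + k).choose k : ℤ)) * 16 ^ k)
        * ((k.factorial : ℤ) * (k.factorial : ℤ))
      = 4 ^ k * ∏ j ∈ range k, ((2 * (j : ℤ) + 1) ^ 2 - (p : ℤ) ^ 2) := by
    have hfactor : ∀ j ∈ range k, ((2 * (j : ℤ) + 1) ^ 2 - (p : ℤ) ^ 2)
        = (-4) * (((n : ℤ) - j) * ((n : ℤ) + j + 1)) := by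
      intro j _
      rw [hpn]; ring
    rw [Finset.prod_congr rfl hfactor, Finset.prod_mul_distrib, Finset.prod_mul_distrib,
      Finset.prod_const, Finset.card_range, ← desc_cast n k hk, ← asc_cast n k]
    have h16 : ((-1 : ℤ)) ^ k * 16 ^ k = 4 ^ k * (-4) ^ k := by
      rw [← mul_pow, ← mul_pow]; norm_num
    linear_combination ((n.choose k : ℤ) * (k.factorial : ℤ) *
      (((n + k).choose k : ℤ) * (k.factorial : ℤ))) * h16
  -- exact identity B
  have hB : (((2 * k).choose k : ℤ)) ^ 2 * ((k.factorial : ℤ) * (k.factorial : ℤ))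
      = 4 ^ k * ∏ j ∈ range k, (2 * (j : ℤ) + 1) ^ 2 := by
    have h := central_fact k
    have hsq : (((2 * k).choose k : ℤ) * (k.factorial : ℤ)) ^ 2
        = (2 ^ k * ∏ j ∈ range k, (2 * (j : ℤ) + 1)) ^ 2 := by rw [h]
    rw [mul_pow, mul_pow, ← Finset.prod_pow] at hsq
    have h4 : ((2 : ℤ) ^ k) ^ 2 = 4 ^ k := by
      rw [← pow_mul, mul_comm k 2, pow_mul]; norm_num
    rw [h4] at hsq
    linear_combination hsq
  -- combine
  have hmain : (((-1) ^ k * ((n.choose k : ℤ)) * (((n + k).choose k : ℤ)) * 16 ^ k))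
        * ((k.factorial : ℤ) * (k.factorial : ℤ))
      ≡ (((2 * k).choose k : ℤ)) ^ 2 * ((k.factorial : ℤ) * (k.factorial : ℤ))
        [ZMOD (p : ℤ) ^ 2] := by
    rw [hA, hB]
    exact (Int.ModEq.refl (4 ^ k)).mul (prod_modeq p k)
  -- cancel (k!)^2
  have hcop : Int.gcd ((p : ℤ) ^ 2) ((k.factorial : ℤ) * (k.factorial : ℤ)) = 1 := by
    have hkp : Nat.Coprime (k.factorial) p := by
      refine Nat.Coprime.symm ((Nat.Prime.coprime_iff_not_dvd hp).mpr ?_)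
      intro hdvd
      have := (Nat.Prime.dvd_factorial hp).mp hdvd
      omega
    have hcp : Nat.Coprime (p ^ 2) (k.factorial * k.factorial) :=
      (Nat.Coprime.mul_right hkp.symm hkp.symm).pow_left 2
    have hcast : ((p : ℤ) ^ 2) = ((p ^ 2 : ℕ) : ℤ) := by push_cast; ring
    have hcast2 : ((k.factorial : ℤ) * (k.factorial : ℤ))
        = ((k.factorial * k.factorial : ℕ) : ℤ) := by push_cast; ring
    rw [hcast, hcast2, Int.gcd_natCast_natCast]
    exact hcp
  have hpos : (0 : ℤ) < (p : ℤ) ^ 2 := by positivity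
  have hfin := Int.ModEq.cancel_right_div_gcd hpos hmain
  rw [hcop] at hfin
  simpa using hfin
end

section
/- Let p be an odd prime, n = (p-1)/2, and let a_0, a_1, ..., a_{p-1} be p-adic integers. Then ∑_{k=0}^{p-1} C(2k,k)^2 · a_k / 16^k ≡ ∑_{k=0}^{n} (-1)^k · a_k · C(n,k) · C(n+k,k) (mod p^2). -/
open Finset

private lemma factA8 (k : ℕ) :
    (2 * k).factorial = 2 ^ k * k.factorial * ∏ j ∈ range k, (2 * j + 1) := by
  induction k with
  | zero => simp
  | succ k ih =>
    have h2 : 2 * (k + 1) = (2 * k + 1) + 1 := by ring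
    rw [h2, Nat.factorial_succ, Nat.factorial_succ, Nat.factorial_succ, ih, prod_range_succ]
    ring

private lemma factB8 (n : ℕ) : ∀ k, k ≤ n →
    (4 : ℤ) ^ k * (k.factorial : ℤ) ^ 2 * (n.choose k : ℤ) * ((n + k).choose k : ℤ) =
      ∏ j ∈ range k, ((2 * (n : ℤ) + 1) ^ 2 - (2 * (j : ℤ) + 1) ^ 2) := by
  intro k
  induction k with
  | zero => intro _; simp
  | succ k ih =>
    intro hk
    have hk' : k ≤ n := Nat.le_of_succ_le hk
    have h1 : (n.choose (k + 1) : ℤ) * ((k : ℤ) + 1) = (n.choose k : ℤ) * ((n : ℤ) - k) := by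
      have := Nat.choose_succ_right_eq n k
      zify [hk'] at this
      linarith
    have h2 : ((n : ℤ) + k + 1) * ((n + k).choose k : ℤ) =
        ((n + k + 1).choose (k + 1) : ℤ) * ((k : ℤ) + 1) := by
      have := Nat.add_one_mul_choose_eq (n + k) k
      zify at this
      push_cast at this
      linarith
    have ihk := ih hk'
    rw [prod_range_succ, ← ihk, show n + (k + 1) = n + k + 1 from by omega]
    push_cast [Nat.factorial_succ]
    linear_combination
      (4 * 4 ^ k * ((k.factorial : ℤ)) ^ 2 * ((k : ℤ) + 1) * ((n + k + 1).choose (k + 1) : ℤ)) * h1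
      - (4 * (4 : ℤ) ^ k * ((k.factorial : ℤ)) ^ 2 * (n.choose k : ℤ) * ((n : ℤ) - k)) * h2

private lemma factC8 (p k : ℕ) :
    ((p : ℤ)) ^ 2 ∣ (∏ j ∈ range k, (2 * (j : ℤ) + 1)) ^ 2 -
      ∏ j ∈ range k, ((2 * (j : ℤ) + 1) ^ 2 - (p : ℤ) ^ 2) := by
  have h0 : ((((∏ j ∈ range k, (2 * (j : ℤ) + 1)) ^ 2 -
      ∏ j ∈ range k, ((2 * (j : ℤ) + 1) ^ 2 - (p : ℤ) ^ 2) : ℤ)) : ZMod (p ^ 2)) = 0 := by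
    push_cast
    have hp : ((p : ZMod (p ^ 2))) ^ 2 = 0 := by
      rw [← Nat.cast_pow, ZMod.natCast_self]
    rw [hp]
    rw [← Finset.prod_pow]
    simp
  have := (ZMod.intCast_zmod_eq_zero_iff_dvd _ (p ^ 2)).mp h0
  simpa using this

private lemma norm_int_eq_one8 (p : ℕ) [Fact p.Prime] {m : ℤ} (h : ¬ (p : ℤ) ∣ m) :
    ‖(m : ℚ_[p])‖ = 1 :=
  le_antisymm (Padic.norm_int_le_one m)
    (le_of_not_gt fun hlt => h ((Padic.norm_intCast_lt_one_iff).mp hlt))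

theorem stmt_8 (p : ℕ) [Fact p.Prime] (hodd : Odd p) (a : ℕ → ℤ_[p]) :
    ‖(∑ k ∈ Finset.range p,
          ((2 * k).choose k : ℚ_[p]) ^ 2 * (a k : ℚ_[p]) / 16 ^ k) -
        ∑ k ∈ Finset.range ((p - 1) / 2 + 1),
          (-1) ^ k * (a k : ℚ_[p]) * (((p - 1) / 2).choose k) *
            (((p - 1) / 2 + k).choose k)‖ ≤ (p : ℝ) ^ (-2 : ℤ) := by
  have hp := (Fact.out : p.Prime)
  set n := (p - 1) / 2 with hn
  have hpn : p = 2 * n + 1 := by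
    obtain ⟨m, hm⟩ := hodd
    have := hp.two_le
    omega
  have hnp : n + 1 ≤ p := by omega
  have hCpos : (0 : ℝ) ≤ (p : ℝ) ^ (-2 : ℤ) := by
    have : (0 : ℝ) < p := by exact_mod_cast hp.pos
    positivity
  have h16n : ‖(16 : ℚ_[p])‖ = 1 := by
    have hd : ¬ (p : ℤ) ∣ 16 := by
      intro h
      have h' : p ∣ 2 ^ 4 := by exact_mod_cast h
      have := ((Nat.prime_dvd_prime_iff_eq hp Nat.prime_two).mp (hp.dvd_of_dvd_pow h'))
      omega
    have := norm_int_eq_one8 p hd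
    simpa using this
  -- per-term bound for k ≤ n
  have keyD : ∀ k, k ≤ n →
      ‖((2 * k).choose k : ℚ_[p]) ^ 2 / 16 ^ k -
        (-1) ^ k * (n.choose k : ℚ_[p]) * ((n + k).choose k : ℚ_[p])‖ ≤ (p : ℝ) ^ (-2 : ℤ) := by
    intro k hk
    have hkp : k < p := by omega
    have hndvd : ¬ (p : ℤ) ∣ (4 ^ k * (k.factorial : ℤ) ^ 2) := by
      intro hdvd
      rcases (Int.Prime.dvd_mul' (by exact_mod_cast hp) hdvd) with h | h
      · have h4 : (p : ℤ) ∣ 4 := Int.Prime.dvd_pow' (by exact_mod_cast hp) h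
        have h4' : p ∣ 2 ^ 2 := by exact_mod_cast h4
        have := ((Nat.prime_dvd_prime_iff_eq hp Nat.prime_two).mp (hp.dvd_of_dvd_pow h4'))
        omega
      · have hf1 : (p : ℤ) ∣ (k.factorial : ℤ) := Int.Prime.dvd_pow' (by exact_mod_cast hp) h
        have hf2 : p ∣ k.factorial := by exact_mod_cast hf1
        have := (Nat.Prime.dvd_factorial hp).mp hf2
        omega
    set u : ℚ_[p] := ((4 ^ k * (k.factorial : ℤ) ^ 2 : ℤ) : ℚ_[p]) with hudef
    have hu : ‖u‖ = 1 := norm_int_eq_one8 p hndvd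
    have hupush : u = 4 ^ k * (k.factorial : ℚ_[p]) ^ 2 := by
      rw [hudef]; push_cast; ring
    set c : ℚ_[p] := ((2 * k).choose k : ℚ_[p]) with hc
    set f : ℚ_[p] := (k.factorial : ℚ_[p]) with hf
    set Pq : ℚ_[p] := ∏ j ∈ range k, (2 * (j : ℚ_[p]) + 1) with hPq
    have hfne : f ≠ 0 := by
      rw [hf]; exact_mod_cast Nat.factorial_ne_zero k
    have h16ne : ((16 : ℚ_[p]) ^ k) ≠ 0 := pow_ne_zero _ (by norm_num)
    have hcf : c * f = 2 ^ k * Pq := by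
      have hfac : ((2 * k).factorial : ℚ_[p]) = 2 ^ k * f * Pq := by
        have h := factA8 k
        rw [hPq, hf]
        push_cast [h]
        ring
      have hch : c * f * f = ((2 * k).factorial : ℚ_[p]) := by
        have h := Nat.choose_mul_factorial_mul_factorial (show k ≤ 2 * k by omega)
        rw [show 2 * k - k = k from by omega] at h
        rw [hc, hf]
        exact_mod_cast h
      apply mul_right_cancel₀ hfne
      rw [hch, hfac]; ring
    set Qq : ℚ_[p] := ∏ j ∈ range k, ((2 * (j : ℚ_[p]) + 1) ^ 2 - (p : ℚ_[p]) ^ 2) with hQq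
    have hB : (4 : ℚ_[p]) ^ k * f ^ 2 * (n.choose k : ℚ_[p]) * ((n + k).choose k : ℚ_[p]) =
        ∏ j ∈ range k, ((p : ℚ_[p]) ^ 2 - (2 * (j : ℚ_[p]) + 1) ^ 2) := by
      have h := factB8 n k hk
      rw [show (2 * (n : ℤ) + 1) = (p : ℤ) from by push_cast [hpn]; ring] at h
      have h2 := congrArg (fun m : ℤ => (m : ℚ_[p])) h
      push_cast at h2
      rw [hf]
      push_cast
      convert h2 using 2
    have hY : u * ((-1) ^ k * (n.choose k : ℚ_[p]) * ((n + k).choose k : ℚ_[p])) = Qq := by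
      have hneg : Qq = (-1 : ℚ_[p]) ^ k *
          ∏ j ∈ range k, ((p : ℚ_[p]) ^ 2 - (2 * (j : ℚ_[p]) + 1) ^ 2) := by
        rw [hQq]
        calc ∏ j ∈ range k, ((2 * (j : ℚ_[p]) + 1) ^ 2 - (p : ℚ_[p]) ^ 2)
            = ∏ j ∈ range k, (-1 : ℚ_[p]) * ((p : ℚ_[p]) ^ 2 - (2 * (j : ℚ_[p]) + 1) ^ 2) :=
              prod_congr rfl fun j _ => by ring
          _ = (∏ _j ∈ range k, (-1 : ℚ_[p])) *
              ∏ j ∈ range k, ((p : ℚ_[p]) ^ 2 - (2 * (j : ℚ_[p]) + 1) ^ 2) := prod_mul_distrib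
          _ = (-1 : ℚ_[p]) ^ k *
              ∏ j ∈ range k, ((p : ℚ_[p]) ^ 2 - (2 * (j : ℚ_[p]) + 1) ^ 2) := by
              rw [prod_const, card_range]
      rw [hneg, ← hB, hupush]
      ring
    have hX : u * (c ^ 2 / 16 ^ k) = Pq ^ 2 := by
      rw [mul_div_assoc', div_eq_iff h16ne, hupush]
      have h16eq : (16 : ℚ_[p]) ^ k = (4 : ℚ_[p]) ^ k * 4 ^ k := by
        rw [← mul_pow]; norm_num
      have h4eq : (4 : ℚ_[p]) ^ k = (2 : ℚ_[p]) ^ k * 2 ^ k := by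
        rw [← mul_pow]; norm_num
      rw [h16eq, h4eq]
      linear_combination ((2 : ℚ_[p]) ^ k * 2 ^ k * (c * f + 2 ^ k * Pq)) * hcf
    have hkey : u * (c ^ 2 / 16 ^ k -
        (-1) ^ k * (n.choose k : ℚ_[p]) * ((n + k).choose k : ℚ_[p])) =
        (((∏ j ∈ range k, (2 * (j : ℤ) + 1)) ^ 2 -
          ∏ j ∈ range k, ((2 * (j : ℤ) + 1) ^ 2 - (p : ℤ) ^ 2) : ℤ) : ℚ_[p]) := by
      have hcast : (((∏ j ∈ range k, (2 * (j : ℤ) + 1)) ^ 2 -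
          ∏ j ∈ range k, ((2 * (j : ℤ) + 1) ^ 2 - (p : ℤ) ^ 2) : ℤ) : ℚ_[p]) = Pq ^ 2 - Qq := by
        rw [hPq, hQq]
        push_cast
        ring
      rw [hcast, mul_sub, hX, hY]
    calc ‖c ^ 2 / 16 ^ k - (-1) ^ k * (n.choose k : ℚ_[p]) * ((n + k).choose k : ℚ_[p])‖
        = ‖u * (c ^ 2 / 16 ^ k -
            (-1) ^ k * (n.choose k : ℚ_[p]) * ((n + k).choose k : ℚ_[p]))‖ := by
          rw [norm_mul, hu, one_mul]
      _ ≤ (p : ℝ) ^ (-2 : ℤ) := by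
          rw [hkey]
          have hdvd := factC8 p k
          have := (Padic.norm_int_le_pow_iff_dvd
            ((∏ j ∈ range k, (2 * (j : ℤ) + 1)) ^ 2 -
              ∏ j ∈ range k, ((2 * (j : ℤ) + 1) ^ 2 - (p : ℤ) ^ 2)) 2).mpr
            (by exact_mod_cast hdvd)
          simpa using this
  -- per-term bound for n < k < p
  have keyE : ∀ k, n < k → k < p →
      ‖((2 * k).choose k : ℚ_[p]) ^ 2 * (a k : ℚ_[p]) / 16 ^ k‖ ≤ (p : ℝ) ^ (-2 : ℤ) := by
    intro k hk1 hk2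
    have hdvd : p ∣ (2 * k).choose k := by
      have := Nat.Prime.dvd_choose_add hp hk2 hk2 (by omega)
      rwa [show k + k = 2 * k from by omega] at this
    have hnc : ‖((2 * k).choose k : ℚ_[p])‖ ≤ (p : ℝ) ^ (-1 : ℤ) := by
      have hd1 : ((p : ℤ)) ^ 1 ∣ ((2 * k).choose k : ℤ) := by
        rw [pow_one]; exact_mod_cast hdvd
      have := (Padic.norm_int_le_pow_iff_dvd ((2 * k).choose k : ℤ) 1).mpr
        (by exact_mod_cast hd1)
      simpa using this
    have ha : ‖(a k : ℚ_[p])‖ ≤ 1 := by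
      rw [PadicInt.padic_norm_e_of_padicInt]
      exact PadicInt.norm_le_one _
    rw [norm_div, norm_mul, norm_pow, norm_pow, h16n, one_pow, div_one]
    have h1 : ‖((2 * k).choose k : ℚ_[p])‖ ^ 2 ≤ ((p : ℝ) ^ (-1 : ℤ)) ^ 2 := by
      apply pow_le_pow_left₀ (norm_nonneg _) hnc
    have h2 : ((p : ℝ) ^ (-1 : ℤ)) ^ 2 = (p : ℝ) ^ (-2 : ℤ) := by
      rw [← zpow_natCast ((p : ℝ) ^ (-1 : ℤ)), ← zpow_mul]
      norm_num
    calc ‖((2 * k).choose k : ℚ_[p])‖ ^ 2 * ‖(a k : ℚ_[p])‖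
        ≤ ((p : ℝ) ^ (-1 : ℤ)) ^ 2 * 1 :=
          mul_le_mul h1 ha (norm_nonneg _) (by positivity)
      _ = (p : ℝ) ^ (-2 : ℤ) := by rw [mul_one, h2]
  -- assembly
  set g : ℕ → ℚ_[p] := fun k => if k < n + 1 then
      (-1) ^ k * (a k : ℚ_[p]) * (n.choose k : ℚ_[p]) * ((n + k).choose k : ℚ_[p]) else 0 with hg
  have hsum2 : (∑ k ∈ range (n + 1),
      (-1) ^ k * (a k : ℚ_[p]) * (n.choose k : ℚ_[p]) * ((n + k).choose k : ℚ_[p])) =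
      ∑ k ∈ range p, g k := by
    rw [← Finset.sum_subset (Finset.range_subset_range.mpr hnp)
      (fun x _ hx => by
        have hxn : ¬ x < n + 1 := fun h => hx (Finset.mem_range.mpr h)
        simp only [hg, if_neg hxn])]
    exact Finset.sum_congr rfl fun k hk => by
      simp only [hg]
      exact (if_pos (Finset.mem_range.mp hk)).symm
  rw [hsum2, ← Finset.sum_sub_distrib]
  apply IsUltrametricDist.norm_sum_le_of_forall_le_of_nonneg hCpos
  intro k hk
  have hkp : k < p := Finset.mem_range.mp hk
  by_cases hkn : k < n + 1
  · have hterm : ((2 * k).choose k : ℚ_[p]) ^ 2 * (a k : ℚ_[p]) / 16 ^ k - g k =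
        (a k : ℚ_[p]) * (((2 * k).choose k : ℚ_[p]) ^ 2 / 16 ^ k -
          (-1) ^ k * (n.choose k : ℚ_[p]) * ((n + k).choose k : ℚ_[p])) := by
      simp only [hg, if_pos hkn]; ring
    rw [hterm, norm_mul]
    have ha : ‖(a k : ℚ_[p])‖ ≤ 1 := by
      rw [PadicInt.padic_norm_e_of_padicInt]
      exact PadicInt.norm_le_one _
    calc ‖(a k : ℚ_[p])‖ * ‖_‖ ≤ 1 * ((p : ℝ) ^ (-2 : ℤ)) :=
          mul_le_mul ha (keyD k (by omega)) (norm_nonneg _) (by norm_num)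
      _ = (p : ℝ) ^ (-2 : ℤ) := one_mul _
  · have : g k = 0 := by simp only [hg, if_neg hkn]
    rw [this, sub_zero]
    exact keyE k (by omega) hkp
end

section
/- For any prime p > 3, ∑_{k=0}^{p-1} C(2k,k)^2 / 16^k ≡ (-1)^{(p-1)/2} (mod p^2), i.e., the sum is congruent to the Legendre symbol (-1/p) modulo p^2. -/
def pcong (p k : ℕ) (a b : ℚ) : Prop := ∃ c : ℚ, ¬ p ∣ c.den ∧ a - b = (p : ℚ) ^ k * c

open Finset Polynomial

/-- product of first k odd numbers -/
def oddProd (k : ℕ) : ℕ := ∏ j ∈ Finset.range k, (2 * j + 1)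

lemma oddProd_succ (k : ℕ) : oddProd (k + 1) = oddProd k * (2 * k + 1) :=
  Finset.prod_range_succ _ _

lemma factorial_two_mul (k : ℕ) : (2 * k).factorial = 2 ^ k * k.factorial * oddProd k := by
  induction k with
  | zero => simp [oddProd]
  | succ k ih =>
    have h : 2 * (k + 1) = (2 * k + 1) + 1 := by ring
    rw [h, Nat.factorial_succ, Nat.factorial_succ, ih, oddProd_succ, Nat.factorial_succ]
    ring

lemma central_mul_factorial (k : ℕ) : (2 * k).choose k * k.factorial = 2 ^ k * oddProd k := by
  have h := Nat.choose_mul_factorial_mul_factorial (Nat.le_mul_of_pos_left k (by norm_num) : k ≤ 2 * k)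
  rw [show 2 * k - k = k by omega] at h
  have h2 : (2 * k).choose k * k.factorial * k.factorial
      = 2 ^ k * oddProd k * k.factorial := by
    rw [h, factorial_two_mul]; ring
  exact Nat.mul_right_cancel k.factorial_pos h2

section CommRing
variable {R : Type*} [CommRing R]

/-- descending product x(x-1)...(x-k+1) -/
def dpr (x : R) (k : ℕ) : R := ∏ j ∈ Finset.range k, (x - j)

lemma dpr_zero (x : R) : dpr x 0 = 1 := by simp [dpr]

lemma dpr_succ (x : R) (k : ℕ) : dpr x (k + 1) = dpr x k * (x - k) :=
  Finset.prod_range_succ _ _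

lemma smeval_descPochhammer (x : R) (k : ℕ) :
    (descPochhammer ℤ k).smeval x = dpr x k := by
  induction k with
  | zero => simp [descPochhammer_zero, smeval_one, dpr_zero]
  | succ k ih =>
    rw [descPochhammer_succ_right, smeval_mul, ih, smeval_sub, smeval_X, smeval_natCast,
      dpr_succ, pow_one, pow_zero, nsmul_eq_mul, mul_one]

lemma dpr_neg_one (n : ℕ) : dpr (-1 : R) n = (-1) ^ n * n.factorial := by
  induction n with
  | zero => simp [dpr_zero]
  | succ n ih =>
    rw [dpr_succ, ih, Nat.factorial_succ, pow_succ]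
    push_cast
    ring

lemma dpr_perturb (e : R) (he : e * e = 0) (x c : R) (k : ℕ) :
    ∃ t, dpr (x - e * c) k = dpr x k + e * t := by
  induction k with
  | zero => exact ⟨0, by simp [dpr_zero]⟩
  | succ k ih =>
    obtain ⟨t, ht⟩ := ih
    refine ⟨t * (x - k) - dpr x k * c, ?_⟩
    rw [dpr_succ, dpr_succ, ht]
    linear_combination (-(t * c)) * he

lemma two_pow_dpr (x : R) (h : x + x = -1) (k : ℕ) :
    2 ^ k * dpr x k = (-1) ^ k * (oddProd k : R) := by
  induction k with
  | zero => simp [dpr_zero, oddProd]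
  | succ k ih =>
    rw [dpr_succ, oddProd_succ, pow_succ, pow_succ]
    push_cast
    linear_combination (2 * (x - (k : R))) * ih + ((-1) ^ k * (oddProd k : R)) * h

/-- Chu-Vandermonde for dpr -/
lemma dpr_add (x y : R) (n : ℕ) :
    dpr (x + y) n = ∑ k ∈ Finset.range (n + 1), (n.choose k : R) * (dpr x k * dpr y (n - k)) := by
  have h := Ring.descPochhammer_smeval_add (R := R) (r := x) (s := y) n (mul_comm x y)
  rw [smeval_descPochhammer] at h
  rw [h, Finset.Nat.sum_antidiagonal_eq_sum_range_succ_mk]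
  exact Finset.sum_congr rfl fun k hk => by rw [smeval_descPochhammer, smeval_descPochhammer]

end CommRing

lemma dpr_natCast {R : Type*} [CommRing R] (m k : ℕ) (h : k ≤ m) :
    dpr ((m : ℕ) : R) k = (m.descFactorial k : R) := by
  rw [Nat.descFactorial_eq_prod_range, Nat.cast_prod, dpr]
  refine Finset.prod_congr rfl fun i hi => ?_
  have : i ≤ m := le_trans (Nat.le_of_lt_succ (Nat.lt_succ_of_lt (Finset.mem_range.mp hi))) h
  rw [Nat.cast_sub this]

lemma core_zmod (p : ℕ) (hp : p.Prime) (hp3 : 3 < p) :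
    ((∑ k ∈ Finset.range p, ((2 * k).choose k : ℤ) ^ 2 * 16 ^ (p - 1 - k)
      - (-1) ^ ((p - 1) / 2) * 16 ^ (p - 1) : ℤ) : ZMod (p ^ 2)) = 0 := by
  haveI : NeZero (p ^ 2) := ⟨pow_ne_zero 2 hp.pos.ne'⟩
  set R := ZMod (p ^ 2) with hR
  set m := (p - 1) / 2 with hmdef
  obtain ⟨cp, hcp⟩ : Odd p := hp.odd_of_ne_two (by omega)
  have hm : 2 * m + 1 = p := by omega
  have hmp : m < p := by omega
  -- p^2 = 0 in R
  have hp2zero : (p : R) * (p : R) = 0 := by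
    have h0 : ((p ^ 2 : ℕ) : R) = 0 := ZMod.natCast_self _
    push_cast at h0
    linear_combination h0
  -- units
  have hufac : ∀ k : ℕ, k < p → IsUnit ((k.factorial : R)) := by
    intro k hk
    rw [ZMod.isUnit_iff_coprime]
    refine Nat.Coprime.pow_right 2 ?_
    exact (Nat.coprime_comm.mp ((Nat.Prime.coprime_iff_not_dvd hp).mpr
      (fun hd => absurd ((Nat.Prime.dvd_factorial hp).mp hd) (by omega))))
  have hu2 : IsUnit (2 : R) := by
    have : ((2 : ℕ) : R) = (2 : R) := by push_cast; ring
    rw [← this, ZMod.isUnit_iff_coprime]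
    refine Nat.Coprime.pow_right 2 ?_
    exact Nat.coprime_comm.mp ((Nat.Prime.coprime_iff_not_dvd hp).mpr
      (fun hd => absurd (Nat.le_of_dvd two_pos hd) (by omega)))
  have hu16 : IsUnit (16 : R) := by
    have : ((2 : R) ^ 4) = 16 := by norm_num
    rw [← this]; exact hu2.pow 4
  set z : R := (2 : R)⁻¹ with hzdef
  have hz : (2 : R) * z = 1 := ZMod.mul_inv_of_unit _ hu2
  set v : R := (16 : R)⁻¹ with hvdef
  have hv : (16 : R) * v = 1 := ZMod.mul_inv_of_unit _ hu16
  set x : R := (m : R) - (p : R) * z with hxdef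
  have h2x : x + x = -1 := by
    have hcast : ((2 * m + 1 : ℕ) : R) = (p : R) := by rw [hm]
    push_cast +zetaDelta at hcast
    rw [hxdef]
    linear_combination hcast - (p : R) * hz
  set b : ℕ → R := fun k => dpr x k * (k.factorial : R)⁻¹ with hbdef
  have hbinv : ∀ k : ℕ, k ≤ m → ((k.factorial : R) * (k.factorial : R)⁻¹ = 1) :=
    fun k hk => ZMod.mul_inv_of_unit _ (hufac k (lt_of_le_of_lt hk hmp))
  -- b k = choose + p * t
  have hbk : ∀ k : ℕ, k ≤ m → ∃ t : R, b k = (m.choose k : R) + (p : R) * t := by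
    intro k hk
    obtain ⟨t, ht⟩ := dpr_perturb (p : R) hp2zero ((m : ℕ) : R) z k
    refine ⟨t * (k.factorial : R)⁻¹, ?_⟩
    have hdm : dpr ((m : ℕ) : R) k = (m.descFactorial k : R) := dpr_natCast m k hk
    have hdf : (m.descFactorial k : R) = (k.factorial : R) * (m.choose k : R) := by
      rw [Nat.descFactorial_eq_factorial_mul_choose]; push_cast +zetaDelta; ring
    have hx' : dpr x k = (k.factorial : R) * (m.choose k : R) + (p : R) * t := by
      rw [hxdef] at *; rw [ht, hdm, hdf]
    show dpr x k * (k.factorial : R)⁻¹ = _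
    rw [hx']
    linear_combination (m.choose k : R) * hbinv k hk
  -- symmetry difference is p-divisible, square is zero
  have hsq0 : ∀ k : ℕ, k ≤ m → (b k - b (m - k)) ^ 2 = 0 := by
    intro k hk
    obtain ⟨t1, ht1⟩ := hbk k hk
    obtain ⟨t2, ht2⟩ := hbk (m - k) (Nat.sub_le m k)
    rw [ht1, ht2, Nat.choose_symm hk]
    linear_combination ((t1 - t2) ^ 2) * hp2zero
  set S1 : R := ∑ k ∈ Finset.range (m + 1), b k ^ 2 with hS1def
  set S2 : R := ∑ k ∈ Finset.range (m + 1), b k * b (m - k) with hS2def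
  have hrefl : ∑ k ∈ Finset.range (m + 1), (b k ^ 2 - b k * b (m - k))
      = ∑ k ∈ Finset.range (m + 1), (b (m - k) ^ 2 - b (m - k) * b k) := by
    rw [← Finset.sum_range_reflect]
    refine Finset.sum_congr rfl fun j hj => ?_
    have hj' : j ≤ m := Nat.le_of_lt_succ (Finset.mem_range.mp hj)
    rw [show m + 1 - 1 - j = m - j by omega, Nat.sub_sub_self hj']
  have hS1S2 : S1 = S2 := by
    have e1 : S1 - S2 = ∑ k ∈ Finset.range (m + 1), (b k ^ 2 - b k * b (m - k)) := by
      rw [hS1def, hS2def, Finset.sum_sub_distrib]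
    have h2d : (2 : R) * (S1 - S2) = (2 : R) * 0 := by
      rw [mul_zero]
      calc (2 : R) * (S1 - S2)
          = (∑ k ∈ Finset.range (m + 1), (b k ^ 2 - b k * b (m - k)))
            + ∑ k ∈ Finset.range (m + 1), (b (m - k) ^ 2 - b (m - k) * b k) := by
            rw [← hrefl, ← e1]; ring
        _ = ∑ k ∈ Finset.range (m + 1),
            ((b k ^ 2 - b k * b (m - k)) + (b (m - k) ^ 2 - b (m - k) * b k)) := by
            rw [Finset.sum_add_distrib]
        _ = ∑ k ∈ Finset.range (m + 1), (b k - b (m - k)) ^ 2 := by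
            refine Finset.sum_congr rfl fun k hk => by ring
        _ = 0 := by
            refine Finset.sum_eq_zero fun k hk => hsq0 k (Nat.le_of_lt_succ (Finset.mem_range.mp hk))
    exact sub_eq_zero.mp (hu2.mul_left_cancel h2d)
  have hufacm : IsUnit ((m.factorial : R)) := hufac m hmp
  -- dpr x k = b k * k!
  have hdb : ∀ k : ℕ, k ≤ m → dpr x k = b k * (k.factorial : R) := by
    intro k hk
    show dpr x k = dpr x k * (k.factorial : R)⁻¹ * (k.factorial : R)
    linear_combination (-(dpr x k)) * hbinv k hk
  have hS2 : S2 = (-1) ^ m := by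
    have hV := dpr_add x x m
    rw [h2x, dpr_neg_one] at hV
    have hV2 : ((-1 : R)) ^ m * (m.factorial : R) = (m.factorial : R) * S2 := by
      rw [hV, hS2def, Finset.mul_sum]
      refine Finset.sum_congr rfl fun k hk => ?_
      have hk' : k ≤ m := Nat.le_of_lt_succ (Finset.mem_range.mp hk)
      have hfac : ((m.choose k : ℕ) : R) * (k.factorial : R) * ((m - k).factorial : R)
          = (m.factorial : R) := by
        have := Nat.choose_mul_factorial_mul_factorial hk'
        push_cast +zetaDelta [← this]; ring
      rw [hdb k hk', hdb (m - k) (Nat.sub_le m k)]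
      linear_combination (b k * b (m - k)) * hfac
    have := hufacm.mul_left_cancel
      (show (m.factorial : R) * ((-1) ^ m) = (m.factorial : R) * S2 by
        rw [← hV2]; ring)
    exact this.symm
  have hS1 : S1 = (-1) ^ m := hS1S2.trans hS2
  -- each term for k ≤ m
  have hterm : ∀ k : ℕ, k ≤ m → ((2 * k).choose k : R) ^ 2 * v ^ k = b k ^ 2 := by
    intro k hk
    have hone : ((-1 : R)) ^ k * (-1) ^ k = 1 := by
      rw [← pow_add]; exact Even.neg_one_pow ⟨k, rfl⟩
    have htp := two_pow_dpr x h2x k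
    have hok : ((oddProd k : ℕ) : R) = (-1) ^ k * (2 ^ k * dpr x k) := by
      rw [htp, ← mul_assoc, hone, one_mul]
    have hcast : ((2 * k).choose k : R) * (k.factorial : R) = 2 ^ k * (oddProd k : R) := by
      have h := congrArg (fun n : ℕ => (n : R)) (central_mul_factorial k)
      push_cast +zetaDelta at h
      exact h
    have h4 : (4 : R) ^ k = 2 ^ k * 2 ^ k := by rw [← mul_pow]; norm_num
    have hek : ((2 * k).choose k : R) * (k.factorial : R) = (-1) ^ k * 4 ^ k * dpr x k := by
      rw [hcast, hok, h4]; ring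
    have h16 : (16 : R) ^ k = 4 ^ k * 4 ^ k := by rw [← mul_pow]; norm_num
    have hsq : ((2 * k).choose k : R) ^ 2 * (k.factorial : R) ^ 2
        = 16 ^ k * (dpr x k) ^ 2 := by
      rw [h16]
      linear_combination (((2 * k).choose k : R) * (k.factorial : R)
        + (-1) ^ k * 4 ^ k * dpr x k) * hek
        + (4 ^ k * 4 ^ k * (dpr x k) ^ 2) * hone
    have hki2 : (k.factorial : R) ^ 2 * ((k.factorial : R)⁻¹) ^ 2 = 1 := by
      rw [← mul_pow, hbinv k hk, one_pow]
    have h16v : (16 : R) ^ k * v ^ k = 1 := by rw [← mul_pow, hv, one_pow]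
    show _ = (dpr x k * (k.factorial : R)⁻¹) ^ 2
    calc ((2 * k).choose k : R) ^ 2 * v ^ k
        = (((2 * k).choose k : R) ^ 2 * (k.factorial : R) ^ 2)
          * ((k.factorial : R)⁻¹) ^ 2 * v ^ k := by
          linear_combination (-(((2 * k).choose k : R) ^ 2 * v ^ k)) * hki2
      _ = (16 ^ k * v ^ k) * ((dpr x k * (k.factorial : R)⁻¹) ^ 2) := by
          rw [hsq]; ring
      _ = (dpr x k * (k.factorial : R)⁻¹) ^ 2 := by rw [h16v, one_mul]
  -- tail vanishes
  have htail : ∀ k ∈ Finset.Ico (m + 1) p, ((2 * k).choose k : R) ^ 2 * v ^ k = 0 := by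
    intro k hk
    obtain ⟨hk1, hk2⟩ := Finset.mem_Ico.mp hk
    have hdvd : p ∣ (2 * k).choose k :=
      Nat.Prime.dvd_choose hp hk2 (by omega) (by omega)
    obtain ⟨t, ht⟩ := hdvd
    rw [ht]
    push_cast +zetaDelta
    linear_combination ((t : R) ^ 2 * v ^ k) * hp2zero
  -- full sum
  have hfull : ∑ k ∈ Finset.range p, ((2 * k).choose k : R) ^ 2 * v ^ k = (-1) ^ m := by
    have hsplit : (∑ k ∈ Finset.Ico 0 (m + 1), ((2 * k).choose k : R) ^ 2 * v ^ k)
        + ∑ k ∈ Finset.Ico (m + 1) p, ((2 * k).choose k : R) ^ 2 * v ^ k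
        = ∑ k ∈ Finset.Ico 0 p, ((2 * k).choose k : R) ^ 2 * v ^ k :=
      Finset.sum_Ico_consecutive _ (by omega) (by omega)
    rw [Finset.range_eq_Ico, ← hsplit, Finset.sum_eq_zero htail, add_zero,
      ← Finset.range_eq_Ico]
    rw [show (∑ k ∈ Finset.range (m + 1), ((2 * k).choose k : R) ^ 2 * v ^ k) = S1 from
      Finset.sum_congr rfl fun k hk => hterm k (Nat.le_of_lt_succ (Finset.mem_range.mp hk))]
    exact hS1
  -- final cast computation
  push_cast
  have hpow : ∀ k ∈ Finset.range p, ((2 * k).choose k : R) ^ 2 * 16 ^ (p - 1 - k)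
      = (16 : R) ^ (p - 1) * (((2 * k).choose k : R) ^ 2 * v ^ k) := by
    intro k hk
    have hk' : k < p := Finset.mem_range.mp hk
    have h1 : (16 : R) ^ (p - 1 - k) * 16 ^ k = 16 ^ (p - 1) := by
      rw [← pow_add, show p - 1 - k + k = p - 1 by omega]
    have h2 : (16 : R) ^ k * v ^ k = 1 := by rw [← mul_pow, hv, one_pow]
    calc ((2 * k).choose k : R) ^ 2 * 16 ^ (p - 1 - k)
        = ((2 * k).choose k : R) ^ 2 * 16 ^ (p - 1 - k) * ((16 : R) ^ k * v ^ k) := by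
          rw [h2, mul_one]
      _ = ((2 * k).choose k : R) ^ 2 * ((16 : R) ^ (p - 1 - k) * 16 ^ k) * v ^ k := by ring
      _ = _ := by rw [h1]; ring
  rw [Finset.sum_congr rfl hpow, ← Finset.mul_sum, hfull]
  ring


theorem stmt_9 (p : ℕ) (hp : p.Prime) (hp3 : 3 < p) :
    pcong p 2 (∑ k ∈ Finset.range p, ((2 * k).choose k : ℚ) ^ 2 / 16 ^ k)
      ((-1) ^ ((p - 1) / 2)) := by
  set m := (p - 1) / 2 with hm
  set N : ℤ := ∑ k ∈ Finset.range p, ((2 * k).choose k : ℤ) ^ 2 * 16 ^ (p - 1 - k)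
      - (-1) ^ m * 16 ^ (p - 1) with hNdef
  have hN0 : (N : ZMod (p ^ 2)) = 0 := core_zmod p hp hp3
  have hdvd : (p : ℤ) ^ 2 ∣ N := by
    have := (ZMod.intCast_zmod_eq_zero_iff_dvd N (p ^ 2)).mp hN0
    exact_mod_cast this
  obtain ⟨t, ht⟩ := hdvd
  have h16q : ((16 : ℚ) ^ (p - 1)) ≠ 0 := by positivity
  refine ⟨(t : ℚ) / 16 ^ (p - 1), ?_, ?_⟩
  · intro hden
    have hc : ((t : ℚ) / 16 ^ (p - 1)) = Rat.divInt t (16 ^ (p - 1)) := by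
      rw [Rat.divInt_eq_div]; push_cast; ring
    have hd2 : (((t : ℚ) / 16 ^ (p - 1)).den : ℤ) ∣ (16 : ℤ) ^ (p - 1) := by
      rw [hc]; exact Rat.den_dvd t _
    have hd3 : p ∣ 16 ^ (p - 1) := by
      have : (p : ℤ) ∣ (16 : ℤ) ^ (p - 1) := dvd_trans (Int.natCast_dvd_natCast.mpr hden) hd2
      exact_mod_cast this
    have hd4 : p ∣ 16 := hp.dvd_of_dvd_pow hd3
    have h2four : (16 : ℕ) = 2 ^ 4 := by norm_num
    rw [h2four] at hd4
    have hd5 : p ∣ 2 := hp.dvd_of_dvd_pow hd4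
    exact absurd (Nat.le_of_dvd two_pos hd5) (by omega)
  · have hNq : (N : ℚ) = (∑ k ∈ Finset.range p, ((2 * k).choose k : ℚ) ^ 2 * 16 ^ (p - 1 - k))
        - (-1) ^ m * 16 ^ (p - 1) := by
      rw [hNdef]; push_cast; ring
    have key : (∑ k ∈ Finset.range p, ((2 * k).choose k : ℚ) ^ 2 / 16 ^ k) - (-1) ^ m
        = (N : ℚ) / 16 ^ (p - 1) := by
      rw [eq_div_iff h16q, hNq, sub_mul, Finset.sum_mul]
      congr 1
      refine Finset.sum_congr rfl fun k hk => ?_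
      have hk' : k < p := Finset.mem_range.mp hk
      have hpw : (16 : ℚ) ^ (p - 1 - k) * 16 ^ k = 16 ^ (p - 1) := by
        rw [← pow_add]; congr 1; omega
      have h16k : (16 : ℚ) ^ k ≠ 0 := by positivity
      field_simp
      linear_combination (-(((2 * k).choose k : ℚ) ^ 2)) * hpw
    rw [key, ht]
    push_cast
    ring
end

section
/- For any prime p > 3, C(ap, bp) ≡ C(a,b) (mod p^3) for all nonnegative integers a ≥ b (Wolstenholme / Ljunggren congruence). -/
open Finset

-- expansion lemma
lemma prod_one_add_expand {R : Type*} [CommRing R] (c : R) (hc : c^3 = 0)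
    (s : Finset ℕ) (u : ℕ → R) :
    ∃ t : R, (∏ i ∈ s, (1 + c * u i)) = 1 + c * (∑ i ∈ s, u i) + c^2 * t ∧
      2 * t = (∑ i ∈ s, u i)^2 - ∑ i ∈ s, (u i)^2 := by
  classical
  induction s using Finset.induction with
  | empty => exact ⟨0, by simp, by simp⟩
  | @insert a s ha ih =>
    obtain ⟨t, h1, h2⟩ := ih
    refine ⟨t + u a * ∑ i ∈ s, u i, ?_, ?_⟩
    · rw [Finset.prod_insert ha, Finset.sum_insert ha, h1]
      linear_combination (u a * t) * hc
    · rw [Finset.sum_insert ha, Finset.sum_insert ha]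
      linear_combination h2

section
variable {p : ℕ}

lemma coprime_of_mem_Ico (hp : p.Prime) {i : ℕ} (hi : i ∈ Ico 1 p) : Nat.Coprime i p := by
  rw [mem_Ico] at hi
  exact Nat.Coprime.symm ((hp.coprime_iff_not_dvd).mpr (Nat.not_dvd_of_pos_of_lt (by omega) hi.2))

lemma isUnit_cast (hp : p.Prime) (k : ℕ) {i : ℕ} (hi : i ∈ Ico 1 p) :
    IsUnit (i : ZMod (p^k)) :=
  (ZMod.isUnit_iff_coprime _ _).mpr ((coprime_of_mem_Ico hp hi).pow_right k)

lemma sum_Ico_eq_sum_univ (hp : p.Prime) [NeZero p] {M : Type*} [AddCommMonoid M]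
    (f : ZMod p → M) (h0 : f 0 = 0) :
    ∑ i ∈ Ico 1 p, f (i : ZMod p) = ∑ x : ZMod p, f x := by
  rw [← Finset.sum_erase Finset.univ h0]
  refine Finset.sum_bij' (fun i _ => ((i : ZMod p))) (fun x _ => x.val) ?_ ?_ ?_ ?_ ?_
  · intro i hi
    rw [mem_Ico] at hi
    refine Finset.mem_erase.mpr ⟨?_, Finset.mem_univ _⟩
    rw [Ne, ZMod.natCast_eq_zero_iff]
    exact Nat.not_dvd_of_pos_of_lt (by omega) hi.2
  · intro x hx
    rw [Finset.mem_erase] at hx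
    have h1 : x.val ≠ 0 := fun h => hx.1 ((ZMod.val_eq_zero x).mp h)
    have h2 := ZMod.val_lt x
    exact mem_Ico.mpr ⟨Nat.one_le_iff_ne_zero.mpr h1, h2⟩
  · intro i hi
    rw [mem_Ico] at hi
    exact ZMod.val_cast_of_lt hi.2
  · intro x _
    exact ZMod.natCast_rightInverse x
  · intro i _
    rfl

lemma sum_inv_sq_zmodp (hp : p.Prime) [NeZero p] (hp3 : 3 < p) :
    ∑ i ∈ Ico 1 p, ((i : ZMod p)⁻¹)^2 = 0 := by
  haveI : Fact p.Prime := ⟨hp⟩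
  rw [sum_Ico_eq_sum_univ hp (fun x => (x⁻¹)^2) (by simp)]
  have h1 : ∑ x : ZMod p, (x⁻¹)^2 = ∑ x : ZMod p, x^2 :=
    Fintype.sum_bijective (fun x : ZMod p => x⁻¹)
      (Function.Involutive.bijective (fun x => inv_inv x)) _ _ (fun x => rfl)
  rw [h1]
  refine FiniteField.sum_pow_lt_card_sub_one (ZMod p) 2 ?_
  rw [ZMod.card]
  omega

end

section
variable {p : ℕ}

lemma exists_p_mul (hp : p.Prime) (x : ZMod (p^3))
    (h : (ZMod.castHom (dvd_pow_self p three_ne_zero) (ZMod p)) x = 0) :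
    ∃ y : ZMod (p^3), x = (p : ZMod (p^3)) * y := by
  haveI : NeZero (p^3) := ⟨pow_ne_zero _ hp.pos.ne'⟩
  have hd : p ∣ x.val := by
    rwa [ZMod.castHom_apply, ← ZMod.natCast_val, ZMod.natCast_eq_zero_iff] at h
  obtain ⟨m, hm⟩ := hd
  refine ⟨(m : ZMod (p^3)), ?_⟩
  rw [← ZMod.natCast_rightInverse x, hm]
  push_cast
  ring

lemma pi_inv (hp : p.Prime) {i : ℕ} (hi : i ∈ Ico 1 p) :
    (ZMod.castHom (dvd_pow_self p three_ne_zero) (ZMod p)) ((i : ZMod (p^3))⁻¹)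
      = ((i : ZMod p))⁻¹ := by
  haveI : Fact p.Prime := ⟨hp⟩
  have hu := isUnit_cast hp 3 hi
  have h1 : (i : ZMod p) *
      (ZMod.castHom (dvd_pow_self p three_ne_zero) (ZMod p)) ((i : ZMod (p^3))⁻¹) = 1 := by
    rw [← map_natCast (ZMod.castHom (dvd_pow_self p three_ne_zero) (ZMod p)) i, ← map_mul,
      ZMod.mul_inv_of_unit _ hu, map_one]
  exact eq_inv_of_mul_eq_one_left (by rw [mul_comm] at h1; exact h1)

lemma wolst_sq (hp : p.Prime) (hp3 : 3 < p) :
    ∃ y : ZMod (p^3), (∑ i ∈ Ico 1 p, ((i : ZMod (p^3))⁻¹)^2) = (p : ZMod (p^3)) * y := by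
  haveI : NeZero p := ⟨hp.pos.ne'⟩
  apply exists_p_mul hp
  rw [map_sum]
  have hcong : ∀ i ∈ Ico 1 p,
      (ZMod.castHom (dvd_pow_self p three_ne_zero) (ZMod p)) (((i : ZMod (p^3))⁻¹)^2)
        = ((i : ZMod p)⁻¹)^2 := by
    intro i hi
    rw [map_pow, pi_inv hp hi]
  rw [Finset.sum_congr rfl hcong]
  exact sum_inv_sq_zmodp hp hp3

lemma two_unit (hp : p.Prime) (hp3 : 3 < p) : IsUnit (2 : ZMod (p^3)) := by
  have h : IsUnit ((2 : ℕ) : ZMod (p^3)) := by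
    refine (ZMod.isUnit_iff_coprime 2 (p^3)).mpr (Nat.Coprime.pow_right _ ?_)
    rw [Nat.coprime_two_left]
    exact hp.odd_of_ne_two (by omega)
  simpa using h

lemma wolst1 (hp : p.Prime) (hp3 : 3 < p) :
    ∃ x : ZMod (p^3), (∑ i ∈ Ico 1 p, (i : ZMod (p^3))⁻¹) = (p : ZMod (p^3))^2 * x := by
  haveI : NeZero p := ⟨hp.pos.ne'⟩
  haveI : Fact p.Prime := ⟨hp⟩
  set S := ∑ i ∈ Ico 1 p, (i : ZMod (p^3))⁻¹ with hS
  have refl : S = ∑ i ∈ Ico 1 p, (((p - i : ℕ) : ZMod (p^3)))⁻¹ := by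
    rw [hS]
    refine Finset.sum_bij' (fun i _ => p - i) (fun i _ => p - i) ?_ ?_ ?_ ?_ ?_
    · intro i hi
      simp only [mem_Ico] at hi ⊢
      omega
    · intro i hi
      simp only [mem_Ico] at hi ⊢
      omega
    · intro i hi
      simp only [mem_Ico] at hi
      show p - (p - i) = i
      omega
    · intro i hi
      simp only [mem_Ico] at hi
      show p - (p - i) = i
      omega
    · intro i hi
      simp only [mem_Ico] at hi
      show (i : ZMod (p^3))⁻¹ = ((p - (p - i) : ℕ) : ZMod (p^3))⁻¹
      rw [Nat.sub_sub_self (by omega : i ≤ p)]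
  have pair : (2 : ZMod (p^3)) * S
      = (p : ZMod (p^3)) * ∑ i ∈ Ico 1 p, ((i : ZMod (p^3))⁻¹ * (((p - i : ℕ)) : ZMod (p^3))⁻¹) := by
    rw [two_mul]
    nth_rewrite 2 [refl]
    rw [← Finset.sum_add_distrib, Finset.mul_sum]
    refine Finset.sum_congr rfl ?_
    intro i hi
    have hui := isUnit_cast hp 3 hi
    have hj : (p - i : ℕ) ∈ Ico 1 p := by rw [mem_Ico] at *; omega
    have huj := isUnit_cast hp 3 hj
    have hsum : ((p - i : ℕ) : ZMod (p^3)) + (i : ZMod (p^3)) = (p : ZMod (p^3)) := by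
      rw [← Nat.cast_add]
      congr 1
      rw [mem_Ico] at hi; omega
    have e1 : (i : ZMod (p^3))⁻¹ * ((p - i : ℕ) : ZMod (p^3))⁻¹
          * (((p - i : ℕ) : ZMod (p^3)) + (i : ZMod (p^3)))
        = (i : ZMod (p^3))⁻¹ * (((p - i : ℕ) : ZMod (p^3))⁻¹ * ((p - i : ℕ) : ZMod (p^3)))
          + ((i : ZMod (p^3))⁻¹ * (i : ZMod (p^3))) * ((p - i : ℕ) : ZMod (p^3))⁻¹ := by ring
    calc (i : ZMod (p^3))⁻¹ + ((p - i : ℕ) : ZMod (p^3))⁻¹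
        = (i : ZMod (p^3))⁻¹ * ((p - i : ℕ) : ZMod (p^3))⁻¹
            * (((p - i : ℕ) : ZMod (p^3)) + (i : ZMod (p^3))) := by
          rw [e1, ZMod.inv_mul_of_unit _ huj, ZMod.inv_mul_of_unit _ hui, mul_one, one_mul]
      _ = (p : ZMod (p^3)) * ((i : ZMod (p^3))⁻¹ * ((p - i : ℕ) : ZMod (p^3))⁻¹) := by
          rw [hsum]; ring
  have hside : (ZMod.castHom (dvd_pow_self p three_ne_zero) (ZMod p))
      (∑ i ∈ Ico 1 p, ((i : ZMod (p^3))⁻¹ * (((p - i : ℕ)) : ZMod (p^3))⁻¹)) = 0 := by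
    rw [map_sum]
    have hcong : ∀ i ∈ Ico 1 p,
        (ZMod.castHom (dvd_pow_self p three_ne_zero) (ZMod p))
          ((i : ZMod (p^3))⁻¹ * (((p - i : ℕ)) : ZMod (p^3))⁻¹)
          = -(((i : ZMod p))⁻¹)^2 := by
      intro i hi
      have hj : (p - i : ℕ) ∈ Ico 1 p := by rw [mem_Ico] at *; omega
      rw [map_mul, pi_inv hp hi, pi_inv hp hj]
      have : ((p - i : ℕ) : ZMod p) = -(i : ZMod p) := by
        rw [mem_Ico] at hi
        rw [Nat.cast_sub (le_of_lt hi.2), ZMod.natCast_self, zero_sub]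
      rw [this, inv_neg]
      ring
    rw [Finset.sum_congr rfl hcong, Finset.sum_neg_distrib, neg_eq_zero]
    exact sum_inv_sq_zmodp hp hp3
  obtain ⟨y, hy⟩ := exists_p_mul hp
      (∑ i ∈ Ico 1 p, ((i : ZMod (p^3))⁻¹ * (((p - i : ℕ)) : ZMod (p^3))⁻¹)) hside
  have hS2 : (2 : ZMod (p^3)) * S = (p : ZMod (p^3))^2 * y := by
    rw [pair, hy]; ring
  have h2u := two_unit hp hp3
  refine ⟨(2 : ZMod (p^3))⁻¹ * y, ?_⟩
  calc S = ((2 : ZMod (p^3))⁻¹ * 2) * S := by rw [ZMod.inv_mul_of_unit _ h2u, one_mul]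
    _ = (2 : ZMod (p^3))⁻¹ * ((2 : ZMod (p^3)) * S) := by ring
    _ = (2 : ZMod (p^3))⁻¹ * ((p : ZMod (p^3))^2 * y) := by rw [hS2]
    _ = (p : ZMod (p^3))^2 * ((2 : ZMod (p^3))⁻¹ * y) := by ring

end

section
variable {p : ℕ}

lemma prod_block (hp : p.Prime) (hp3 : 3 < p) (j : ℕ) :
    (∏ i ∈ Ico 1 p, ((j * p + i : ℕ) : ZMod (p^3)))
      = ((p-1).factorial : ZMod (p^3)) := by
  haveI : NeZero p := ⟨hp.pos.ne'⟩
  have hp3zero : (p : ZMod (p^3))^3 = 0 := by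
    rw [← Nat.cast_pow, ZMod.natCast_self]
  have hc3 : ((j : ZMod (p^3)) * (p : ZMod (p^3)))^3 = 0 := by
    rw [mul_pow, hp3zero, mul_zero]
  have hterm : ∀ i ∈ Ico 1 p, ((j * p + i : ℕ) : ZMod (p^3))
      = (i : ZMod (p^3)) * (1 + ((j : ZMod (p^3)) * (p : ZMod (p^3))) * ((i : ZMod (p^3)))⁻¹) := by
    intro i hi
    have hu := isUnit_cast hp 3 hi
    push_cast
    linear_combination (-((j : ZMod (p^3)) * (p : ZMod (p^3)))) * (ZMod.mul_inv_of_unit _ hu)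
  rw [Finset.prod_congr rfl hterm, Finset.prod_mul_distrib]
  obtain ⟨t, hprod, ht⟩ := prod_one_add_expand ((j : ZMod (p^3)) * (p : ZMod (p^3))) hc3
    (Ico 1 p) (fun i => ((i : ZMod (p^3)))⁻¹)
  obtain ⟨x, hx⟩ := wolst1 hp hp3
  obtain ⟨y, hy⟩ := wolst_sq hp hp3
  have h1 : ((j : ZMod (p^3)) * (p : ZMod (p^3))) * (∑ i ∈ Ico 1 p, ((i : ZMod (p^3)))⁻¹) = 0 := by
    rw [hx]
    linear_combination (j : ZMod (p^3)) * x * hp3zero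
  have h2 : ((j : ZMod (p^3)) * (p : ZMod (p^3)))^2 * t = 0 := by
    have h2a : (2 : ZMod (p^3)) * (((j : ZMod (p^3)) * (p : ZMod (p^3)))^2 * t) = 0 := by
      calc (2 : ZMod (p^3)) * (((j : ZMod (p^3)) * (p : ZMod (p^3)))^2 * t)
          = ((j : ZMod (p^3)) * (p : ZMod (p^3)))^2 * ((2 : ZMod (p^3)) * t) := by ring
        _ = ((j : ZMod (p^3)) * (p : ZMod (p^3)))^2 *
            ((∑ i ∈ Ico 1 p, ((i : ZMod (p^3)))⁻¹)^2
              - ∑ i ∈ Ico 1 p, (((i : ZMod (p^3)))⁻¹)^2) := by rw [ht]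
        _ = 0 := by
            rw [hx, hy]
            linear_combination ((j : ZMod (p^3))^2 * x^2 * (p : ZMod (p^3))^3
              - (j : ZMod (p^3))^2 * y) * hp3zero
    have h2u := two_unit hp hp3
    calc ((j : ZMod (p^3)) * (p : ZMod (p^3)))^2 * t
        = ((2 : ZMod (p^3))⁻¹ * 2) * (((j : ZMod (p^3)) * (p : ZMod (p^3)))^2 * t) := by
          rw [ZMod.inv_mul_of_unit _ h2u, one_mul]
      _ = (2 : ZMod (p^3))⁻¹ * ((2 : ZMod (p^3)) * (((j : ZMod (p^3)) * (p : ZMod (p^3)))^2 * t)) := by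
          ring
      _ = 0 := by rw [h2a, mul_zero]
  rw [hprod, h1, h2, add_zero, add_zero, mul_one]
  rw [← Nat.cast_prod]
  congr 1
  have hpp : p = (p - 1) + 1 := by omega
  conv_lhs => rw [hpp]
  exact Finset.prod_Ico_id_eq_factorial _

end

-- ℕ factorial identities
lemma fact_add (m : ℕ) : ∀ k : ℕ, (m + k).factorial = m.factorial * ∏ i ∈ Ico 1 (k+1), (m + i) := by
  intro k
  induction k with
  | zero => simp
  | succ k ih =>
    rw [Finset.prod_Ico_succ_top (by omega : 1 ≤ k + 1)]
    have : m + (k+1) = (m + k) + 1 := by omega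
    rw [this, Nat.factorial_succ, ih]
    ring

lemma fact_mul_p {p : ℕ} (hp : 0 < p) (n : ℕ) :
    (n * p).factorial = p^n * n.factorial * ∏ j ∈ range n, ∏ i ∈ Ico 1 p, (j * p + i) := by
  induction n with
  | zero => simp
  | succ n ih =>
    have h1 : (n + 1) * p = n * p + p := by ring
    rw [h1, fact_add (n*p) p, Finset.prod_Ico_succ_top hp]
    rw [ih, Finset.prod_range_succ, Nat.factorial_succ]
    have h2 : n * p + p = p * (n + 1) := by ring
    rw [h2]
    ring

lemma key_nat {p : ℕ} (hp : p.Prime) (a b : ℕ) (hab : b ≤ a) :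
    (a * p).choose (b * p) * ∏ j ∈ range b, ∏ i ∈ Ico 1 p, (j * p + i)
      = a.choose b * ∏ j ∈ Ico (a - b) a, ∏ i ∈ Ico 1 p, (j * p + i) := by
  have hppos := hp.pos
  set P : ℕ → ℕ := fun j => ∏ i ∈ Ico 1 p, (j * p + i) with hP
  have hPpos : ∀ j, 0 < P j :=
    fun j => Finset.prod_pos (fun i hi => by rw [mem_Ico] at hi; omega)
  set M := p^(a-b) * (a-b).factorial * (∏ j ∈ range (a-b), P j) * (p^b * b.factorial) with hM
  have hMpos : 0 < M := by
    have h0 : 0 < ∏ j ∈ range (a-b), P j := Finset.prod_pos (fun j _ => hPpos j)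
    exact Nat.mul_pos (Nat.mul_pos (Nat.mul_pos (pow_pos hppos _) (Nat.factorial_pos _)) h0)
      (Nat.mul_pos (pow_pos hppos _) (Nat.factorial_pos _))
  apply Nat.eq_of_mul_eq_mul_left hMpos
  have h1 : (b * p).factorial = p^b * b.factorial * ∏ j ∈ range b, P j := fact_mul_p hppos b
  have h2 : ((a-b) * p).factorial = p^(a-b) * (a-b).factorial * ∏ j ∈ range (a-b), P j :=
    fact_mul_p hppos (a-b)
  have h3 : (a * p).factorial = p^a * a.factorial * ∏ j ∈ range a, P j := fact_mul_p hppos a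
  have h4 : (a*p).choose (b*p) * ((b*p).factorial * ((a-b)*p).factorial)
      = (a*p).factorial := by
    have hc := Nat.choose_mul_factorial_mul_factorial (Nat.mul_le_mul_right p hab)
    have hsub : a * p - b * p = (a - b) * p := (Nat.sub_mul a b p).symm
    rw [hsub] at hc
    rw [← hc]; ring
  have h5 : ∏ j ∈ range a, P j = (∏ j ∈ range (a-b), P j) * ∏ j ∈ Ico (a-b) a, P j := by
    rw [Finset.range_eq_Ico, Finset.range_eq_Ico]
    exact (Finset.prod_Ico_consecutive P (Nat.zero_le _) (Nat.sub_le a b)).symm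
  have h6 : a.choose b * b.factorial * (a-b).factorial = a.factorial :=
    Nat.choose_mul_factorial_mul_factorial hab
  have h7 : p^b * p^(a-b) = p^a := by rw [← pow_add]; congr 1; omega
  calc M * ((a*p).choose (b*p) * ∏ j ∈ range b, P j)
      = (a*p).choose (b*p) * ((b*p).factorial * ((a-b)*p).factorial) := by
        rw [h1, h2, hM]; ring
    _ = (a*p).factorial := h4
    _ = p^a * a.factorial * ∏ j ∈ range a, P j := h3
    _ = M * (a.choose b * ∏ j ∈ Ico (a-b) a, P j) := by
        rw [h5, ← h6, ← h7, hM]; ring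

theorem stmt_12 (p : ℕ) (hp : p.Prime) (hp3 : 3 < p) (a b : ℕ) (hab : b ≤ a) :
    (((a * p).choose (b * p) : ℤ)) ≡ (a.choose b : ℤ) [ZMOD (p : ℤ) ^ 3] := by
  haveI : NeZero p := ⟨hp.pos.ne'⟩
  have hkey := key_nat hp a b hab
  have hL : ((∏ j ∈ range b, ∏ i ∈ Ico 1 p, (j * p + i) : ℕ) : ZMod (p^3))
      = ((p-1).factorial : ZMod (p^3))^b := by
    rw [Nat.cast_prod]
    calc ∏ j ∈ range b, ((∏ i ∈ Ico 1 p, (j * p + i) : ℕ) : ZMod (p^3))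
        = ∏ j ∈ range b, ((p-1).factorial : ZMod (p^3)) :=
          Finset.prod_congr rfl (fun j _ => by rw [Nat.cast_prod]; exact prod_block hp hp3 j)
      _ = ((p-1).factorial : ZMod (p^3))^b := by rw [Finset.prod_const, Finset.card_range]
  have hR : ((∏ j ∈ Ico (a-b) a, ∏ i ∈ Ico 1 p, (j * p + i) : ℕ) : ZMod (p^3))
      = ((p-1).factorial : ZMod (p^3))^b := by
    rw [Nat.cast_prod]
    calc ∏ j ∈ Ico (a-b) a, ((∏ i ∈ Ico 1 p, (j * p + i) : ℕ) : ZMod (p^3))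
        = ∏ j ∈ Ico (a-b) a, ((p-1).factorial : ZMod (p^3)) :=
          Finset.prod_congr rfl (fun j _ => by rw [Nat.cast_prod]; exact prod_block hp hp3 j)
      _ = ((p-1).factorial : ZMod (p^3))^b := by
          rw [Finset.prod_const, Nat.card_Ico]
          congr 1
          omega
  have hmain : (((a * p).choose (b * p) : ℕ) : ZMod (p^3)) * ((p-1).factorial : ZMod (p^3))^b
      = ((a.choose b : ℕ) : ZMod (p^3)) * ((p-1).factorial : ZMod (p^3))^b := by
    have hc := congrArg (Nat.cast : ℕ → ZMod (p^3)) hkey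
    rw [Nat.cast_mul, Nat.cast_mul, hL, hR] at hc
    exact hc
  have hwu : IsUnit (((p-1).factorial : ZMod (p^3))) := by
    refine (ZMod.isUnit_iff_coprime _ _).mpr (Nat.Coprime.pow_right _ ?_)
    exact (hp.coprime_iff_not_dvd.mpr (by rw [hp.dvd_factorial]; omega)).symm
  have hxy : (((a * p).choose (b * p) : ℕ) : ZMod (p^3)) = ((a.choose b : ℕ) : ZMod (p^3)) := by
    apply (hwu.pow b).mul_left_cancel
    rw [mul_comm, hmain, mul_comm]
  have hfin : (((a * p).choose (b * p) : ℤ) : ZMod (p^3)) = ((a.choose b : ℤ) : ZMod (p^3)) := by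
    push_cast
    exact_mod_cast hxy
  have h := (ZMod.intCast_eq_intCast_iff _ _ _).mp hfin
  push_cast at h
  exact h
end

section
/- Let p > 3 be prime and x = r/m with 0 < r < m integers, gcd(m,p) = 1. Then ∑_{k=1}^{p-1} ((x)_k(1-x)_k/((1)_k)^2)·(1/k)·∑_{j=0}^{k-1}(1/(x+j) + 1/(1-x+j)) ≡ ∑_{k=1}^{p-1} ((x)_k(1-x)_k/((1)_k)^2)·(2H_k(1)/k) (mod p). -/
open Finset



/-- p-integrality of a rational -/
def Pint (p : ℕ) (q : ℚ) : Prop := ¬ (p ∣ q.den)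

section PintLemmas
variable {p : ℕ}

lemma pint_of_den_dvd {q : ℚ} {n : ℕ} (hn : ¬ p ∣ n) (h : q.den ∣ n) : Pint p q :=
  fun hd => hn (hd.trans h)

lemma pint_natCast (hp : p.Prime) (n : ℕ) : Pint p (n : ℚ) := by
  simp [Pint, Rat.den_natCast, Nat.dvd_one, Nat.Prime.ne_one hp]

lemma pint_one (hp : p.Prime) : Pint p (1 : ℚ) := by simpa using pint_natCast hp 1

lemma pint_zero (hp : p.Prime) : Pint p (0 : ℚ) := by simpa using pint_natCast hp 0

lemma pint_add (hp : p.Prime) {a b : ℚ} (ha : Pint p a) (hb : Pint p b) : Pint p (a + b) := by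
  intro h
  rcases (Nat.Prime.dvd_mul hp).1 (h.trans (Rat.add_den_dvd a b)) with h' | h'
  exacts [ha h', hb h']

lemma pint_mul (hp : p.Prime) {a b : ℚ} (ha : Pint p a) (hb : Pint p b) : Pint p (a * b) := by
  intro h
  rcases (Nat.Prime.dvd_mul hp).1 (h.trans (Rat.mul_den_dvd a b)) with h' | h'
  exacts [ha h', hb h']

lemma pint_neg (hp : p.Prime) {a : ℚ} (ha : Pint p a) : Pint p (-a) := by
  simpa [Pint, Rat.neg_den] using ha

lemma pint_sub (hp : p.Prime) {a b : ℚ} (ha : Pint p a) (hb : Pint p b) : Pint p (a - b) := by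
  simpa [sub_eq_add_neg] using pint_add hp ha (pint_neg hp hb)

lemma pint_inv_natCast (hp : p.Prime) {n : ℕ} (hn : ¬ p ∣ n) : Pint p ((n : ℚ)⁻¹) := by
  rcases Nat.eq_zero_or_pos n with rfl | h
  · simpa using pint_zero hp
  · refine pint_of_den_dvd hn ?_
    rw [Rat.inv_natCast_den_of_pos h]

lemma pint_sum (hp : p.Prime) {ι : Type*} (s : Finset ι) (f : ι → ℚ) (h : ∀ i ∈ s, Pint p (f i)) :
    Pint p (∑ i ∈ s, f i) := by
  classical
  induction s using Finset.induction_on with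
  | empty => simpa using pint_zero hp
  | insert _ _ hx ih =>
      rw [Finset.sum_insert hx]
      exact pint_add hp (h _ (mem_insert_self _ _)) (ih fun i hi => h i (mem_insert_of_mem hi))

lemma pint_prod (hp : p.Prime) {ι : Type*} (s : Finset ι) (f : ι → ℚ) (h : ∀ i ∈ s, Pint p (f i)) :
    Pint p (∏ i ∈ s, f i) := by
  classical
  induction s using Finset.induction_on with
  | empty => simpa using pint_one hp
  | insert _ _ hx ih =>
      rw [Finset.prod_insert hx]
      exact pint_mul hp (h _ (mem_insert_self _ _)) (ih fun i hi => h i (mem_insert_of_mem hi))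

end PintLemmas

/-- the basic summand -/
noncomputable def cc (x : ℚ) (k : ℕ) : ℚ :=
  ∏ i ∈ range k, ((x + i) * (1 - x + i) / ((i : ℚ) + 1) ^ 2)

noncomputable def SS (x : ℚ) (k : ℕ) : ℚ :=
  ∑ j ∈ range k, (1 / (x + j) + 1 / (1 - x + j))

noncomputable def HH (k : ℕ) : ℚ := ∑ j ∈ Icc 1 k, (1 : ℚ) / j

lemma cc_zero (x : ℚ) : cc x 0 = 1 := by simp [cc]

lemma cc_succ (x : ℚ) (k : ℕ) :
    cc x (k + 1) = cc x k * ((x + k) * (1 - x + k) / ((k : ℚ) + 1) ^ 2) := by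
  rw [cc, cc, prod_range_succ]

lemma SS_succ (x : ℚ) (k : ℕ) :
    SS x (k + 1) = SS x k + (1 / (x + k) + 1 / (1 - x + k)) := by
  simp [SS, sum_range_succ]

lemma HH_zero : HH 0 = 0 := by simp [HH]

lemma HH_succ (k : ℕ) : HH (k + 1) = HH k + 1 / ((k : ℚ) + 1) := by
  rw [HH, HH, Finset.sum_Icc_succ_top (by omega : 1 ≤ k + 1)]
  push_cast; ring

lemma ascPochhammer_eval_prod (k : ℕ) (t : ℚ) :
    (ascPochhammer ℚ k).eval t = ∏ i ∈ range k, (t + i) := by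
  induction k with
  | zero => simp [ascPochhammer_zero]
  | succ n ih =>
      rw [ascPochhammer_succ_right, Polynomial.eval_mul, ih, prod_range_succ]
      simp

section
variable {x : ℚ} (hx0 : 0 < x) (hx1 : x < 1)

lemma hpa (hx0 : 0 < x) (t : ℚ) (ht : 0 ≤ t) : x + t ≠ 0 :=
  ne_of_gt (by linarith)

lemma hpb (hx1 : x < 1) (t : ℚ) (ht : 0 ≤ t) : 1 - x + t ≠ 0 :=
  ne_of_gt (by linarith)

lemma idI (hx0 : 0 < x) (hx1 : x < 1) (n : ℕ) :
    cc x (n + 1) * SS x (n + 1)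
      = ((n : ℚ) + 1)⁻¹ + ∑ k ∈ range n, cc x (k + 1) / ((n : ℚ) - (k : ℚ)) := by
  induction n with
  | zero =>
      have h1 : x ≠ 0 := ne_of_gt hx0
      have h2 : (1:ℚ) - x ≠ 0 := by intro h; apply absurd hx1; intro _; nlinarith
      simp only [cc_succ, cc_zero, SS_succ, SS, range_zero, sum_empty, sum_range_one, Nat.cast_zero,
        add_zero, zero_add]
      field_simp
      ring
  | succ n ih =>
      have ha : x + ((n:ℚ) + 1) ≠ 0 := hpa hx0 _ (by positivity)
      have hb : 1 - x + ((n:ℚ) + 1) ≠ 0 := hpb hx1 _ (by positivity)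
      have hd : ((n:ℚ) + 2) ≠ 0 := by positivity
      have h1 : cc x (n + 2) * SS x (n + 2)
          = (x + ((n:ℚ)+1)) * (1 - x + ((n:ℚ)+1)) / ((n:ℚ)+2)^2 * (cc x (n+1) * SS x (n+1))
            + (2*(n:ℚ)+3) * cc x (n+1) / ((n:ℚ)+2)^2 := by
        rw [show n + 2 = (n+1) + 1 by rfl, cc_succ, SS_succ]
        push_cast
        field_simp
        ring
      rw [h1, ih, mul_add, Finset.mul_sum]
      have key : ∀ k ∈ range n,
          (x + ((n:ℚ)+1)) * (1 - x + ((n:ℚ)+1)) / ((n:ℚ)+2)^2 * (cc x (k+1) / ((n:ℚ) - (k:ℚ)))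
          = ((n:ℚ)+(k:ℚ)+3) * cc x (k+1) / ((n:ℚ)+2)^2
            + (((k:ℚ)+2)^2 * cc x (k+2)) / (((n:ℚ)+2)^2 * (((n:ℚ)+1) - ((k:ℚ)+1))) := by
        intro k hk
        have hk' : (k:ℚ) < n := by exact_mod_cast mem_range.1 hk
        have hnk : (n:ℚ) - (k:ℚ) ≠ 0 := by intro h; nlinarith
        have hk2 : ((k:ℚ)+1)+1 ≠ 0 := by positivity
        have h2 : cc x (k+2) = cc x (k+1) *
            ((x + ((k:ℚ)+1)) * (1 - x + ((k:ℚ)+1)) / (((k:ℚ)+1) + 1)^2) := by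
          rw [show k + 2 = (k+1) + 1 by rfl, cc_succ]; push_cast; ring
        rw [h2]
        have h3 : ((n:ℚ)+1) - ((k:ℚ)+1) = (n:ℚ) - k := by ring
        rw [h3]
        field_simp
        ring
      rw [Finset.sum_congr rfl key, Finset.sum_add_distrib]
      -- reindex the second sum
      have hre : ∑ k ∈ range (n+1),
            (((k:ℚ)+1)^2 * cc x (k+1)) / (((n:ℚ)+2)^2 * (((n:ℚ)+1) - (k:ℚ)))
          = (∑ k ∈ range n,
              (((k:ℚ)+2)^2 * cc x (k+2)) / (((n:ℚ)+2)^2 * (((n:ℚ)+1) - ((k:ℚ)+1))))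
            + (1^2 * cc x 1) / (((n:ℚ)+2)^2 * (((n:ℚ)+1) - 0)) := by
        rw [Finset.sum_range_succ']
        push_cast
        norm_num
        exact Finset.sum_congr rfl fun k hk => by push_cast; ring_nf
      -- expand target sum
      have hT : ∀ k ∈ range (n+1),
          cc x (k+1) / (((n:ℚ)+1) - (k:ℚ))
          = ((n:ℚ)+(k:ℚ)+3) * cc x (k+1) / ((n:ℚ)+2)^2
            + (((k:ℚ)+1)^2 * cc x (k+1)) / (((n:ℚ)+2)^2 * (((n:ℚ)+1) - (k:ℚ))) := by
        intro k hk
        have hk' : (k:ℚ) < (n:ℚ) + 1 := by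
          have := mem_range.1 hk; push_cast; exact_mod_cast (by exact_mod_cast this : (k:ℚ) < ((n:ℕ):ℚ)+1)
        have hnk : ((n:ℚ)+1) - (k:ℚ) ≠ 0 := by intro h; nlinarith
        field_simp
        ring
      have hgoal2 : ∑ k ∈ range (n+1), cc x (k+1) / ((((n+1):ℕ):ℚ) - (k:ℚ))
          = ∑ k ∈ range (n+1), (((n:ℚ)+(k:ℚ)+3) * cc x (k+1) / ((n:ℚ)+2)^2
              + (((k:ℚ)+1)^2 * cc x (k+1)) / (((n:ℚ)+2)^2 * (((n:ℚ)+1) - (k:ℚ)))) := by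
        refine Finset.sum_congr rfl fun k hk => ?_
        rw [show (((n+1):ℕ):ℚ) = (n:ℚ)+1 by push_cast; ring]
        exact hT k hk
      rw [hgoal2, Finset.sum_add_distrib, Finset.sum_range_succ _ n, hre]
      have hcc1 : cc x 1 = x * (1 - x) := by
        rw [show (1:ℕ) = 0 + 1 by rfl, cc_succ, cc_zero]; norm_num
      push_cast
      rw [hcc1]
      have hn1 : ((n:ℚ)+1) ≠ 0 := by positivity
      field_simp
      ring
end

section
variable {x : ℚ}

lemma cc_ne_zero (hx0 : 0 < x) (hx1 : x < 1) (k : ℕ) : cc x k ≠ 0 := by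
  refine ne_of_gt (Finset.prod_pos fun i _ => ?_)
  have h1 : (0:ℚ) < x + i := by have : (0:ℚ) ≤ i := Nat.cast_nonneg i; linarith
  have h2 : (0:ℚ) < 1 - x + i := by have : (0:ℚ) ≤ i := Nat.cast_nonneg i; linarith
  positivity

lemma hreidx (n : ℕ) : ∑ k ∈ range n, cc x (k + 1) / ((n : ℚ) - (k : ℚ))
    = ∑ j ∈ Icc 1 n, cc x j / ((n : ℚ) + 1 - (j : ℚ)) := by
  refine Finset.sum_nbij' (fun k => k + 1) (fun j => j - 1) ?_ ?_ ?_ ?_ ?_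
  · intro a ha; simp only [mem_range] at ha; simp only [mem_Icc]; omega
  · intro a ha; simp only [mem_Icc] at ha; simp only [mem_range]; omega
  · intro a ha; show a + 1 - 1 = a; omega
  · intro a ha; simp only [mem_Icc] at ha; show a - 1 + 1 = a; omega
  · intro a ha
    show cc x (a+1) / ((n:ℚ) - (a:ℚ)) = cc x (a + 1 - 1 + 1) / ((n:ℚ) + 1 - ((a:ℕ)+1 : ℕ))
    have : a + 1 - 1 + 1 = a + 1 := by omega
    rw [this]
    push_cast
    ring_nf

lemma hdelta (hx0 : 0 < x) (hx1 : x < 1) (n : ℕ) :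
    cc x (n + 1) * SS x (n + 1) / ((n : ℚ) + 1)
      = (((n : ℚ) + 1) ^ 2)⁻¹
        + ∑ k ∈ Icc 1 n, ((((n : ℚ) + 1) - (k : ℚ))⁻¹ - ((n : ℚ) + 1)⁻¹) * cc x k / k := by
  rw [idI hx0 hx1 n, hreidx, add_div, Finset.sum_div]
  have hn : ((n : ℚ) + 1) ≠ 0 := by positivity
  congr 1
  · rw [sq]; field_simp
  · refine Finset.sum_congr rfl fun k hk => ?_
    obtain ⟨hk1, hk2⟩ := Finset.mem_Icc.1 hk
    have hkq : (k : ℚ) ≠ 0 := by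
      have : (0:ℕ) < k := hk1
      positivity
    have hnk : ((n : ℚ) + 1) - k ≠ 0 := by
      have : (k : ℚ) ≤ n := by exact_mod_cast hk2
      intro h; nlinarith
    field_simp
    ring
end

lemma master {x : ℚ} (hx0 : 0 < x) (hx1 : x < 1) (n : ℕ) :
    ∑ k ∈ Icc 1 n, (cc x k * SS x k / k - cc x k * (2 * HH k) / k)
      = (∑ k ∈ Icc 1 n, (((k : ℚ)) ^ 2)⁻¹)
        - ∑ k ∈ Icc 1 n, (HH k + HH n - HH (n - k)) * cc x k / k := by
  induction n with
  | zero => simp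
  | succ n ih =>
      rw [Finset.sum_Icc_succ_top (by omega : 1 ≤ n + 1),
        Finset.sum_Icc_succ_top (by omega : 1 ≤ n + 1),
        Finset.sum_Icc_succ_top (by omega : 1 ≤ n + 1), ih]
      have hco : ∑ k ∈ Icc 1 n, (HH k + HH (n+1) - HH (n+1-k)) * cc x k / k
          = ∑ k ∈ Icc 1 n, ((HH k + HH n - HH (n-k)) * cc x k / k
              - ((((n:ℚ)+1) - (k:ℚ))⁻¹ - ((n:ℚ)+1)⁻¹) * cc x k / k) := by
        refine Finset.sum_congr rfl fun k hk => ?_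
        obtain ⟨hk1, hk2⟩ := Finset.mem_Icc.1 hk
        have e1 : n + 1 - k = (n - k) + 1 := by omega
        have e2 : ((n - k : ℕ) : ℚ) = (n : ℚ) - k := by
          push_cast [Nat.cast_sub hk2]; ring
        rw [HH_succ, e1, HH_succ, e2]
        have : ((n:ℚ) - (k:ℚ)) + 1 = ((n:ℚ)+1) - k := by ring
        rw [this]
        ring
      rw [hco, Finset.sum_sub_distrib]
      have hD := hdelta hx0 hx1 n
      have hsub : n + 1 - (n + 1) = 0 := by omega
      rw [hsub, HH_zero]
      push_cast
      linear_combination hD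

section
variable {p : ℕ} (hp : p.Prime) (hp3 : 3 < p)

-- (a) harmonic reflection
lemma HH_reflect (k : ℕ) (hk : k ≤ p - 1) :
    HH (p - 1) - HH (p - 1 - k) = ∑ i ∈ Icc 1 k, ((p : ℚ) - (i : ℚ))⁻¹ := by
  induction k with
  | zero => simp
  | succ k ih =>
      have hk' : k ≤ p - 1 := by omega
      have h1 : p - 1 - k = (p - 1 - (k + 1)) + 1 := by omega
      rw [Finset.sum_Icc_succ_top (by omega : 1 ≤ k + 1), ← ih hk']
      have h2 : HH (p - 1 - k) = HH (p - 1 - (k + 1)) + 1 / (((p - 1 - (k+1) : ℕ) : ℚ) + 1) := by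
        rw [h1] at *
        exact HH_succ _
      have h3 : ((p - 1 - (k+1) : ℕ) : ℚ) + 1 = (p : ℚ) - ((k+1 : ℕ) : ℚ) := by
        have hpk : k + 2 ≤ p := by omega
        have : (p - 1 - (k+1) : ℕ) = p - (k + 2) := by omega
        rw [this, Nat.cast_sub hpk]
        push_cast; ring
      rw [h2, h3]
      push_cast
      ring

lemma coeff_eq (hp1 : 1 ≤ p) (k : ℕ) (hk1 : 1 ≤ k) (hk2 : k ≤ p - 1) :
    HH k + HH (p - 1) - HH (p - 1 - k)
      = (p : ℚ) * ∑ i ∈ Icc 1 k, ((i : ℚ) * ((p : ℚ) - (i : ℚ)))⁻¹ := by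
  rw [add_sub_assoc, HH_reflect (p := p) k hk2, HH, Finset.mul_sum, ← Finset.sum_add_distrib]
  refine Finset.sum_congr rfl fun i hi => ?_
  obtain ⟨hi1, hi2⟩ := Finset.mem_Icc.1 hi
  have hip : i < p := by omega
  have hi0 : ((i:ℚ)) ≠ 0 := Nat.cast_ne_zero.2 (by omega)
  have hpi : (p : ℚ) - i ≠ 0 := by
    have : (i : ℚ) < p := by exact_mod_cast hip
    intro h; nlinarith
  field_simp
  ring

-- (b) divisibility of the harmonic-square numerator
lemma hpA (hp : p.Prime) (hp3 : 3 < p) : p ∣ ∑ k ∈ Icc 1 (p - 1), ((Nat.factorial (p-1)) / k)^2 := by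
  haveI : Fact p.Prime := ⟨hp⟩
  have h0 : p ≠ 0 := hp.pos.ne'
  rw [← ZMod.natCast_eq_zero_iff]
  push_cast
  have hstep : ∀ k ∈ Icc 1 (p - 1),
      ((((Nat.factorial (p-1)) / k : ℕ) : ZMod p))^2 = (((k : ZMod p))⁻¹)^2 := by
    intro k hk
    obtain ⟨hk1, hk2⟩ := Finset.mem_Icc.1 hk
    have hkp : k < p := by omega
    have hdvd : k ∣ (Nat.factorial (p-1)) := Nat.dvd_factorial hk1 hk2
    have hkne : ((k : ZMod p)) ≠ 0 := by
      rw [Ne, ZMod.natCast_eq_zero_iff]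
      intro h
      exact absurd (Nat.le_of_dvd (by omega) h) (by omega)
    have hmul : (((Nat.factorial (p-1)) / k : ℕ) : ZMod p) * (k : ZMod p) = -1 := by
      rw [← Nat.cast_mul, Nat.div_mul_cancel hdvd, ZMod.wilsons_lemma]
    have : (((Nat.factorial (p-1)) / k : ℕ) : ZMod p) = -(k : ZMod p)⁻¹ := by
      calc (((Nat.factorial (p-1)) / k : ℕ) : ZMod p)
          = (((Nat.factorial (p-1)) / k : ℕ) : ZMod p) * ((k : ZMod p) * (k : ZMod p)⁻¹) := by
            rw [mul_inv_cancel₀ hkne, mul_one]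
        _ = -(k : ZMod p)⁻¹ := by rw [← mul_assoc, hmul]; ring
    rw [this]
    ring
  rw [Finset.sum_congr rfl hstep]
  have h1 : ∑ k ∈ Icc 1 (p-1), (((k : ZMod p))⁻¹)^2
      = ∑ z ∈ Finset.univ.erase (0 : ZMod p), (z⁻¹)^2 := by
    refine Finset.sum_nbij' (fun k => (k : ZMod p)) (fun z => z.val) ?_ ?_ ?_ ?_ ?_
    · intro a ha
      obtain ⟨ha1, ha2⟩ := Finset.mem_Icc.1 ha
      refine Finset.mem_erase.2 ⟨?_, Finset.mem_univ _⟩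
      rw [Ne, ZMod.natCast_eq_zero_iff]
      intro h
      exact absurd (Nat.le_of_dvd (by omega) h) (by omega)
    · intro z hz
      have hz0 := (Finset.mem_erase.1 hz).1
      have h1 : z.val ≠ 0 := (ZMod.val_eq_zero z).not.2 hz0
      have h2 := ZMod.val_lt z
      show z.val ∈ Icc 1 (p - 1)
      rw [Finset.mem_Icc]
      omega
    · intro a ha
      obtain ⟨ha1, ha2⟩ := Finset.mem_Icc.1 ha
      show ((a : ZMod p)).val = a
      exact ZMod.val_cast_of_lt (by omega)
    · intro z hz
      show ((z.val : ℕ) : ZMod p) = z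
      exact ZMod.natCast_rightInverse z
    · intro a ha; rfl
  rw [h1]
  have h2 : ∑ z ∈ Finset.univ.erase (0 : ZMod p), (z⁻¹)^2
      = ∑ z ∈ Finset.univ.erase (0 : ZMod p), z^2 := by
    refine Finset.sum_nbij' (fun z => z⁻¹) (fun z => z⁻¹) ?_ ?_ ?_ ?_ ?_
    · intro a ha
      refine Finset.mem_erase.2 ⟨inv_ne_zero (Finset.mem_erase.1 ha).1, Finset.mem_univ _⟩
    · intro a ha
      refine Finset.mem_erase.2 ⟨inv_ne_zero (Finset.mem_erase.1 ha).1, Finset.mem_univ _⟩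
    · intro a _; exact inv_inv a
    · intro a _; exact inv_inv a
    · intro a _; rfl
  rw [h2]
  have h3 : ∑ z ∈ Finset.univ.erase (0 : ZMod p), z^2 = ∑ z : ZMod p, z^2 := by
    rw [← Finset.sum_erase_add _ _ (Finset.mem_univ (0 : ZMod p))]
    norm_num
  rw [h3]
  refine FiniteField.sum_pow_lt_card_sub_one (ZMod p) 2 ?_
  rw [ZMod.card p]
  omega
end

lemma H2_eq {p : ℕ} (hp1 : 1 ≤ p) :
    ∑ k ∈ Icc 1 (p-1), (((k:ℚ))^2)⁻¹
      = ((∑ k ∈ Icc 1 (p-1), ((Nat.factorial (p-1)) / k)^2 : ℕ) : ℚ)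
          / ((Nat.factorial (p-1) : ℚ))^2 := by
  push_cast
  rw [Finset.sum_div]
  refine Finset.sum_congr rfl fun k hk => ?_
  obtain ⟨hk1, hk2⟩ := Finset.mem_Icc.1 hk
  have hdvd : k ∣ Nat.factorial (p-1) := Nat.dvd_factorial hk1 hk2
  have hb : (((Nat.factorial (p-1) / k : ℕ)) : ℚ) * (k : ℚ) = (Nat.factorial (p-1) : ℚ) := by
    exact_mod_cast congrArg (Nat.cast : ℕ → ℚ) (Nat.div_mul_cancel hdvd)
  have hkne : (k:ℚ) ≠ 0 := Nat.cast_ne_zero.2 (by omega)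
  have hfne : (Nat.factorial (p-1) : ℚ) ≠ 0 := Nat.cast_ne_zero.2 (Nat.factorial_pos _).ne'
  have hbne : (((Nat.factorial (p-1) / k : ℕ)) : ℚ) ≠ 0 := by
    intro h; rw [h, zero_mul] at hb; exact hfne hb.symm
  rw [← hb]
  push_cast
  field_simp

lemma term_eq (x : ℚ) (hx0 : 0 < x) (hx1 : x < 1) (k : ℕ) :
    (ascPochhammer ℚ k).eval x * (ascPochhammer ℚ k).eval (1 - x)
        / ((ascPochhammer ℚ k).eval 1)^2 = cc x k := by
  rw [ascPochhammer_eval_prod, ascPochhammer_eval_prod, ascPochhammer_eval_prod, cc]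
  rw [Finset.prod_div_distrib, Finset.prod_mul_distrib, Finset.prod_pow]
  have : ∏ i ∈ range k, ((1:ℚ) + (i:ℚ)) = ∏ i ∈ range k, ((i:ℚ) + 1) :=
    Finset.prod_congr rfl fun i _ => add_comm _ _
  rw [this]

theorem stmt_13 (p : ℕ) (hp : p.Prime) (hp3 : 3 < p) (r m : ℕ)
    (hr : 0 < r) (hrm : r < m) (hm : Nat.Coprime m p) :
    pcong p 1
      (∑ k ∈ Finset.Icc 1 (p - 1),
        (ascPochhammer ℚ k).eval ((r : ℚ) / m) *
            (ascPochhammer ℚ k).eval (1 - (r : ℚ) / m) /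
          ((ascPochhammer ℚ k).eval 1) ^ 2 * (1 / (k : ℚ)) *
          ∑ j ∈ Finset.range k, (1 / ((r : ℚ) / m + j) + 1 / (1 - (r : ℚ) / m + j)))
      (∑ k ∈ Finset.Icc 1 (p - 1),
        (ascPochhammer ℚ k).eval ((r : ℚ) / m) *
            (ascPochhammer ℚ k).eval (1 - (r : ℚ) / m) /
          ((ascPochhammer ℚ k).eval 1) ^ 2 *
          (2 * (∑ j ∈ Finset.Icc 1 k, (1 : ℚ) / j) / k)) := by
  set x : ℚ := (r : ℚ) / m with hxdef
  have hm0 : 0 < m := lt_trans hr hrm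
  have hx0 : 0 < x := div_pos (by exact_mod_cast hr) (by exact_mod_cast hm0)
  have hx1 : x < 1 := by
    rw [hxdef, div_lt_one (by exact_mod_cast hm0)]
    exact_mod_cast hrm
  have hpm : ¬ p ∣ m := by
    intro h
    have : p ∣ Nat.gcd m p := Nat.dvd_gcd h dvd_rfl
    rw [hm] at this
    exact hp.one_lt.ne' (Nat.dvd_one.1 this)
  -- γ and the final witness
  set A : ℕ := ∑ k ∈ Icc 1 (p-1), ((Nat.factorial (p-1)) / k)^2 with hAdef
  have hdvdA : p ∣ A := hpA hp hp3
  set A' : ℕ := A / p with hA'def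
  have hA : (A : ℚ) = (p : ℚ) * (A' : ℚ) := by
    have h1 : A = p * A' := (Nat.mul_div_cancel' hdvdA).symm
    exact_mod_cast congrArg (Nat.cast : ℕ → ℚ) h1
  set γ : ℕ → ℚ := fun k => ∑ i ∈ Icc 1 k, ((i:ℚ) * ((p:ℚ) - (i:ℚ)))⁻¹ with hγdef
  set h2q : ℚ := (A' : ℚ) / ((Nat.factorial (p-1) : ℚ))^2 with h2qdef
  have hpintx : Pint p x := by
    rw [hxdef, div_eq_mul_inv]
    exact pint_mul hp (pint_natCast hp r) (pint_inv_natCast hp hpm)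
  refine ⟨h2q - ∑ k ∈ Icc 1 (p-1), γ k * (cc x k / k), ?_, ?_⟩
  · -- p-integrality
    refine pint_sub hp ?_ ?_
    · rw [h2qdef, div_eq_mul_inv]
      refine pint_mul hp (pint_natCast hp A') ?_
      have hc : ((Nat.factorial (p-1) : ℚ))^2 = (((Nat.factorial (p-1))^2 : ℕ) : ℚ) := by
        push_cast; ring
      rw [hc]
      refine pint_inv_natCast hp ?_
      intro h
      have h2 := hp.dvd_of_dvd_pow h
      have h3 := (Nat.Prime.dvd_factorial hp).1 h2
      omega
    · refine pint_sum hp _ _ fun k hk => ?_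
      obtain ⟨hk1, hk2⟩ := Finset.mem_Icc.1 hk
      have hkp : k < p := by omega
      refine pint_mul hp ?_ ?_
      · rw [hγdef]
        refine pint_sum hp _ _ fun i hi => ?_
        obtain ⟨hi1, hi2⟩ := Finset.mem_Icc.1 hi
        have hip : i < p := by omega
        have hipn : i ≤ p := le_of_lt hip
        have hcast : ((i:ℚ) * ((p:ℚ) - (i:ℚ))) = (((i * (p - i)) : ℕ) : ℚ) := by
          push_cast [Nat.cast_sub hipn]; ring
        rw [hcast]
        refine pint_inv_natCast hp ?_
        intro hdd
        rcases (Nat.Prime.dvd_mul hp).1 hdd with h | h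
        · exact absurd (Nat.le_of_dvd (by omega) h) (by omega)
        · exact absurd (Nat.le_of_dvd (by omega) h) (by omega)
      · rw [div_eq_mul_inv]
        refine pint_mul hp ?_ ?_
        · rw [cc]
          refine pint_prod hp _ _ fun i hi => ?_
          have hik : i < k := Finset.mem_range.1 hi
          rw [div_eq_mul_inv]
          refine pint_mul hp (pint_mul hp ?_ ?_) ?_
          · exact pint_add hp hpintx (pint_natCast hp i)
          · exact pint_add hp (pint_sub hp (pint_one hp) hpintx) (pint_natCast hp i)
          · have hc : ((i:ℚ)+1)^2 = ((((i+1))^2 : ℕ) : ℚ) := by push_cast; ring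
            rw [hc]
            refine pint_inv_natCast hp ?_
            intro h
            have h2 := hp.dvd_of_dvd_pow h
            have h3 := Nat.le_of_dvd (by omega) h2
            omega
        · refine pint_inv_natCast hp ?_
          intro h
          exact absurd (Nat.le_of_dvd (by omega) h) (by omega)
  · -- the congruence identity
    show (∑ k ∈ Finset.Icc 1 (p - 1),
        (ascPochhammer ℚ k).eval x * (ascPochhammer ℚ k).eval (1 - x) /
          ((ascPochhammer ℚ k).eval 1) ^ 2 * (1 / (k : ℚ)) * SS x k)
      - (∑ k ∈ Finset.Icc 1 (p - 1),
        (ascPochhammer ℚ k).eval x * (ascPochhammer ℚ k).eval (1 - x) /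
          ((ascPochhammer ℚ k).eval 1) ^ 2 * (2 * HH k / k))
      = (p:ℚ)^1 * (h2q - ∑ k ∈ Icc 1 (p-1), γ k * (cc x k / k))
    have hL : (∑ k ∈ Finset.Icc 1 (p - 1),
        (ascPochhammer ℚ k).eval x * (ascPochhammer ℚ k).eval (1 - x) /
          ((ascPochhammer ℚ k).eval 1) ^ 2 * (1 / (k : ℚ)) * SS x k)
        = ∑ k ∈ Icc 1 (p-1), cc x k * SS x k / k := by
      refine Finset.sum_congr rfl fun k hk => ?_
      rw [term_eq x hx0 hx1 k]; ring
    have hR : (∑ k ∈ Finset.Icc 1 (p - 1),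
        (ascPochhammer ℚ k).eval x * (ascPochhammer ℚ k).eval (1 - x) /
          ((ascPochhammer ℚ k).eval 1) ^ 2 * (2 * HH k / k))
        = ∑ k ∈ Icc 1 (p-1), cc x k * (2 * HH k) / k := by
      refine Finset.sum_congr rfl fun k hk => ?_
      rw [term_eq x hx0 hx1 k]; ring
    rw [hL, hR, pow_one]
    have hM := master hx0 hx1 (p-1)
    rw [Finset.sum_sub_distrib] at hM
    rw [hM]
    have hH2 : ∑ k ∈ Icc 1 (p-1), (((k:ℚ))^2)⁻¹ = (p:ℚ) * h2q := by
      rw [H2_eq (by omega : 1 ≤ p), ← hAdef, hA, h2qdef]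
      ring
    have hSig3 : ∑ k ∈ Icc 1 (p-1), (HH k + HH (p-1) - HH (p-1-k)) * cc x k / k
        = (p:ℚ) * ∑ k ∈ Icc 1 (p-1), γ k * (cc x k / k) := by
      rw [Finset.mul_sum]
      refine Finset.sum_congr rfl fun k hk => ?_
      obtain ⟨hk1, hk2⟩ := Finset.mem_Icc.1 hk
      rw [coeff_eq (by omega : 1 ≤ p) k hk1 hk2, hγdef]
      ring
    rw [hH2, hSig3]
    ring
end
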